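/- arXiv:2003.14000 — 5 statements merged into one kernel-verified Lean document; each statement's English description precedes it below -/
import Mathlib

section
/- Let H > 0, let I = (a,b) be a bounded open interval, and let v : [a,b] → ℝ be continuous with v(x) > -H for all x ∈ I. Then every function θ that is continuously differentiable on the closure of O_I(v) satisfies ∫_I |θ(x, v(x))|² (H + v(x)) dx ≤ ‖θ‖²_{L²(O_I(v))} + 2 M_v ‖θ‖_{L²(O_I(v))} ‖∂_z θ‖_{L²(O_I(v))}. -/
open MeasureTheory Set Topology Filter

/-- The region between the bottom plate at height `-H` and the graph of `v` over
the interval `I = (a,b)`. -/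
def OIv (H a b : ℝ) (v : ℝ → ℝ) : Set (ℝ × ℝ) :=
  {p : ℝ × ℝ | p.1 ∈ Set.Ioo a b ∧ -H < p.2 ∧ p.2 < v p.1}

/-- Trace estimate on the graph of `v` for functions that are `C¹` on the closure of
`O_I(v)`:
`∫_I |θ(x,v(x))|² (H+v(x)) dx ≤ ‖θ‖² + 2 M_v ‖θ‖ ‖∂_z θ‖`, with `M_v = sup_I (H+v)`. -/
theorem stmt_1 (H a b : ℝ) (hH : 0 < H) (hab : a < b) (v : ℝ → ℝ)
    (hv : ContinuousOn v (Icc a b)) (hvH : ∀ x ∈ Ioo a b, -H < v x)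
    (θ : ℝ × ℝ → ℝ)
    (hθ : ContDiffOn ℝ 1 θ (closure (OIv H a b v))) :
    ∫ x in Ioo a b, (θ (x, v x)) ^ 2 * (H + v x) ≤
      (∫ p in OIv H a b v, (θ p) ^ 2)
        + 2 * sSup ((fun x => H + v x) '' Ioo a b)
          * Real.sqrt (∫ p in OIv H a b v, (θ p) ^ 2)
          * Real.sqrt (∫ p in OIv H a b v, (deriv (fun z => θ (p.1, z)) p.2) ^ 2) := by
  classical
  set S : Set (ℝ × ℝ) := OIv H a b v with hSdef
  -- `S` is open
  have hSopen : IsOpen S := by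
    rw [isOpen_iff_mem_nhds]
    rintro ⟨x, z⟩ ⟨hx, hz1, hz2⟩
    have hvx : ContinuousAt v x := hv.continuousAt (Icc_mem_nhds hx.1 hx.2)
    have h1 : ∀ᶠ y in 𝓝 x, (z + v x) / 2 < v y :=
      hvx.eventually (eventually_gt_nhds (by simp at hz2 ⊢; linarith))
    have hU : {y | y ∈ Ioo a b ∧ (z + v x) / 2 < v y} ∈ 𝓝 x :=
      Filter.inter_mem (isOpen_Ioo.mem_nhds hx) h1
    have hT : Ioo (-H) ((z + v x) / 2) ∈ 𝓝 z :=
      isOpen_Ioo.mem_nhds ⟨hz1, by simp at hz2 ⊢; linarith⟩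
    refine Filter.mem_of_superset (prod_mem_nhds hU hT) ?_
    rintro ⟨y, w⟩ ⟨⟨hy, hvy⟩, hw1, hw2⟩
    exact ⟨hy, hw1, hw2.trans hvy⟩
  have hSm : MeasurableSet S := hSopen.measurableSet
  -- `S` is bounded, with compact closure
  obtain ⟨m, hm⟩ : ∃ m, ∀ x ∈ Icc a b, v x ≤ m := by
    obtain ⟨m, hm⟩ := isCompact_Icc.exists_bound_of_continuousOn hv
    exact ⟨m, fun x hx => (le_abs_self _).trans (hm x hx)⟩
  have hSQ : S ⊆ Icc a b ×ˢ Icc (-H) m := by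
    rintro ⟨x, z⟩ ⟨hx, h1, h2⟩
    exact ⟨Ioo_subset_Icc_self hx, h1.le, (h2.trans_le (hm x (Ioo_subset_Icc_self hx))).le⟩
  have hQc : IsCompact (Icc a b ×ˢ Icc (-H) m) := isCompact_Icc.prod isCompact_Icc
  have hclc : IsCompact (closure S) :=
    hQc.of_isClosed_subset isClosed_closure (closure_minimal hSQ hQc.isClosed)
  have hμS : volume S ≠ ⊤ := ((measure_mono hSQ).trans_lt hQc.measure_lt_top).ne
  have hθc : ContinuousOn θ (closure S) := hθ.continuousOn
  obtain ⟨Cθ, hCθ⟩ : ∃ C, ∀ p ∈ closure S, ‖θ p‖ ≤ C :=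
    hclc.exists_bound_of_continuousOn hθc
  -- differentiability at points of `S`
  have hnhds : ∀ p ∈ S, closure S ∈ 𝓝 p := fun p hp =>
    mem_nhds_iff.2 ⟨S, subset_closure, hSopen, hp⟩
  have hdiff : ∀ p ∈ S, HasFDerivAt θ (fderiv ℝ θ p) p := fun p hp =>
    ((hθ.contDiffAt (hnhds p hp)).differentiableAt one_ne_zero).hasFDerivAt
  -- global bound on the derivative over `S`
  obtain ⟨K, hK0, hK⟩ : ∃ K, 0 ≤ K ∧ ∀ p ∈ S, ‖fderiv ℝ θ p‖ ≤ K := by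
    have loc : ∀ p ∈ closure S, ∃ U : Set (ℝ × ℝ), IsOpen U ∧ p ∈ U ∧
        ∃ C, ∀ q ∈ U ∩ S, ‖fderiv ℝ θ q‖ ≤ C := by
      intro p hp
      have h1 : ContDiffWithinAt ℝ 1 θ (closure S) p := hθ p hp
      have h1' : ContDiffWithinAt ℝ (1 : ℕ) θ (closure S) p := by exact_mod_cast h1
      obtain ⟨u, hu, pt, hpt⟩ := contDiffWithinAt_nat.1 h1'
      rw [insert_eq_of_mem hp] at hu
      obtain ⟨u', hu'o, hpu', hu'sub⟩ := mem_nhdsWithin.1 hu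
      have hpu : p ∈ u := hu'sub ⟨hpu', hp⟩
      have hcont : ContinuousWithinAt (fun q => ‖pt q 1‖) u p :=
        ((hpt.cont 1 (by exact_mod_cast le_rfl)) p hpu).norm
      have hev : ∀ᶠ q in 𝓝[u] p, ‖pt q 1‖ < ‖pt p 1‖ + 1 :=
        hcont.eventually (eventually_lt_nhds (lt_add_one _))
      obtain ⟨u'', hu''o, hpu'', hsub2⟩ := mem_nhdsWithin.1 hev
      refine ⟨u' ∩ u'', hu'o.inter hu''o, ⟨hpu', hpu''⟩, ‖pt p 1‖ + 1, ?_⟩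
      rintro q ⟨⟨hq1, hq2⟩, hqS⟩
      have hqu : q ∈ u := hu'sub ⟨hq1, subset_closure hqS⟩
      have hfd : HasFDerivWithinAt θ
          (continuousMultilinearCurryFin1 ℝ (ℝ × ℝ) ℝ (pt q 1)) u q :=
        hpt.hasFDerivWithinAt one_ne_zero hqu
      have hunhds : u ∈ 𝓝 q := mem_nhds_iff.2
        ⟨u' ∩ S, fun r hr => hu'sub ⟨hr.1, subset_closure hr.2⟩,
          hu'o.inter hSopen, ⟨hq1, hqS⟩⟩
      have heq := (hfd.hasFDerivAt hunhds).fderiv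
      rw [heq]
      calc ‖continuousMultilinearCurryFin1 ℝ (ℝ × ℝ) ℝ (pt q 1)‖ = ‖pt q 1‖ :=
            LinearIsometryEquiv.norm_map _ _
        _ ≤ ‖pt p 1‖ + 1 := (hsub2 ⟨hq2, hqu⟩).le
    choose! U hUo hUm C hC using loc
    obtain ⟨t, htmem, htcov⟩ := hclc.elim_nhds_subcover U
      (fun p hp => (hUo p hp).mem_nhds (hUm p hp))
    refine ⟨∑ q ∈ t, |C q|, Finset.sum_nonneg fun q _ => abs_nonneg _, ?_⟩
    intro p hp
    have := htcov (subset_closure hp)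
    simp only [mem_iUnion, exists_prop] at this
    obtain ⟨q, hqt, hpq⟩ := this
    exact (hC q (htmem q hqt) p ⟨hpq, hp⟩).trans ((le_abs_self _).trans
      (Finset.single_le_sum (f := fun q => |C q|) (fun r _ => abs_nonneg _) hqt))
  -- vertical derivative
  set ψ : ℝ × ℝ → ℝ := fun p => fderiv ℝ θ p (0, 1) with hψdef
  have hψm : Measurable ψ := measurable_fderiv_apply_const ℝ θ ((0 : ℝ), (1 : ℝ))
  set Kψ : ℝ := K * ‖((0 : ℝ), (1 : ℝ))‖ with hKψ
  have hψb : ∀ p ∈ S, |ψ p| ≤ Kψ := by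
    intro p hp
    calc |ψ p| = ‖fderiv ℝ θ p (0, 1)‖ := rfl
      _ ≤ ‖fderiv ℝ θ p‖ * ‖((0 : ℝ), (1 : ℝ))‖ := ContinuousLinearMap.le_opNorm _ _
      _ ≤ Kψ := mul_le_mul_of_nonneg_right (hK p hp) (norm_nonneg _)
  have hderivS : ∀ p ∈ S, HasDerivAt (fun z => θ (p.1, z)) (ψ p) p.2 := by
    rintro ⟨x, z⟩ hp
    have h1 : HasDerivAt (fun w : ℝ => ((x, w) : ℝ × ℝ)) ((0 : ℝ), (1 : ℝ)) z :=
      (hasDerivAt_const z x).prodMk (hasDerivAt_id z)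
    exact (hdiff _ hp).comp_hasDerivAt z h1
  have hderiv_eq : ∀ p ∈ S, deriv (fun z => θ (p.1, z)) p.2 = ψ p := fun p hp =>
    (hderivS p hp).deriv
  -- the closed vertical slices lie in the closure of `S`
  have hslice : ∀ x ∈ Ioo a b, ∀ w ∈ Icc (-H) (v x), ((x : ℝ), w) ∈ closure S := by
    intro x hx w hw
    have h1 : ({x} ×ˢ Ioo (-H) (v x) : Set (ℝ × ℝ)) ⊆ S := by
      rintro ⟨y, w'⟩ ⟨hy, hw'⟩
      rcases mem_singleton_iff.1 hy with rfl
      exact ⟨hx, hw'.1, hw'.2⟩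
    have h2 := closure_mono h1
    rw [closure_prod_eq, closure_singleton, closure_Ioo (ne_of_lt (hvH x hx))] at h2
    exact h2 ⟨rfl, hw⟩
  have hθx : ∀ x ∈ Ioo a b, ContinuousOn (fun w => θ (x, w)) (Icc (-H) (v x)) := by
    intro x hx
    exact hθc.comp ((continuous_const.prodMk continuous_id).continuousOn)
      (fun w hw => hslice x hx w hw)
  -- integrability over `S`
  have hθSm : AEStronglyMeasurable θ (volume.restrict S) :=
    (hθc.mono subset_closure).aestronglyMeasurable hSm
  have hθ2int : IntegrableOn (fun p => θ p ^ 2) S volume := by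
    refine ⟨((hθc.mono subset_closure).pow 2).aestronglyMeasurable hSm,
      HasFiniteIntegral.restrict_of_bounded (C := Cθ ^ 2) hμS.lt_top ?_⟩
    refine (ae_restrict_iff' hSm).2 (ae_of_all _ fun p hp => ?_)
    have h1 : ‖θ p‖ ≤ Cθ := hCθ p (subset_closure hp)
    calc ‖θ p ^ 2‖ = ‖θ p‖ ^ 2 := by rw [norm_pow]
      _ ≤ Cθ ^ 2 := pow_le_pow_left₀ (norm_nonneg _) h1 2
  have hψ2int : IntegrableOn (fun p => ψ p ^ 2) S volume := by
    refine ⟨(hψm.pow_const 2).aestronglyMeasurable.restrict,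
      HasFiniteIntegral.restrict_of_bounded (C := Kψ ^ 2) hμS.lt_top ?_⟩
    refine (ae_restrict_iff' hSm).2 (ae_of_all _ fun p hp => ?_)
    calc ‖ψ p ^ 2‖ = |ψ p| ^ 2 := by rw [norm_pow]; rfl
      _ ≤ Kψ ^ 2 := pow_le_pow_left₀ (abs_nonneg _) (hψb p hp) 2
  have hGint : IntegrableOn (fun p => 2 * (|θ p| * |ψ p|)) S volume := by
    refine ⟨?_, HasFiniteIntegral.restrict_of_bounded (C := 2 * (Cθ * Kψ)) hμS.lt_top ?_⟩
    · exact ((hθSm.norm.mul (hψm.aestronglyMeasurable.restrict).norm).const_mul 2)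
    · refine (ae_restrict_iff' hSm).2 (ae_of_all _ fun p hp => ?_)
      have h1 : |θ p| ≤ Cθ := hCθ p (subset_closure hp)
      have h2 : |ψ p| ≤ Kψ := hψb p hp
      have h3 : (0:ℝ) ≤ Cθ := (abs_nonneg _).trans h1
      have h4 : (0:ℝ) ≤ Kψ := (abs_nonneg _).trans h2
      calc ‖2 * (|θ p| * |ψ p|)‖ = 2 * (|θ p| * |ψ p|) := by
            rw [Real.norm_of_nonneg (by positivity)]
        _ ≤ 2 * (Cθ * Kψ) := by
            have := mul_le_mul h1 h2 (abs_nonneg _) h3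
            linarith
  -- Fubini
  have fub : ∀ f : ℝ × ℝ → ℝ, IntegrableOn f S volume →
      IntegrableOn (fun x => ∫ z in Ioo (-H) (v x), f (x, z)) (Ioo a b) volume ∧
      ∫ p in S, f p = ∫ x in Ioo a b, ∫ z in Ioo (-H) (v x), f (x, z) := by
    intro f hf
    have hind : Integrable (S.indicator f) volume := (integrable_indicator_iff hSm).2 hf
    have hind' : Integrable (S.indicator f) ((volume : Measure ℝ).prod volume) := by
      rwa [← Measure.volume_eq_prod]
    have hinner : ∀ x : ℝ, ∫ z, S.indicator f (x, z) =
        (Ioo a b).indicator (fun x => ∫ z in Ioo (-H) (v x), f (x, z)) x := by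
      intro x
      by_cases hx : x ∈ Ioo a b
      · rw [indicator_of_mem hx, ← integral_indicator measurableSet_Ioo]
        congr 1
        funext z
        by_cases hz : z ∈ Ioo (-H) (v x)
        · rw [indicator_of_mem hz, indicator_of_mem (show (x, z) ∈ S from ⟨hx, hz.1, hz.2⟩)]
        · rw [indicator_of_notMem hz,
            indicator_of_notMem (fun hc => hz ⟨hc.2.1, hc.2.2⟩)]
      · rw [indicator_of_notMem hx]
        have h0 : ∀ z : ℝ, S.indicator f (x, z) = 0 := fun z =>
          indicator_of_notMem (fun hc => hx hc.1) _
        simp [h0]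
    constructor
    · have h1 : Integrable (fun x => ∫ z, S.indicator f (x, z)) volume :=
        hind'.integral_prod_left
      rw [show (fun x => ∫ z, S.indicator f (x, z)) =
        (Ioo a b).indicator (fun x => ∫ z in Ioo (-H) (v x), f (x, z)) from funext hinner] at h1
      exact (integrable_indicator_iff measurableSet_Ioo).1 h1
    · rw [← integral_indicator hSm]
      calc ∫ p, S.indicator f p = ∫ p, S.indicator f p ∂((volume : Measure ℝ).prod volume) := by
            rw [← Measure.volume_eq_prod]
        _ = ∫ x, ∫ z, S.indicator f (x, z) := integral_prod _ hind'
        _ = ∫ x, (Ioo a b).indicator (fun x => ∫ z in Ioo (-H) (v x), f (x, z)) x :=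
            integral_congr_ae (ae_of_all _ hinner)
        _ = ∫ x in Ioo a b, ∫ z in Ioo (-H) (v x), f (x, z) :=
            integral_indicator measurableSet_Ioo
  obtain ⟨hAint, hAeq⟩ := fub (fun p => θ p ^ 2) hθ2int
  obtain ⟨hBint, hBeq⟩ := fub (fun p => 2 * (|θ p| * |ψ p|)) hGint
  -- the core pointwise (in `x`) estimate
  have core : ∀ x ∈ Ioo a b, θ (x, v x) ^ 2 * (H + v x) ≤
      (∫ z in Ioo (-H) (v x), θ (x, z) ^ 2) +
      (H + v x) * ∫ z in Ioo (-H) (v x), 2 * (|θ (x, z)| * |ψ (x, z)|) := by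
    intro x hx
    have hvx : -H < v x := hvH x hx
    set Bx : ℝ := ∫ z in Ioo (-H) (v x), 2 * (|θ (x, z)| * |ψ (x, z)|) with hBx
    have hcontx : ContinuousOn (fun w => θ (x, w)) (Icc (-H) (v x)) := hθx x hx
    have hintθ2 : IntegrableOn (fun z => θ (x, z) ^ 2) (Ioo (-H) (v x)) volume :=
      ((hcontx.pow 2).integrableOn_compact isCompact_Icc).mono_set Ioo_subset_Icc_self
    have hψxm : Measurable (fun w => ψ (x, w)) :=
      hψm.comp (measurable_const.prodMk measurable_id)
    have hθxm : AEStronglyMeasurable (fun w => θ (x, w)) (volume.restrict (Ioo (-H) (v x))) :=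
      (hcontx.mono Ioo_subset_Icc_self).aestronglyMeasurable measurableSet_Ioo
    have hbd : ∀ w ∈ Ioo (-H) (v x), |θ (x, w)| * |ψ (x, w)| ≤ Cθ * Kψ := by
      intro w hw
      have hwS : (x, w) ∈ S := ⟨hx, hw.1, hw.2⟩
      have h1 : |θ (x, w)| ≤ Cθ := hCθ _ (subset_closure hwS)
      have h2 : |ψ (x, w)| ≤ Kψ := hψb _ hwS
      exact mul_le_mul h1 h2 (abs_nonneg _) ((abs_nonneg _).trans h1)
    have hint2 : IntegrableOn (fun w => 2 * (θ (x, w) * ψ (x, w))) (Ioo (-H) (v x)) volume := by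
      refine ⟨(hθxm.mul hψxm.aestronglyMeasurable.restrict).const_mul 2,
        HasFiniteIntegral.restrict_of_bounded (C := 2 * (Cθ * Kψ)) measure_Ioo_lt_top ?_⟩
      refine (ae_restrict_iff' measurableSet_Ioo).2 (ae_of_all _ fun w hw => ?_)
      have hb := hbd w hw
      have : ‖2 * (θ (x, w) * ψ (x, w))‖ = 2 * (|θ (x, w)| * |ψ (x, w)|) := by
        rw [Real.norm_eq_abs, abs_mul, abs_mul, abs_two]
      rw [this]
      linarith
    have hintB : IntegrableOn (fun w => 2 * (|θ (x, w)| * |ψ (x, w)|)) (Ioo (-H) (v x)) volume := by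
      refine ⟨(hθxm.norm.mul hψxm.aestronglyMeasurable.restrict.norm).const_mul 2,
        HasFiniteIntegral.restrict_of_bounded (C := 2 * (Cθ * Kψ)) measure_Ioo_lt_top ?_⟩
      refine (ae_restrict_iff' measurableSet_Ioo).2 (ae_of_all _ fun w hw => ?_)
      have hb := hbd w hw
      have : ‖2 * (|θ (x, w)| * |ψ (x, w)|)‖ = 2 * (|θ (x, w)| * |ψ (x, w)|) := by
        rw [Real.norm_of_nonneg (by positivity)]
      rw [this]
      linarith
    have claim1 : ∀ z ∈ Ioo (-H) (v x), θ (x, v x) ^ 2 ≤ θ (x, z) ^ 2 + Bx := by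
      intro z hz
      have hftc : ∫ w in z..(v x), 2 * (θ (x, w) * ψ (x, w)) =
          θ (x, v x) ^ 2 - θ (x, z) ^ 2 := by
        have hcont2 : ContinuousOn (fun w => θ (x, w) ^ 2) (Icc z (v x)) :=
          (hcontx.mono (Icc_subset_Icc hz.1.le le_rfl)).pow 2
        have hder : ∀ w ∈ Ioo z (v x),
            HasDerivWithinAt (fun w => θ (x, w) ^ 2) (2 * (θ (x, w) * ψ (x, w))) (Ioi w) w := by
          intro w hw
          have hwS : (x, w) ∈ S := ⟨hx, hz.1.trans hw.1, hw.2⟩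
          have h1 : HasDerivAt (fun w => θ (x, w)) (ψ (x, w)) w := hderivS (x, w) hwS
          have h2 := (h1.pow 2).hasDerivWithinAt (s := Ioi w)
          convert h2 using 1
          case e'_9 =>
            rw [show (2:ℕ) - 1 = 1 from rfl, pow_one]
            push_cast
            ring
          all_goals rfl
        have hii : IntervalIntegrable (fun w => 2 * (θ (x, w) * ψ (x, w))) volume z (v x) := by
          rw [intervalIntegrable_iff_integrableOn_Ioo_of_le hz.2.le]
          exact hint2.mono_set (Ioo_subset_Ioo hz.1.le le_rfl)
        exact intervalIntegral.integral_eq_sub_of_hasDeriv_right_of_le hz.2.le hcont2 hder hii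
      have hii : IntervalIntegrable (fun w => 2 * (θ (x, w) * ψ (x, w))) volume z (v x) := by
        rw [intervalIntegrable_iff_integrableOn_Ioo_of_le hz.2.le]
        exact hint2.mono_set (Ioo_subset_Ioo hz.1.le le_rfl)
      have hiiB : IntervalIntegrable (fun w => 2 * (|θ (x, w)| * |ψ (x, w)|)) volume z (v x) := by
        rw [intervalIntegrable_iff_integrableOn_Ioo_of_le hz.2.le]
        exact hintB.mono_set (Ioo_subset_Ioo hz.1.le le_rfl)
      have hmono : ∫ w in z..(v x), 2 * (θ (x, w) * ψ (x, w)) ≤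
          ∫ w in z..(v x), 2 * (|θ (x, w)| * |ψ (x, w)|) := by
        apply intervalIntegral.integral_mono_on hz.2.le hii hiiB
        intro w _
        have h4 : θ (x, w) * ψ (x, w) ≤ |θ (x, w)| * |ψ (x, w)| :=
          (le_abs_self _).trans (le_of_eq (abs_mul _ _))
        linarith
      have hext : ∫ w in z..(v x), 2 * (|θ (x, w)| * |ψ (x, w)|) ≤ Bx := by
        rw [intervalIntegral.integral_of_le hz.2.le]
        apply setIntegral_mono_set hintB
        · exact (ae_restrict_iff' measurableSet_Ioo).2 (ae_of_all _ fun w hw => by positivity)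
        · rw [ae_le_set]
          refine measure_mono_null ?_ (measure_singleton (v x))
          rintro w ⟨hw1, hw2⟩
          simp only [mem_Ioo, not_and, not_lt] at hw2
          exact mem_singleton_iff.2 (le_antisymm hw1.2 (hw2 (hz.1.trans hw1.1)))
      linarith [hftc ▸ (hmono.trans hext)]
    have hμIoo : (volume (Ioo (-H) (v x))).toReal = v x + H := by
      rw [Real.volume_Ioo, ENNReal.toReal_ofReal (by linarith)]
      ring
    have hconstint : IntegrableOn (fun _ : ℝ => Bx) (Ioo (-H) (v x)) volume :=
      integrableOn_const measure_Ioo_lt_top.ne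
    calc θ (x, v x) ^ 2 * (H + v x)
        = ∫ _ in Ioo (-H) (v x), θ (x, v x) ^ 2 := by
          rw [setIntegral_const, measureReal_def, hμIoo, smul_eq_mul]
          ring
      _ ≤ ∫ z in Ioo (-H) (v x), (θ (x, z) ^ 2 + Bx) := by
          refine setIntegral_mono_on ?_ ?_ measurableSet_Ioo claim1
          · exact integrableOn_const measure_Ioo_lt_top.ne
          · exact hintθ2.add hconstint
      _ = (∫ z in Ioo (-H) (v x), θ (x, z) ^ 2) + (v x + H) * Bx := by
          rw [integral_add hintθ2 hconstint, setIntegral_const, measureReal_def, hμIoo, smul_eq_mul]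
      _ = (∫ z in Ioo (-H) (v x), θ (x, z) ^ 2) + (H + v x) * Bx := by ring
  -- the supremum bound
  have hMb : ∀ x ∈ Ioo a b, H + v x ≤ sSup ((fun x => H + v x) '' Ioo a b) := by
    intro x hx
    refine le_csSup ?_ (mem_image_of_mem _ hx)
    exact ((isCompact_Icc.image_of_continuousOn (continuousOn_const.add hv)).bddAbove).mono
      (image_mono Ioo_subset_Icc_self)
  set M : ℝ := sSup ((fun x => H + v x) '' Ioo a b) with hMdef
  have hM0 : 0 ≤ M := by
    obtain ⟨x, hx⟩ : (Ioo a b).Nonempty := nonempty_Ioo.2 hab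
    have h1 := hvH x hx
    have h2 := hMb x hx
    linarith
  have hBnn : ∀ x : ℝ, 0 ≤ ∫ z in Ioo (-H) (v x), 2 * (|θ (x, z)| * |ψ (x, z)|) :=
    fun x => setIntegral_nonneg measurableSet_Ioo fun z _ => by positivity
  have step1 : ∫ x in Ioo a b, θ (x, v x) ^ 2 * (H + v x) ≤
      ∫ x in Ioo a b, ((∫ z in Ioo (-H) (v x), θ (x, z) ^ 2) +
        M * ∫ z in Ioo (-H) (v x), 2 * (|θ (x, z)| * |ψ (x, z)|)) := by
    refine integral_mono_of_nonneg ?_ (hAint.add (hBint.const_mul M)) ?_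
    · refine (ae_restrict_iff' measurableSet_Ioo).2 (ae_of_all _ fun x hx => ?_)
      have h1 := hvH x hx
      have h2 : (0:ℝ) ≤ H + v x := by linarith
      positivity
    · refine (ae_restrict_iff' measurableSet_Ioo).2 (ae_of_all _ fun x hx => ?_)
      have h1 := core x hx
      have h2 := mul_le_mul_of_nonneg_right (hMb x hx) (hBnn x)
      simp only []
      linarith
  have step2 : ∫ x in Ioo a b, ((∫ z in Ioo (-H) (v x), θ (x, z) ^ 2) +
        M * ∫ z in Ioo (-H) (v x), 2 * (|θ (x, z)| * |ψ (x, z)|)) =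
      (∫ p in S, θ p ^ 2) + M * ∫ p in S, 2 * (|θ p| * |ψ p|) := by
    rw [integral_add hAint (hBint.const_mul M), integral_const_mul, hAeq, hBeq]
  -- Cauchy-Schwarz
  have hCS : ∫ p in S, |θ p| * |ψ p| ≤
      Real.sqrt (∫ p in S, θ p ^ 2) * Real.sqrt (∫ p in S, ψ p ^ 2) := by
    have h2 : (2 : ℝ).HolderConjugate 2 := Real.HolderConjugate.two_two
    have habs : ∀ y : ℝ, |y| ^ (2:ℝ) = y ^ 2 := fun y => by
      rw [show (2:ℝ) = ((2:ℕ):ℝ) by norm_num, Real.rpow_natCast, sq_abs]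
    have hfL : MemLp (fun p => |θ p|) (ENNReal.ofReal 2) (volume.restrict S) := by
      rw [show ENNReal.ofReal 2 = 2 by norm_num]
      refine (memLp_two_iff_integrable_sq hθSm.norm).2 ?_
      simpa [Real.norm_eq_abs, sq_abs, IntegrableOn] using hθ2int
    have hgL : MemLp (fun p => |ψ p|) (ENNReal.ofReal 2) (volume.restrict S) := by
      rw [show ENNReal.ofReal 2 = 2 by norm_num]
      refine (memLp_two_iff_integrable_sq (hψm.aestronglyMeasurable.restrict).norm).2 ?_
      simpa [Real.norm_eq_abs, sq_abs, IntegrableOn] using hψ2int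
    have hH2 := integral_mul_le_Lp_mul_Lq_of_nonneg h2
      (ae_of_all _ fun p => abs_nonneg (θ p)) (ae_of_all _ fun p => abs_nonneg (ψ p)) hfL hgL
    have e1 : ∫ p in S, |θ p| ^ (2:ℝ) = ∫ p in S, θ p ^ 2 :=
      integral_congr_ae (ae_of_all _ fun p => habs (θ p))
    have e2 : ∫ p in S, |ψ p| ^ (2:ℝ) = ∫ p in S, ψ p ^ 2 :=
      integral_congr_ae (ae_of_all _ fun p => habs (ψ p))
    rw [e1, e2] at hH2
    calc ∫ p in S, |θ p| * |ψ p|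
        ≤ (∫ p in S, θ p ^ 2) ^ (1/(2:ℝ)) * (∫ p in S, ψ p ^ 2) ^ (1/(2:ℝ)) := hH2
      _ = Real.sqrt (∫ p in S, θ p ^ 2) * Real.sqrt (∫ p in S, ψ p ^ 2) := by
          rw [Real.sqrt_eq_rpow, Real.sqrt_eq_rpow]
  have hDeq : ∫ p in S, (deriv (fun z => θ (p.1, z)) p.2) ^ 2 = ∫ p in S, ψ p ^ 2 :=
    setIntegral_congr_fun hSm fun p hp => by rw [hderiv_eq p hp]
  have hsplit : ∫ p in S, 2 * (|θ p| * |ψ p|) = 2 * ∫ p in S, |θ p| * |ψ p| :=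
    integral_const_mul 2 _
  refine step1.trans ?_
  rw [step2, hDeq, hsplit]
  have h4 : M * (2 * ∫ p in S, |θ p| * |ψ p|) ≤
      M * (2 * (Real.sqrt (∫ p in S, θ p ^ 2) * Real.sqrt (∫ p in S, ψ p ^ 2))) := by
    apply mul_le_mul_of_nonneg_left _ hM0
    linarith
  calc (∫ p in S, θ p ^ 2) + M * (2 * ∫ p in S, |θ p| * |ψ p|)
      ≤ (∫ p in S, θ p ^ 2) +
        M * (2 * (Real.sqrt (∫ p in S, θ p ^ 2) * Real.sqrt (∫ p in S, ψ p ^ 2))) := by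
        linarith
    _ = (∫ p in S, θ p ^ 2) + 2 * M * Real.sqrt (∫ p in S, θ p ^ 2) *
        Real.sqrt (∫ p in S, ψ p ^ 2) := by ring
end

section
/- Let H > 0, let I = (a,b) be a bounded open interval, and let v : [a,b] → ℝ be continuous with v(x) > -H for all x ∈ I. Then every function θ that is continuously differentiable on the closure of O_I(v) satisfies ∫_I |θ(x, -H)|² (H + v(x)) dx ≤ ‖θ‖²_{L²(O_I(v))} + 2 M_v ‖θ‖_{L²(O_I(v))} ‖∂_z θ‖_{L²(O_I(v))}. -/
open MeasureTheory Set Topology Filter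

section aux

variable {H a b : ℝ} {v : ℝ → ℝ} {θ : ℝ × ℝ → ℝ}

lemma OIv_open (hv : ContinuousOn v (Icc a b)) : IsOpen (OIv H a b v) := by
  have h1 : IsOpen ((Ioo a b) ×ˢ (Ioi (-H)) : Set (ℝ × ℝ)) := (isOpen_Ioo).prod isOpen_Ioi
  have h2 : ContinuousOn (fun p : ℝ × ℝ => v p.1 - p.2) ((Ioo a b) ×ˢ (Ioi (-H))) := by
    apply ContinuousOn.sub
    · exact (hv.mono Ioo_subset_Icc_self).comp continuous_fst.continuousOn (fun p hp => hp.1)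
    · exact continuous_snd.continuousOn
  have := h2.isOpen_inter_preimage h1 (isOpen_Ioi (a := (0:ℝ)))
  convert this using 1
  ext p
  simp only [OIv, mem_setOf_eq, mem_inter_iff, mem_prod, mem_Ioo, mem_Ioi, mem_preimage, sub_pos]
  tauto

lemma OIv_bounded (hv : ContinuousOn v (Icc a b)) : Bornology.IsBounded (OIv H a b v) := by
  obtain ⟨C, hC⟩ := (isCompact_Icc.bddAbove_image hv)
  refine (Bornology.IsBounded.prod (Metric.isBounded_Icc a b)
    (Metric.isBounded_Icc (-H) C)).subset ?_
  rintro ⟨x, z⟩ ⟨hx, hz1, hz2⟩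
  refine ⟨⟨hx.1.le, hx.2.le⟩, hz1.le, hz2.le.trans (hC ⟨x, Ioo_subset_Icc_self hx, rfl⟩)⟩

lemma OIv_closure_compact (hv : ContinuousOn v (Icc a b)) :
    IsCompact (closure (OIv H a b v)) :=
  Metric.isCompact_of_isClosed_isBounded isClosed_closure (OIv_bounded hv).closure

lemma OIv_seg {x z : ℝ} (hx : x ∈ Ioo a b) (hvx : -H < v x) (hz : z ∈ Icc (-H) (v x)) :
    ((x : ℝ), (z : ℝ)) ∈ closure (OIv H a b v) := by
  have h1 : ({x} ×ˢ Ioo (-H) (v x) : Set (ℝ × ℝ)) ⊆ OIv H a b v := by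
    rintro ⟨x', z'⟩ ⟨hx', hz'⟩
    simp only [mem_singleton_iff] at hx'
    subst hx'
    exact ⟨hx, hz'.1, hz'.2⟩
  have h2 := closure_mono h1
  rw [closure_prod_eq, closure_singleton, closure_Ioo (ne_of_lt hvx)] at h2
  exact h2 ⟨rfl, hz⟩

lemma OIv_hasDerivAt (hv : ContinuousOn v (Icc a b))
    (hθ : ContDiffOn ℝ 1 θ (closure (OIv H a b v))) {p : ℝ × ℝ} (hp : p ∈ OIv H a b v) :
    HasDerivAt (fun z => θ (p.1, z)) (fderiv ℝ θ p (0, 1)) p.2 := by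
  have hmem : closure (OIv H a b v) ∈ 𝓝 p :=
    mem_nhds_iff.mpr ⟨OIv H a b v, subset_closure, OIv_open hv, hp⟩
  have hd : DifferentiableAt ℝ θ p :=
    ((hθ.differentiableOn one_ne_zero) p (subset_closure hp)).differentiableAt hmem
  have hline : HasDerivAt (fun z : ℝ => ((p.1 : ℝ), z)) ((0:ℝ), (1:ℝ)) p.2 :=
    (hasDerivAt_const _ _).prodMk (hasDerivAt_id _)
  exact hd.hasFDerivAt.comp_hasDerivAt p.2 hline

lemma OIv_fderiv_bound (hv : ContinuousOn v (Icc a b))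
    (hθ : ContDiffOn ℝ 1 θ (closure (OIv H a b v))) :
    ∃ C, 0 ≤ C ∧ ∀ p ∈ OIv H a b v, ‖fderiv ℝ θ p‖ ≤ C := by
  set S := closure (OIv H a b v) with hSdef
  have hSc := OIv_closure_compact (H := H) hv
  have key : ∀ q : ℝ × ℝ, ∃ (t : Set (ℝ × ℝ)) (C : ℝ), IsOpen t ∧
      (q ∈ S → q ∈ t ∧ ∀ p ∈ t ∩ OIv H a b v, ‖fderiv ℝ θ p‖ ≤ C) := by
    intro q
    by_cases hq : q ∈ S
    · have h1 : ContDiffWithinAt ℝ (0 + 1) θ S q := by rw [zero_add]; exact hθ q hq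
      rw [contDiffWithinAt_succ_iff_hasFDerivWithinAt (by simp)] at h1
      obtain ⟨u, hu, -, f', hf'd, hf'c⟩ := h1
      rw [insert_eq_of_mem hq] at hu
      obtain ⟨t₀, ht₀o, hqt₀, ht₀⟩ := mem_nhdsWithin.mp hu
      have hc : ContinuousWithinAt f' u q := hf'c.continuousWithinAt
      have hball := hc (Metric.ball_mem_nhds (f' q) one_pos)
      obtain ⟨t₁, ht₁o, hqt₁, ht₁⟩ := mem_nhdsWithin.mp hball
      refine ⟨t₀ ∩ t₁, ‖f' q‖ + 1, ht₀o.inter ht₁o, fun _ => ⟨⟨hqt₀, hqt₁⟩, ?_⟩⟩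
      rintro p ⟨⟨hpt₀, hpt₁⟩, hpO⟩
      have hpu : p ∈ u := ht₀ ⟨hpt₀, subset_closure hpO⟩
      have hfp : fderiv ℝ θ p = f' p := by
        have h2 : HasFDerivWithinAt θ (f' p) u p := hf'd p hpu
        have hw : IsOpen (t₀ ∩ t₁ ∩ OIv H a b v) := (ht₀o.inter ht₁o).inter (OIv_open hv)
        have hsub : t₀ ∩ t₁ ∩ OIv H a b v ⊆ u := by
          rintro r ⟨⟨hr₀, hr₁⟩, hrO⟩; exact ht₀ ⟨hr₀, subset_closure hrO⟩
        have h3 : HasFDerivAt θ (f' p) p :=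
          (h2.mono hsub).hasFDerivAt (hw.mem_nhds ⟨⟨hpt₀, hpt₁⟩, hpO⟩)
        exact h3.fderiv
      rw [hfp]
      have hballm : f' p ∈ Metric.ball (f' q) 1 := ht₁ ⟨hpt₁, hpu⟩
      have h4 : ‖f' p - f' q‖ < 1 := mem_ball_iff_norm.mp hballm
      have h5 := norm_sub_norm_le (f' p) (f' q)
      linarith
    · exact ⟨univ, 0, isOpen_univ, fun h => absurd h hq⟩
  choose t C ht hq using key
  obtain ⟨F, hFS, hFcov⟩ :=
    hSc.elim_nhds_subcover t (fun q hqS => (ht q).mem_nhds ((hq q hqS).1))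
  refine ⟨∑ q ∈ F, |C q|, Finset.sum_nonneg (fun i _ => abs_nonneg _), ?_⟩
  intro p hp
  obtain ⟨q, hqF, hpt⟩ := mem_iUnion₂.mp (hFcov (subset_closure hp))
  exact ((hq q (hFS q hqF)).2 p ⟨hpt, hp⟩).trans
    ((le_abs_self _).trans (Finset.single_le_sum (fun i _ => abs_nonneg (C i)) hqF))

lemma OIv_fubini (hv : ContinuousOn v (Icc a b)) {F : ℝ × ℝ → ℝ}
    (hF : IntegrableOn F (OIv H a b v)) :
    IntegrableOn (fun x => ∫ z in Ioo (-H) (v x), F (x, z)) (Ioo a b) ∧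
    ∫ p in OIv H a b v, F p = ∫ x in Ioo a b, ∫ z in Ioo (-H) (v x), F (x, z) := by
  have hmeas : MeasurableSet (OIv H a b v) := (OIv_open hv).measurableSet
  set G := (OIv H a b v).indicator F with hGdef
  have hGint : Integrable G volume := (integrable_indicator_iff hmeas).mpr hF
  have hGp : Integrable G (volume.prod volume) := by rwa [← Measure.volume_eq_prod]
  have inner : ∀ x, ∫ z, G (x, z) =
      (Ioo a b).indicator (fun x => ∫ z in Ioo (-H) (v x), F (x, z)) x := by
    intro x
    by_cases hx : x ∈ Ioo a b
    · rw [indicator_of_mem hx]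
      have hz : ∀ z, G (x, z) = (Ioo (-H) (v x)).indicator (fun z => F (x, z)) z := by
        intro z
        by_cases hzz : z ∈ Ioo (-H) (v x)
        · rw [indicator_of_mem hzz]
          exact indicator_of_mem (show (x, z) ∈ OIv H a b v from ⟨hx, hzz.1, hzz.2⟩) F
        · rw [indicator_of_notMem hzz]
          exact indicator_of_notMem (fun h => hzz ⟨h.2.1, h.2.2⟩) F
      simp_rw [hz]
      exact integral_indicator measurableSet_Ioo
    · rw [indicator_of_notMem hx]
      have hz : ∀ z, G (x, z) = 0 := fun z => indicator_of_notMem (fun h => hx h.1) F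
      simp [hz]
  constructor
  · have h2 : Integrable (fun x => ∫ z, G (x, z)) volume := hGp.integral_prod_left
    have h3 : Integrable ((Ioo a b).indicator
        (fun x => ∫ z in Ioo (-H) (v x), F (x, z))) volume :=
      h2.congr (ae_of_all _ inner)
    exact (integrable_indicator_iff measurableSet_Ioo).mp h3
  · calc ∫ p in OIv H a b v, F p = ∫ p, G p := (integral_indicator hmeas).symm
    _ = ∫ x, ∫ z, G (x, z) := by rw [Measure.volume_eq_prod]; exact integral_prod G hGp
    _ = ∫ x, (Ioo a b).indicator (fun x => ∫ z in Ioo (-H) (v x), F (x, z)) x := by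
        simp_rw [inner]
    _ = ∫ x in Ioo a b, ∫ z in Ioo (-H) (v x), F (x, z) :=
        integral_indicator measurableSet_Ioo

lemma slice_est (hH : 0 < H) (hv : ContinuousOn v (Icc a b))
    (hθ : ContDiffOn ℝ 1 θ (closure (OIv H a b v)))
    {x : ℝ} (hx : x ∈ Ioo a b) (hw : -H < v x) {Cθ Cφ : ℝ}
    (hCθ : ∀ p ∈ closure (OIv H a b v), ‖θ p‖ ≤ Cθ)
    (hCφ : ∀ p ∈ OIv H a b v, |deriv (fun z => θ (p.1, z)) p.2| ≤ Cφ) :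
    θ (x, -H) ^ 2 * (H + v x) ≤ (∫ z in Ioo (-H) (v x), θ (x, z) ^ 2)
      + (H + v x) * ∫ z in Ioo (-H) (v x),
          2 * |θ (x, z)| * |deriv (fun z' => θ (x, z')) z| := by
  set w := v x with hwdef
  set D : ℝ → ℝ := fun z => deriv (fun z' => θ (x, z')) z with hDdef
  have hseg : ∀ z ∈ Icc (-H) w, ((x:ℝ), z) ∈ closure (OIv H a b v) :=
    fun z hz => OIv_seg hx hw hz
  have hmemO : ∀ z ∈ Ioo (-H) w, ((x:ℝ), z) ∈ OIv H a b v :=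
    fun z hz => ⟨hx, hz.1, hz.2⟩
  have hfc : ContinuousOn (fun z => θ (x, z)) (Icc (-H) w) :=
    hθ.continuousOn.comp ((Continuous.prodMk_right x).continuousOn) hseg
  have hD : ∀ z ∈ Ioo (-H) w, HasDerivAt (fun z' => θ (x, z')) (D z) z := by
    intro z hz
    have h1 := OIv_hasDerivAt hv hθ (hmemO z hz)
    have h2 : D z = fderiv ℝ θ (x, z) (0, 1) := h1.deriv
    rw [h2]; exact h1
  have hDb : ∀ z ∈ Ioo (-H) w, |D z| ≤ Cφ := fun z hz => hCφ _ (hmemO z hz)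
  have hθb : ∀ z ∈ Icc (-H) w, |θ (x, z)| ≤ Cθ := fun z hz => hCθ _ (hseg z hz)
  have hDm : AEStronglyMeasurable (fun z => 2 * θ (x, z) * D z)
      (volume.restrict (Ioo (-H) w)) := by
    have h1 : AEStronglyMeasurable (fun z => θ (x, z)) (volume.restrict (Ioo (-H) w)) :=
      ((hfc.mono Ioo_subset_Icc_self).aestronglyMeasurable measurableSet_Ioo)
    exact (h1.const_mul 2).mul (measurable_deriv _).aestronglyMeasurable
  have hg'int : IntegrableOn (fun z => 2 * θ (x, z) * D z) (Ioo (-H) w) := by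
    refine Integrable.mono' (integrable_const (2 * Cθ * Cφ)) hDm ?_
    refine (ae_restrict_iff' measurableSet_Ioo).mpr (ae_of_all _ fun z hz => ?_)
    have h1 := hθb z (Ioo_subset_Icc_self hz)
    have h2 := hDb z hz
    have h3 : (0:ℝ) ≤ Cθ := le_trans (abs_nonneg _) h1
    have h4 : (0:ℝ) ≤ Cφ := le_trans (abs_nonneg _) h2
    calc ‖2 * θ (x, z) * D z‖ = 2 * |θ (x, z)| * |D z| := by
          rw [Real.norm_eq_abs, abs_mul, abs_mul, abs_two]
    _ ≤ 2 * Cθ * Cφ := by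
          apply mul_le_mul _ h2 (abs_nonneg _) (by positivity)
          exact mul_le_mul_of_nonneg_left h1 (by norm_num)
  have habs_int : IntegrableOn (fun z => 2 * |θ (x, z)| * |D z|) (Ioo (-H) w) := by
    refine hg'int.abs.congr ((ae_restrict_iff' measurableSet_Ioo).mpr
      (ae_of_all _ fun z _ => by simp only []; rw [abs_mul, abs_mul, abs_two]))
  set B : ℝ := ∫ z in Ioo (-H) w, 2 * |θ (x, z)| * |D z| with hBdef
  have hB0 : 0 ≤ B := setIntegral_nonneg measurableSet_Ioo (fun z _ => by positivity)
  have hpt : ∀ z ∈ Ioo (-H) w, θ (x, -H) ^ 2 ≤ θ (x, z) ^ 2 + B := by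
    intro z hz
    have hFTC : (∫ s in (-H)..z, 2 * θ (x, s) * D s) = θ (x, z) ^ 2 - θ (x, -H) ^ 2 := by
      apply intervalIntegral.integral_eq_sub_of_hasDeriv_right_of_le hz.1.le
      · exact ((hfc.mono (Icc_subset_Icc_right hz.2.le)).pow 2)
      · intro s hs
        have hso : s ∈ Ioo (-H) w := ⟨hs.1, hs.2.trans hz.2⟩
        have h1 := (hD s hso).pow 2
        have h2 : (2:ℕ) * θ (x, s) ^ (2 - 1) * D s = 2 * θ (x, s) * D s := by
          norm_num
        rw [h2] at h1
        exact h1.hasDerivWithinAt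
      · rw [intervalIntegrable_iff_integrableOn_Ioc_of_le hz.1.le]
        exact hg'int.mono_set (Ioc_subset_Ioo_right hz.2)
    have habs : |∫ s in (-H)..z, 2 * θ (x, s) * D s| ≤ B := by
      have h1 : |∫ s in (-H)..z, 2 * θ (x, s) * D s|
          ≤ ∫ s in (-H)..z, |2 * θ (x, s) * D s| :=
        intervalIntegral.abs_integral_le_integral_abs hz.1.le
      have h2 : (∫ s in (-H)..z, |2 * θ (x, s) * D s|)
          = ∫ s in Ioc (-H) z, |2 * θ (x, s) * D s| :=
        intervalIntegral.integral_of_le hz.1.le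
      have h3 : (∫ s in Ioc (-H) z, |2 * θ (x, s) * D s|)
          ≤ ∫ s in Ioo (-H) w, |2 * θ (x, s) * D s| := by
        apply setIntegral_mono_set
        · exact hg'int.abs
        · exact ae_of_all _ (fun s => abs_nonneg _)
        · exact HasSubset.Subset.eventuallyLE (Ioc_subset_Ioo_right hz.2)
      have h4 : (∫ s in Ioo (-H) w, |2 * θ (x, s) * D s|) = B := by
        rw [hBdef]
        exact setIntegral_congr_fun measurableSet_Ioo
          (fun s _ => by rw [abs_mul, abs_mul, abs_two])
      linarith
    have := abs_le.mp habs
    nlinarith [hFTC]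
  have hθ2int : IntegrableOn (fun z => θ (x, z) ^ 2) (Ioo (-H) w) :=
    ((hfc.pow 2).integrableOn_compact isCompact_Icc).mono_set Ioo_subset_Icc_self
  have hvolIoo : (volume (Ioo (-H) w)).toReal = H + w := by
    rw [Real.volume_Ioo, ENNReal.toReal_ofReal (by linarith)]
    ring
  have hmono : (∫ _ in Ioo (-H) w, θ (x, -H) ^ 2)
      ≤ ∫ z in Ioo (-H) w, (θ (x, z) ^ 2 + B) := by
    apply setIntegral_mono_on (integrableOn_const (by
      rw [Real.volume_Ioo]; exact ENNReal.ofReal_ne_top))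
      (hθ2int.add (integrableOn_const (by
        rw [Real.volume_Ioo]; exact ENNReal.ofReal_ne_top))) measurableSet_Ioo
    exact hpt
  rw [setIntegral_const, measureReal_def, hvolIoo, smul_eq_mul] at hmono
  rw [integral_add hθ2int (integrableOn_const (by
    rw [Real.volume_Ioo]; exact ENNReal.ofReal_ne_top)), setIntegral_const, measureReal_def,
    hvolIoo, smul_eq_mul] at hmono
  calc θ (x, -H) ^ 2 * (H + v x) = (H + w) * θ (x, -H) ^ 2 := by rw [← hwdef]; ring
  _ ≤ (∫ z in Ioo (-H) w, θ (x, z) ^ 2) + (H + w) * B := hmono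
  _ = _ := rfl

lemma myCS {α : Type*} [MeasurableSpace α] (μ : Measure α) [IsFiniteMeasure μ]
    {f g : α → ℝ} {Cf Cg : ℝ}
    (hf : AEStronglyMeasurable f μ) (hg : AEStronglyMeasurable g μ)
    (hbf : ∀ᵐ p ∂μ, ‖f p‖ ≤ Cf) (hbg : ∀ᵐ p ∂μ, ‖g p‖ ≤ Cg) :
    ∫ p, 2 * |f p| * |g p| ∂μ
      ≤ 2 * Real.sqrt (∫ p, f p ^ 2 ∂μ) * Real.sqrt (∫ p, g p ^ 2 ∂μ) := by
  have hpq : Real.HolderConjugate 2 2 := ⟨by norm_num, by norm_num, by norm_num⟩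
  have hfm : MemLp f (ENNReal.ofReal 2) μ := MemLp.of_bound hf Cf hbf
  have hgm : MemLp g (ENNReal.ofReal 2) μ := MemLp.of_bound hg Cg hbg
  have e1 : ∀ h : α → ℝ, (∫ p, ‖h p‖ ^ (2:ℝ) ∂μ) = ∫ p, h p ^ 2 ∂μ := by
    intro h
    refine integral_congr_ae (ae_of_all _ fun p => ?_)
    show ‖h p‖ ^ (2:ℝ) = h p ^ 2
    rw [show (2:ℝ) = ((2:ℕ):ℝ) by norm_num, Real.rpow_natCast, Real.norm_eq_abs, sq_abs]
  calc ∫ p, 2 * |f p| * |g p| ∂μ = 2 * ∫ p, ‖f p‖ * ‖g p‖ ∂μ := by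
        simp_rw [Real.norm_eq_abs, mul_assoc]
        exact integral_const_mul 2 _
  _ ≤ 2 * ((∫ p, ‖f p‖ ^ (2:ℝ) ∂μ) ^ (1/2:ℝ) * (∫ p, ‖g p‖ ^ (2:ℝ) ∂μ) ^ (1/2:ℝ)) := by
        have := integral_mul_norm_le_Lp_mul_Lq hpq hfm hgm
        linarith
  _ = 2 * Real.sqrt (∫ p, f p ^ 2 ∂μ) * Real.sqrt (∫ p, g p ^ 2 ∂μ) := by
        rw [e1 f, e1 g, ← Real.sqrt_eq_rpow, ← Real.sqrt_eq_rpow]; ring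

end aux

/-- Trace estimate on the bottom boundary for functions that are `C¹` on the closure
of `O_I(v)`:
`∫_I |θ(x,-H)|² (H+v(x)) dx ≤ ‖θ‖² + 2 M_v ‖θ‖ ‖∂_z θ‖`, with `M_v = sup_I (H+v)`. -/
theorem stmt_2 (H a b : ℝ) (hH : 0 < H) (hab : a < b) (v : ℝ → ℝ)
    (hv : ContinuousOn v (Icc a b)) (hvH : ∀ x ∈ Ioo a b, -H < v x)
    (θ : ℝ × ℝ → ℝ)
    (hθ : ContDiffOn ℝ 1 θ (closure (OIv H a b v))) :
    ∫ x in Ioo a b, (θ (x, -H)) ^ 2 * (H + v x) ≤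
      (∫ p in OIv H a b v, (θ p) ^ 2)
        + 2 * sSup ((fun x => H + v x) '' Ioo a b)
          * Real.sqrt (∫ p in OIv H a b v, (θ p) ^ 2)
          * Real.sqrt (∫ p in OIv H a b v, (deriv (fun z => θ (p.1, z)) p.2) ^ 2) := by
  set D : ℝ × ℝ → ℝ := fun p => deriv (fun z => θ (p.1, z)) p.2 with hDdef
  have hmeasO : MeasurableSet (OIv H a b v) := (OIv_open hv).measurableSet
  have hSc : IsCompact (closure (OIv H a b v)) := OIv_closure_compact hv
  have hθcS : ContinuousOn θ (closure (OIv H a b v)) := hθ.continuousOn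
  obtain ⟨Cθ₀, hCθ₀⟩ := hSc.exists_bound_of_continuousOn hθcS
  set Cθ := max Cθ₀ 0 with hCθdef
  have hCθ : ∀ p ∈ closure (OIv H a b v), ‖θ p‖ ≤ Cθ :=
    fun p hp => (hCθ₀ p hp).trans (le_max_left _ _)
  have hCθ0 : 0 ≤ Cθ := le_max_right _ _
  obtain ⟨Cφ, hCφ0, hCφf⟩ := OIv_fderiv_bound hv hθ
  have hDeq : ∀ p ∈ OIv H a b v, D p = fderiv ℝ θ p (0, 1) :=
    fun p hp => (OIv_hasDerivAt hv hθ hp).deriv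
  have hCφ : ∀ p ∈ OIv H a b v, |D p| ≤ Cφ := by
    intro p hp
    rw [hDeq p hp]
    have h1 : ‖fderiv ℝ θ p ((0:ℝ), (1:ℝ))‖ ≤ ‖fderiv ℝ θ p‖ * ‖((0:ℝ), (1:ℝ))‖ :=
      (fderiv ℝ θ p).le_opNorm _
    have h2 : ‖((0:ℝ), (1:ℝ))‖ = 1 := by simp [Prod.norm_def]
    rw [h2, mul_one] at h1
    rw [← Real.norm_eq_abs]
    exact h1.trans (hCφf p hp)
  have hvolO : volume (OIv H a b v) ≠ ⊤ :=
    ((measure_mono (subset_closure)).trans_lt hSc.measure_lt_top).ne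
  haveI hfin : IsFiniteMeasure (volume.restrict (OIv H a b v)) :=
    ⟨by rw [Measure.restrict_apply_univ]; exact lt_of_le_of_ne le_top hvolO⟩
  have hθm : AEStronglyMeasurable θ (volume.restrict (OIv H a b v)) :=
    (hθcS.mono subset_closure).aestronglyMeasurable hmeasO
  have hDm : AEStronglyMeasurable D (volume.restrict (OIv H a b v)) := by
    have h1 : Measurable (fun p : ℝ × ℝ => fderiv ℝ θ p ((0:ℝ), (1:ℝ))) :=
      measurable_fderiv_apply_const ℝ θ _
    exact h1.aestronglyMeasurable.congr
      ((ae_restrict_iff' hmeasO).mpr (ae_of_all _ fun p hp => (hDeq p hp).symm))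
  have hbθ : ∀ᵐ p ∂(volume.restrict (OIv H a b v)), ‖θ p‖ ≤ Cθ :=
    (ae_restrict_iff' hmeasO).mpr (ae_of_all _ fun p hp => hCθ p (subset_closure hp))
  have hbD : ∀ᵐ p ∂(volume.restrict (OIv H a b v)), ‖D p‖ ≤ Cφ :=
    (ae_restrict_iff' hmeasO).mpr
      (ae_of_all _ fun p hp => by rw [Real.norm_eq_abs]; exact hCφ p hp)
  have hθ2int : IntegrableOn (fun p => θ p ^ 2) (OIv H a b v) := by
    refine Integrable.mono' (integrable_const (Cθ ^ 2)) ?_ ?_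
    · exact hθm.pow 2
    · filter_upwards [hbθ] with p hp
      rw [Real.norm_eq_abs] at hp ⊢
      rw [abs_pow]
      exact pow_le_pow_left₀ (abs_nonneg _) hp 2
  have hD2int : IntegrableOn (fun p => D p ^ 2) (OIv H a b v) := by
    refine Integrable.mono' (integrable_const (Cφ ^ 2)) ?_ ?_
    · exact hDm.pow 2
    · filter_upwards [hbD] with p hp
      rw [Real.norm_eq_abs] at hp ⊢
      rw [abs_pow]
      exact pow_le_pow_left₀ (abs_nonneg _) hp 2
  have hθDint : IntegrableOn (fun p => 2 * |θ p| * |D p|) (OIv H a b v) := by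
    have hm : AEStronglyMeasurable (fun p => 2 * |θ p| * |D p|)
        (volume.restrict (OIv H a b v)) := by
      have h1 : AEStronglyMeasurable (fun p => |θ p|) (volume.restrict (OIv H a b v)) := by
        simpa [Real.norm_eq_abs] using hθm.norm
      have h2 : AEStronglyMeasurable (fun p => |D p|) (volume.restrict (OIv H a b v)) := by
        simpa [Real.norm_eq_abs] using hDm.norm
      exact (h1.const_mul 2).mul h2
    refine Integrable.mono' (integrable_const (2 * Cθ * Cφ)) hm ?_
    filter_upwards [hbθ, hbD] with p h1 h2
    rw [Real.norm_eq_abs] at h1 h2 ⊢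
    rw [abs_mul, abs_mul, abs_two, abs_abs, abs_abs]
    have h3 := abs_nonneg (θ p)
    have h4 := abs_nonneg (D p)
    nlinarith
  have fub1 := OIv_fubini hv hθ2int
  have fub2 := OIv_fubini hv hθDint
  obtain ⟨Cv, hCv⟩ := isCompact_Icc.exists_bound_of_continuousOn hv
  have hbdd : BddAbove ((fun x => H + v x) '' Ioo a b) := by
    refine ⟨H + Cv, ?_⟩
    rintro y ⟨x, hx, rfl⟩
    have h1 := hCv x (Ioo_subset_Icc_self hx)
    rw [Real.norm_eq_abs] at h1
    have := (abs_le.mp h1).2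
    simp only []
    linarith
  have hMb : ∀ x ∈ Ioo a b, H + v x ≤ sSup ((fun x => H + v x) '' Ioo a b) :=
    fun x hx => le_csSup hbdd (mem_image_of_mem _ hx)
  have hM0 : 0 ≤ sSup ((fun x => H + v x) '' Ioo a b) := by
    have hx0 : (a + b) / 2 ∈ Ioo a b := ⟨by linarith, by linarith⟩
    have h1 := hMb _ hx0
    have h2 := hvH _ hx0
    linarith
  have claim1 : ∀ x ∈ Ioo a b, θ (x, -H) ^ 2 * (H + v x) ≤
      (∫ z in Ioo (-H) (v x), θ (x, z) ^ 2)
        + (H + v x) * ∫ z in Ioo (-H) (v x), 2 * |θ (x, z)| * |D (x, z)| :=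
    fun x hx => slice_est hH hv hθ hx (hvH x hx) hCθ hCφ
  -- integrability of the trace integrand on the base interval
  have hLm : ContinuousOn (fun x => θ (x, -H) ^ 2 * (H + v x)) (Ioo a b) := by
    apply ContinuousOn.mul
    · apply ContinuousOn.pow
      exact hθcS.comp ((continuous_id.prodMk continuous_const).continuousOn)
        (fun x hx => OIv_seg hx (hvH x hx) ⟨le_rfl, (hvH x hx).le⟩)
    · exact continuousOn_const.add (hv.mono Ioo_subset_Icc_self)
  have hIoovol : volume (Ioo a b) < ⊤ := by
    rw [Real.volume_Ioo]; exact ENNReal.ofReal_lt_top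
  have hLint : IntegrableOn (fun x => θ (x, -H) ^ 2 * (H + v x)) (Ioo a b) := by
    refine Integrable.mono'
      ((integrableOn_const hIoovol.ne) :
        IntegrableOn (fun _ => Cθ ^ 2 * (H + Cv)) (Ioo a b) volume)
      (hLm.aestronglyMeasurable measurableSet_Ioo) ?_
    refine (ae_restrict_iff' measurableSet_Ioo).mpr (ae_of_all _ fun x hx => ?_)
    have h1 := hCθ _ (OIv_seg hx (hvH x hx) ⟨le_rfl, (hvH x hx).le⟩)
    have h2 := hCv x (Ioo_subset_Icc_self hx)
    rw [Real.norm_eq_abs] at h1 h2 ⊢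
    have h3 := (abs_le.mp h2)
    rw [abs_mul, abs_pow]
    refine mul_le_mul (pow_le_pow_left₀ (abs_nonneg _) h1 2) ?_ (abs_nonneg _) (by positivity)
    rw [abs_le]
    constructor <;> [linarith [h3.1]; linarith [h3.2]]
  have hBB0 : ∀ x, 0 ≤ ∫ z in Ioo (-H) (v x), 2 * |θ (x, z)| * |D (x, z)| :=
    fun x => setIntegral_nonneg measurableSet_Ioo (fun z _ => by positivity)
  have hprod : IntegrableOn
      (fun x => (H + v x) * ∫ z in Ioo (-H) (v x), 2 * |θ (x, z)| * |D (x, z)|)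
      (Ioo a b) := by
    refine Integrable.mono' ((fub2.1).const_mul (sSup ((fun x => H + v x) '' Ioo a b))) ?_ ?_
    · exact ((continuousOn_const.add (hv.mono Ioo_subset_Icc_self)).aestronglyMeasurable
        measurableSet_Ioo).mul fub2.1.aestronglyMeasurable
    · refine (ae_restrict_iff' measurableSet_Ioo).mpr (ae_of_all _ fun x hx => ?_)
      have h1 := hMb x hx
      have h2 := hvH x hx
      have h3 := hBB0 x
      rw [Real.norm_eq_abs, abs_mul, abs_of_pos (by linarith : (0:ℝ) < H + v x),
        abs_of_nonneg h3]
      exact mul_le_mul_of_nonneg_right h1 h3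
  have hCS : (∫ p in OIv H a b v, 2 * |θ p| * |D p|)
      ≤ 2 * Real.sqrt (∫ p in OIv H a b v, θ p ^ 2)
        * Real.sqrt (∫ p in OIv H a b v, D p ^ 2) :=
    myCS _ hθm hDm hbθ hbD
  calc ∫ x in Ioo a b, θ (x, -H) ^ 2 * (H + v x)
      ≤ ∫ x in Ioo a b, ((∫ z in Ioo (-H) (v x), θ (x, z) ^ 2)
          + (H + v x) * ∫ z in Ioo (-H) (v x), 2 * |θ (x, z)| * |D (x, z)|) :=
        setIntegral_mono_on hLint (fub1.1.add hprod) measurableSet_Ioo claim1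
  _ = (∫ x in Ioo a b, ∫ z in Ioo (-H) (v x), θ (x, z) ^ 2)
        + ∫ x in Ioo a b, (H + v x) * ∫ z in Ioo (-H) (v x), 2 * |θ (x, z)| * |D (x, z)| :=
        integral_add fub1.1 hprod
  _ ≤ (∫ p in OIv H a b v, θ p ^ 2)
        + sSup ((fun x => H + v x) '' Ioo a b)
          * (2 * Real.sqrt (∫ p in OIv H a b v, θ p ^ 2)
              * Real.sqrt (∫ p in OIv H a b v, D p ^ 2)) := by
      have e1 : (∫ x in Ioo a b, ∫ z in Ioo (-H) (v x), θ (x, z) ^ 2)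
          = ∫ p in OIv H a b v, θ p ^ 2 := fub1.2.symm
      have e2 : (∫ x in Ioo a b, (H + v x) *
            ∫ z in Ioo (-H) (v x), 2 * |θ (x, z)| * |D (x, z)|)
          ≤ sSup ((fun x => H + v x) '' Ioo a b)
            * ∫ x in Ioo a b, ∫ z in Ioo (-H) (v x), 2 * |θ (x, z)| * |D (x, z)| := by
        rw [← integral_const_mul]
        refine setIntegral_mono_on hprod ((fub2.1).const_mul _) measurableSet_Ioo ?_
        exact fun x hx => mul_le_mul_of_nonneg_right (hMb x hx) (hBB0 x)
      have e3 : (∫ x in Ioo a b, ∫ z in Ioo (-H) (v x), 2 * |θ (x, z)| * |D (x, z)|)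
          = ∫ p in OIv H a b v, 2 * |θ p| * |D p| := fub2.2.symm
      have e4 := mul_le_mul_of_nonneg_left hCS hM0
      rw [e3] at e2
      linarith
  _ = (∫ p in OIv H a b v, θ p ^ 2)
        + 2 * sSup ((fun x => H + v x) '' Ioo a b)
          * Real.sqrt (∫ p in OIv H a b v, θ p ^ 2)
          * Real.sqrt (∫ p in OIv H a b v, D p ^ 2) := by ring
end

section
/- Let H > 0, let I = (a,b) be a bounded open interval, and let v : [a,b] → ℝ be continuous with v(x) > -H for all x ∈ I. Then every function θ that is continuously differentiable on the closure of O_I(v) and satisfies θ(x, v(x)) = 0 for all x ∈ I obeys the Poincaré inequality ‖θ‖_{L²(O_I(v))} ≤ 2 M_v ‖∂_z θ‖_{L²(O_I(v))}. -/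
open MeasureTheory Set Topology Filter


lemma sq_integral_le_aux {μ : Measure ℝ} [IsFiniteMeasure μ] {f : ℝ → ℝ}
    (hf : Integrable f μ) (hf2 : Integrable (fun t => f t ^ 2) μ) :
    (∫ t, f t ∂μ) ^ 2 ≤ (μ univ).toReal * ∫ t, f t ^ 2 ∂μ := by
  set m := (μ univ).toReal with hm
  have hm0 : 0 ≤ m := ENNReal.toReal_nonneg
  rcases eq_or_lt_of_le hm0 with h0 | hpos
  · have hz : μ = 0 := by
      have h1 : (μ univ) = 0 ∨ (μ univ) = ⊤ := by
        rcases ENNReal.toReal_eq_zero_iff (μ univ) |>.mp h0.symm with h | h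
        · exact Or.inl h
        · exact Or.inr h
      rcases h1 with h | h
      · exact Measure.measure_univ_eq_zero.mp h
      · exact absurd h (measure_ne_top μ univ)
    simp [hz]
  · set B := ∫ t, f t ∂μ with hB
    set l := B / m with hl
    have hlm : l * m = B := div_mul_cancel₀ _ hpos.ne'
    have key : 0 ≤ ∫ t, (f t - l) ^ 2 ∂μ := integral_nonneg fun t => sq_nonneg _
    have expand : ∫ t, (f t - l) ^ 2 ∂μ
        = (∫ t, f t ^ 2 ∂μ) - 2 * l * B + l ^ 2 * m := by
      have hfn : (fun t => (f t - l) ^ 2)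
          = fun t => (f t ^ 2 - (2 * l) * f t) + l ^ 2 := by
        funext t; ring
      have i2 : Integrable (fun t => 2 * l * f t) μ := hf.const_mul _
      have i1 : Integrable (fun t => f t ^ 2 - 2 * l * f t) μ := hf2.sub i2
      rw [hfn]
      rw [integral_add i1 (integrable_const _), integral_sub hf2 i2,
        integral_const_mul, integral_const]
      simp [← hm, smul_eq_mul, measureReal_def, ← hB]
      ring
    have key2 : 0 ≤ (∫ t, f t ^ 2 ∂μ) - 2 * l * B + l ^ 2 * m := expand ▸ key
    nlinarith [key2, hlm, hpos]



/-- Poincaré inequality for functions that are `C¹` on the closure of `O_I(v)` and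
vanish on the graph of `v`:
`‖θ‖_{L²(O_I(v))} ≤ 2 M_v ‖∂_z θ‖_{L²(O_I(v))}`, with `M_v = sup_I (H+v)`. -/
theorem stmt_3 (H a b : ℝ) (hH : 0 < H) (hab : a < b) (v : ℝ → ℝ)
    (hv : ContinuousOn v (Icc a b)) (hvH : ∀ x ∈ Ioo a b, -H < v x)
    (θ : ℝ × ℝ → ℝ)
    (hθ : ContDiffOn ℝ 1 θ (closure (OIv H a b v)))
    (hθ0 : ∀ x ∈ Ioo a b, θ (x, v x) = 0) :
    Real.sqrt (∫ p in OIv H a b v, (θ p) ^ 2) ≤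
      2 * sSup ((fun x => H + v x) '' Ioo a b)
        * Real.sqrt (∫ p in OIv H a b v, (deriv (fun z => θ (p.1, z)) p.2) ^ 2) := by
  set S := OIv H a b v with hSdef
  set cl := closure S with hcldef
  set M := sSup ((fun x => H + v x) '' Ioo a b) with hMdef
  set g : ℝ × ℝ → ℝ := fun p => deriv (fun z => θ (p.1, z)) p.2 with hgdef
  have hSsub : S ⊆ cl := subset_closure
  have hmem : ∀ x z : ℝ, ((x, z) ∈ S ↔ x ∈ Ioo a b ∧ -H < z ∧ z < v x) := fun _ _ => Iff.rfl
  have hvx : ∀ x ∈ Ioo a b, ContinuousAt v x := fun x hx =>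
    hv.continuousAt (Icc_mem_nhds hx.1 hx.2)
  -- S is open
  have hSopen : IsOpen S := by
    rw [isOpen_iff_mem_nhds]
    rintro ⟨x, z⟩ ⟨hx, hz1, hz2⟩
    have h1 : ∀ᶠ p : ℝ × ℝ in 𝓝 (x, z), p.1 ∈ Ioo a b := by
      have : Ioo a b ×ˢ (univ : Set ℝ) ∈ 𝓝 ((x, z) : ℝ × ℝ) :=
        prod_mem_nhds (Ioo_mem_nhds hx.1 hx.2) univ_mem
      filter_upwards [this] with p hp using hp.1
    have hc : ContinuousAt (fun p : ℝ × ℝ => v p.1 - p.2) (x, z) :=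
      ((hvx x hx).comp continuousAt_fst).sub continuousAt_snd
    have h2 : ∀ᶠ p : ℝ × ℝ in 𝓝 (x, z), 0 < v p.1 - p.2 :=
      hc (Ioi_mem_nhds (sub_pos.mpr hz2))
    have h3 : ∀ᶠ p : ℝ × ℝ in 𝓝 (x, z), -H < p.2 :=
      continuousAt_snd (Ioi_mem_nhds hz1)
    have : ∀ᶠ p : ℝ × ℝ in 𝓝 (x, z), p ∈ S := by
      filter_upwards [h1, h2, h3] with p hp1 hp2 hp3
      exact ⟨hp1, hp3, by linarith⟩
    exact this
  -- bound on v
  obtain ⟨x₀, hx₀, hvmax⟩ : ∃ x₀ ∈ Icc a b, ∀ x ∈ Icc a b, v x ≤ v x₀ := by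
    obtain ⟨x₀, hx₀, h⟩ := isCompact_Icc.exists_isMaxOn (nonempty_Icc.mpr hab.le) hv
    exact ⟨x₀, hx₀, fun x hx => h hx⟩
  set C := v x₀ with hCdef
  have hMle : ∀ x ∈ Ioo a b, H + v x ≤ M := by
    intro x hx
    apply le_csSup
    · refine ⟨H + C, ?_⟩
      rintro _ ⟨y, hy, rfl⟩
      have := hvmax y (Ioo_subset_Icc_self hy)
      show H + v y ≤ H + C
      linarith
    · exact mem_image_of_mem _ hx
  have hMpos : 0 < M := by
    set xm := (a + b) / 2 with hxm
    have hxmm : xm ∈ Ioo a b := ⟨by linarith, by linarith⟩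
    have := hvH xm hxmm
    have := hMle xm hxmm
    linarith
  -- closure compact
  have hSbd : S ⊆ Icc a b ×ˢ Icc (-H) C := by
    rintro ⟨x, z⟩ ⟨hx, h1, h2⟩
    exact ⟨Ioo_subset_Icc_self hx, h1.le,
      h2.le.trans (hvmax x (Ioo_subset_Icc_self hx))⟩
  have hclsub : cl ⊆ Icc a b ×ˢ Icc (-H) C :=
    closure_minimal hSbd (isClosed_Icc.prod isClosed_Icc)
  have hclcp : IsCompact cl :=
    (isCompact_Icc.prod isCompact_Icc).of_isClosed_subset isClosed_closure hclsub
  have hSm : MeasurableSet S := hSopen.measurableSet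
  have hSfin : volume S < ⊤ :=
    lt_of_le_of_lt (measure_mono hSbd) (isCompact_Icc.prod isCompact_Icc).measure_lt_top
  -- θ continuous and bounded on cl
  have hθc : ContinuousOn θ cl := hθ.continuousOn
  obtain ⟨Cθ, hCθ⟩ : ∃ Cθ, ∀ p ∈ cl, ‖θ p‖ ≤ Cθ := hclcp.exists_bound_of_continuousOn hθc
  -- derivative facts
  have hdiff : ∀ p ∈ S, HasDerivAt (fun z => θ (p.1, z)) (fderiv ℝ θ p ((0 : ℝ), (1 : ℝ))) p.2 := by
    rintro ⟨x, z⟩ hp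
    have h1 : ContDiffAt ℝ 1 θ (x, z) :=
      hθ.contDiffAt (Filter.mem_of_superset (hSopen.mem_nhds hp) hSsub)
    have h2 : HasFDerivAt θ (fderiv ℝ θ (x, z)) (x, z) :=
      (h1.differentiableAt one_ne_zero).hasFDerivAt
    have h3 : HasDerivAt (fun w : ℝ => ((x : ℝ), w)) ((0 : ℝ), (1 : ℝ)) z :=
      (hasDerivAt_const _ _).prodMk (hasDerivAt_id _)
    exact h2.comp_hasDerivAt z h3
  have hgeq : ∀ p ∈ S, g p = fderiv ℝ θ p ((0 : ℝ), (1 : ℝ)) := by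
    rintro ⟨x, z⟩ hp
    exact (hdiff _ hp).deriv
  have hgder : ∀ p ∈ S, HasDerivAt (fun z => θ (p.1, z)) (g p) p.2 := by
    intro p hp; rw [hgeq p hp]; exact hdiff p hp
  -- g continuous on S
  have hfdc : ContinuousOn (fderiv ℝ θ) S :=
    (hθ.mono hSsub).continuousOn_fderiv_of_isOpen hSopen le_rfl
  have hgc : ContinuousOn g S :=
    (hfdc.clm_apply continuousOn_const).congr hgeq
  -- uniform bound on fderiv over S
  obtain ⟨K, hK0, hKb⟩ : ∃ K, 0 ≤ K ∧ ∀ p ∈ S, ‖fderiv ℝ θ p‖ ≤ K := by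
    have hloc : ∀ p ∈ cl, ∃ t : Set (ℝ × ℝ), IsOpen t ∧ p ∈ t ∧
        ∃ Kp, ∀ q ∈ t ∩ S, ‖fderiv ℝ θ q‖ ≤ Kp := by
      intro p hp
      have h1 : ContDiffWithinAt ℝ (0 + 1) θ cl p := by
        have := hθ p hp
        norm_num at this ⊢
        exact this
      rw [contDiffWithinAt_succ_iff_hasFDerivWithinAt (by simp)] at h1
      obtain ⟨u, hu, -, f', hf'd, hf'c⟩ := h1
      rw [insert_eq_of_mem hp] at hu
      obtain ⟨w, hwopen, hpw, hwsub⟩ := mem_nhdsWithin.mp hu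
      have hcw : ContinuousWithinAt f' u p := hf'c.continuousWithinAt
      have hev : ∀ᶠ q in 𝓝[u] p, ‖f' q‖ < ‖f' p‖ + 1 :=
        (hcw.norm).eventually_lt_const (by linarith)
      obtain ⟨t, htopen, hpt, htsub⟩ := mem_nhdsWithin.mp hev
      refine ⟨t ∩ w, htopen.inter hwopen, ⟨hpt, hpw⟩, ‖f' p‖ + 1, ?_⟩
      rintro q ⟨⟨hqt, hqw⟩, hqS⟩
      have hqu : q ∈ u := hwsub ⟨hqw, hSsub hqS⟩
      have hq2 : HasFDerivAt θ (f' q) q :=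
        (hf'd q hqu).hasFDerivAt
          (Filter.mem_of_superset ((hwopen.inter hSopen).mem_nhds ⟨hqw, hqS⟩)
            (fun r hr => hwsub ⟨hr.1, hSsub hr.2⟩))
      rw [hq2.fderiv]
      exact le_of_lt (htsub ⟨hqt, hqu⟩)
    choose! t ht1 ht2 K hK using hloc
    obtain ⟨s, hs1, hs2⟩ := hclcp.elim_nhds_subcover t (fun p hp => (ht1 p hp).mem_nhds (ht2 p hp))
    obtain ⟨K₀, hK₀⟩ := (s.finite_toSet.image K).bddAbove
    refine ⟨max K₀ 0, le_max_right _ _, ?_⟩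
    intro q hq
    obtain ⟨p, hps, hpt⟩ := mem_iUnion₂.mp (hs2 (hSsub hq))
    refine le_trans (hK p (hs1 p hps) q ⟨hpt, hq⟩) (le_trans ?_ (le_max_left _ _))
    exact hK₀ (mem_image_of_mem K (Finset.mem_coe.mpr hps))

  have hgbd : ∀ p ∈ S, |g p| ≤ K := by
    intro p hp
    rw [hgeq p hp]
    calc |fderiv ℝ θ p ((0 : ℝ), (1 : ℝ))| ≤ ‖fderiv ℝ θ p‖ * ‖((0 : ℝ), (1 : ℝ))‖ :=
          (fderiv ℝ θ p).le_opNorm _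
      _ ≤ K * 1 := by
          apply mul_le_mul (hKb p hp) _ (norm_nonneg _) hK0
          rw [Prod.norm_def]; simp
      _ = K := mul_one K
  -- integrability on S
  have hθ2i : IntegrableOn (fun p => θ p ^ 2) S := by
    refine ⟨((hθc.mono hSsub).pow 2 |>.aestronglyMeasurable hSm), ?_⟩
    apply HasFiniteIntegral.restrict_of_bounded (C := Cθ ^ 2) hSfin
    rw [ae_restrict_iff' hSm]
    refine ae_of_all _ fun p hp => ?_
    have h1 := hCθ p (hSsub hp)
    have h2 : (0:ℝ) ≤ Cθ := le_trans (norm_nonneg _) h1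
    rw [Real.norm_eq_abs, abs_pow, ← Real.norm_eq_abs]
    exact pow_le_pow_left₀ (norm_nonneg _) h1 2
  have hg2i : IntegrableOn (fun p => g p ^ 2) S := by
    refine ⟨((hgc.pow 2).aestronglyMeasurable hSm), ?_⟩
    apply HasFiniteIntegral.restrict_of_bounded (C := K ^ 2) hSfin
    rw [ae_restrict_iff' hSm]
    refine ae_of_all _ fun p hp => ?_
    rw [Real.norm_eq_abs, abs_pow]
    exact pow_le_pow_left₀ (abs_nonneg _) (hgbd p hp) 2
  -- Fubini
  have key : ∀ f : ℝ × ℝ → ℝ, IntegrableOn f S →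
      (∫ p in S, f p) = (∫ x in Ioo a b, ∫ z in Ioo (-H) (v x), f (x, z)) ∧
      IntegrableOn (fun x => ∫ z in Ioo (-H) (v x), f (x, z)) (Ioo a b) := by
    intro f hf
    have hind : Integrable (S.indicator f) volume := hf.integrable_indicator hSm
    have hprod : Integrable (S.indicator f) ((volume : Measure ℝ).prod volume) := by
      rwa [← Measure.volume_eq_prod]
    have hfib : ∀ x : ℝ, (∫ z, S.indicator f (x, z))
        = (Ioo a b).indicator (fun x' => ∫ z in Ioo (-H) (v x'), f (x', z)) x := by
      intro x
      by_cases hx : x ∈ Ioo a b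
      · rw [indicator_of_mem hx, ← integral_indicator measurableSet_Ioo]
        congr 1
        funext z
        by_cases hz : z ∈ Ioo (-H) (v x)
        · rw [indicator_of_mem hz, indicator_of_mem ((hmem x z).mpr ⟨hx, hz.1, hz.2⟩)]
        · rw [indicator_of_notMem hz, indicator_of_notMem]
          intro hc
          exact hz ⟨((hmem x z).mp hc).2.1, ((hmem x z).mp hc).2.2⟩
      · rw [indicator_of_notMem hx]
        have hz : ∀ z : ℝ, S.indicator f (x, z) = 0 := fun z =>
          indicator_of_notMem (fun hc => hx ((hmem x z).mp hc).1) _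
        simp [hz]
    constructor
    · have h1 : (∫ p in S, f p) = ∫ p, S.indicator f p := (integral_indicator hSm).symm
      rw [h1]
      have h2 : (∫ p, S.indicator f p) = ∫ x, ∫ z, S.indicator f (x, z) := by
        rw [Measure.volume_eq_prod]
        exact integral_prod _ hprod
      rw [h2, integral_congr_ae (Eventually.of_forall hfib), integral_indicator measurableSet_Ioo]
    · have h3 : Integrable (fun x => ∫ z, S.indicator f (x, z)) volume :=
        hprod.integral_prod_left
      have h4 : Integrable ((Ioo a b).indicator
          (fun x' => ∫ z in Ioo (-H) (v x'), f (x', z))) volume :=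
        h3.congr (Eventually.of_forall hfib)
      exact (integrable_indicator_iff measurableSet_Ioo).mp h4

  -- fiber bound
  have fiber : ∀ x ∈ Ioo a b,
      (∫ z in Ioo (-H) (v x), θ (x, z) ^ 2) ≤ M ^ 2 * ∫ z in Ioo (-H) (v x), g (x, z) ^ 2 := by
    intro x hx
    set c := -H with hc
    set d := v x with hd
    have hcd : c < d := hvH x hx
    have hmemS : ∀ z ∈ Ioo c d, ((x, z) : ℝ × ℝ) ∈ S := fun z hz => ⟨hx, hz.1, hz.2⟩
    have hcont_slice : Continuous (fun z : ℝ => ((x : ℝ), z)) := continuous_const.prodMk continuous_id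
    have hgxc : ContinuousOn (fun z => g (x, z)) (Ioo c d) :=
      hgc.comp hcont_slice.continuousOn (fun z hz => hmemS z hz)
    have hIoofin : volume (Ioo c d) < ⊤ := measure_Ioo_lt_top
    have hgxint : IntegrableOn (fun z => g (x, z)) (Ioo c d) := by
      refine ⟨hgxc.aestronglyMeasurable measurableSet_Ioo, ?_⟩
      apply HasFiniteIntegral.restrict_of_bounded (C := K) hIoofin
      rw [ae_restrict_iff' measurableSet_Ioo]
      exact ae_of_all _ fun z hz => hgbd _ (hmemS z hz)
    have hgx2int : IntegrableOn (fun z => g (x, z) ^ 2) (Ioo c d) := by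
      refine ⟨(hgxc.pow 2).aestronglyMeasurable measurableSet_Ioo, ?_⟩
      apply HasFiniteIntegral.restrict_of_bounded (C := K ^ 2) hIoofin
      rw [ae_restrict_iff' measurableSet_Ioo]
      refine ae_of_all _ fun z hz => ?_
      rw [Real.norm_eq_abs, abs_pow]
      exact pow_le_pow_left₀ (abs_nonneg _) (hgbd _ (hmemS z hz)) 2
    set A := ∫ z in Ioo c d, g (x, z) ^ 2 with hA
    have hA0 : 0 ≤ A := setIntegral_nonneg measurableSet_Ioo fun z _ => sq_nonneg _
    have ptw : ∀ z ∈ Ioo c d, θ (x, z) ^ 2 ≤ (d - c) * A := by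
      intro z hz
      have hIccsub : ∀ w, w < d → Icc z w ⊆ Ioo c d := fun w hw t ht =>
        ⟨lt_of_lt_of_le hz.1 ht.1, lt_of_le_of_lt ht.2 hw⟩
      have hstep : ∀ w ∈ Ico z d, ∫ t in z..w, g (x, t) = θ (x, w) - θ (x, z) := by
        intro w hw
        apply intervalIntegral.integral_eq_sub_of_hasDerivAt
        · intro t ht
          rw [uIcc_of_le hw.1] at ht
          exact hgder (x, t) (hmemS t (hIccsub w hw.2 ht))
        · apply ContinuousOn.intervalIntegrable
          rw [uIcc_of_le hw.1]
          exact hgxc.mono (hIccsub w hw.2)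
      have hcs : ∀ w ∈ Ico z d, (θ (x, w) - θ (x, z)) ^ 2 ≤ (d - c) * A := by
        intro w hw
        rw [← hstep w hw]
        have hzw : z ≤ w := hw.1
        have hsub : Ioo z w ⊆ Ioo c d := fun t ht => ⟨lt_trans hz.1 ht.1, lt_trans ht.2 hw.2⟩
        have e1 : (∫ t in z..w, g (x, t)) = ∫ t in Ioo z w, g (x, t) := by
          rw [intervalIntegral.integral_of_le hzw, integral_Ioc_eq_integral_Ioo]
        haveI : IsFiniteMeasure (volume.restrict (Ioo z w)) :=
          ⟨by rw [Measure.restrict_apply_univ]; exact measure_Ioo_lt_top⟩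
        have hint1 : Integrable (fun t => g (x, t)) (volume.restrict (Ioo z w)) :=
          hgxint.mono_set hsub
        have hint2 : Integrable (fun t => g (x, t) ^ 2) (volume.restrict (Ioo z w)) :=
          hgx2int.mono_set hsub
        have hcs0 := sq_integral_le_aux hint1 hint2
        have hm : ((volume.restrict (Ioo z w)) univ).toReal = w - z := by
          rw [Measure.restrict_apply_univ, Real.volume_Ioo, ENNReal.toReal_ofReal (by linarith)]
        rw [hm] at hcs0
        have h2 : (∫ t in Ioo z w, g (x, t) ^ 2) ≤ A :=
          setIntegral_mono_set hgx2int (ae_of_all _ fun t => sq_nonneg _)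
            (HasSubset.Subset.eventuallyLE hsub)
        have h2nonneg : 0 ≤ ∫ t in Ioo z w, g (x, t) ^ 2 :=
          setIntegral_nonneg measurableSet_Ioo fun t _ => sq_nonneg _
        rw [e1]
        calc (∫ t in Ioo z w, g (x, t)) ^ 2 ≤ (w - z) * ∫ t in Ioo z w, g (x, t) ^ 2 := hcs0
          _ ≤ (d - c) * A := mul_le_mul (by linarith [hz.1, hw.2]) h2 h2nonneg (by linarith)
      have hmemcl : ((x, d) : ℝ × ℝ) ∈ cl := by
        have h1 : ({x} : Set ℝ) ×ˢ Ioo c d ⊆ S := by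
          rintro ⟨x', z'⟩ ⟨hx', hz'⟩
          rw [mem_singleton_iff] at hx'
          subst hx'
          exact hmemS _ hz'
        have h2 := closure_mono h1
        rw [closure_prod_eq, closure_Ioo hcd.ne] at h2
        exact h2 ⟨subset_closure rfl, right_mem_Icc.mpr hcd.le⟩
      have hlimθx : Tendsto (fun w => θ (x, w)) (𝓝[<] d) (𝓝 (θ (x, d))) := by
        have h1 : Tendsto (fun w : ℝ => ((x : ℝ), w)) (𝓝[<] d) (𝓝[cl] ((x, d) : ℝ × ℝ)) := by
          apply tendsto_nhdsWithin_of_tendsto_nhds_of_eventually_within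
          · exact (hcont_slice.tendsto d).mono_left nhdsWithin_le_nhds
          · filter_upwards [Ioo_mem_nhdsLT_of_mem (show d ∈ Ioc c d from ⟨hcd, le_refl d⟩)]
              with w hw using hSsub (hmemS w hw)
        exact ((hθc _ hmemcl).tendsto).comp h1
      have hlimsq : Tendsto (fun w => (θ (x, w) - θ (x, z)) ^ 2) (𝓝[<] d)
          (𝓝 ((θ (x, d) - θ (x, z)) ^ 2)) :=
        (hlimθx.sub tendsto_const_nhds).pow 2
      have hev : ∀ᶠ w in 𝓝[<] d, (θ (x, w) - θ (x, z)) ^ 2 ≤ (d - c) * A := by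
        filter_upwards [Ico_mem_nhdsLT_of_mem (show d ∈ Ioc z d from ⟨hz.2, le_refl d⟩)]
          with w hw using hcs w hw
      have hfin := le_of_tendsto hlimsq hev
      have hθd : θ (x, d) = 0 := hθ0 x hx
      rw [hθd] at hfin
      calc θ (x, z) ^ 2 = (0 - θ (x, z)) ^ 2 := by ring
        _ ≤ (d - c) * A := hfin
    have hθxint : IntegrableOn (fun z => θ (x, z) ^ 2) (Ioo c d) := by
      have hθxc : ContinuousOn (fun z => θ (x, z)) (Ioo c d) :=
        hθc.comp hcont_slice.continuousOn (fun z hz => hSsub (hmemS z hz))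
      refine ⟨(hθxc.pow 2).aestronglyMeasurable measurableSet_Ioo, ?_⟩
      apply HasFiniteIntegral.restrict_of_bounded (C := Cθ ^ 2) hIoofin
      rw [ae_restrict_iff' measurableSet_Ioo]
      refine ae_of_all _ fun z hz => ?_
      rw [Real.norm_eq_abs, abs_pow, ← Real.norm_eq_abs]
      exact pow_le_pow_left₀ (norm_nonneg _) (hCθ _ (hSsub (hmemS z hz))) 2
    have hconst : IntegrableOn (fun _ : ℝ => (d - c) * A) (Ioo c d) :=
      integrableOn_const hIoofin.ne
    have h5 : (∫ z in Ioo c d, θ (x, z) ^ 2) ≤ ∫ _z in Ioo c d, (d - c) * A :=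
      setIntegral_mono_on hθxint hconst measurableSet_Ioo ptw
    have h6 : (∫ _z in Ioo c d, (d - c) * A) = (d - c) * ((d - c) * A) := by
      rw [setIntegral_const, Real.volume_real_Ioo_of_le hcd.le, smul_eq_mul]
    have hdcM : d - c ≤ M := by
      have := hMle x hx
      linarith
    have h7 : (d - c) * (d - c) ≤ M * M :=
      mul_le_mul hdcM hdcM (by linarith) hMpos.le
    calc (∫ z in Ioo c d, θ (x, z) ^ 2) ≤ (d - c) * ((d - c) * A) := by rw [← h6]; exact h5
      _ = ((d - c) * (d - c)) * A := by ring
      _ ≤ (M * M) * A := mul_le_mul_of_nonneg_right h7 hA0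
      _ = M ^ 2 * A := by ring

  -- combine
  have main : (∫ p in S, θ p ^ 2) ≤ M ^ 2 * ∫ p in S, g p ^ 2 := by
    obtain ⟨eqθ, intθ⟩ := key _ hθ2i
    obtain ⟨eqg, intg⟩ := key _ hg2i
    rw [eqθ, eqg, ← integral_const_mul]
    apply integral_mono_of_nonneg
    · exact ae_of_all _ fun x => integral_nonneg fun z => sq_nonneg _
    · exact intg.const_mul _
    · filter_upwards [ae_restrict_mem measurableSet_Ioo] with x hx using fiber x hx
  -- finish
  have h1 : Real.sqrt (∫ p in S, θ p ^ 2) ≤ Real.sqrt (M ^ 2 * ∫ p in S, g p ^ 2) :=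
    Real.sqrt_le_sqrt main
  have h2 : Real.sqrt (M ^ 2 * ∫ p in S, g p ^ 2)
      = M * Real.sqrt (∫ p in S, g p ^ 2) := by
    rw [Real.sqrt_mul (sq_nonneg M), Real.sqrt_sq hMpos.le]
  have h3 : 0 ≤ Real.sqrt (∫ p in S, g p ^ 2) := Real.sqrt_nonneg _
  calc Real.sqrt (∫ p in S, θ p ^ 2) ≤ M * Real.sqrt (∫ p in S, g p ^ 2) := by
        rw [← h2]; exact h1
    _ ≤ 2 * M * Real.sqrt (∫ p in S, g p ^ 2) := by nlinarith
end

section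
/- Let H > 0, let I = (a,b) be a bounded open interval, and let v : [a,b] → ℝ be continuous with v(x) > -H for all x ∈ I. Then every function θ that is continuously differentiable on the closure of O_I(v) and satisfies θ(x, v(x)) = 0 for all x ∈ I obeys the trace estimate ∫_I |θ(x, -H)|² dx ≤ 2 ‖θ‖_{L²(O_I(v))} ‖∂_z θ‖_{L²(O_I(v))}. -/
open MeasureTheory Set

/-- Trace estimate on the bottom boundary for functions that are `C¹` on the closure
of `O_I(v)` and vanish on the graph of `v`:
`∫_I |θ(x,-H)|² dx ≤ 2 ‖θ‖_{L²(O_I(v))} ‖∂_z θ‖_{L²(O_I(v))}`. -/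
theorem stmt_4 (H a b : ℝ) (hH : 0 < H) (hab : a < b) (v : ℝ → ℝ)
    (hv : ContinuousOn v (Icc a b)) (hvH : ∀ x ∈ Ioo a b, -H < v x)
    (θ : ℝ × ℝ → ℝ)
    (hθ : ContDiffOn ℝ 1 θ (closure (OIv H a b v)))
    (hθ0 : ∀ x ∈ Ioo a b, θ (x, v x) = 0) :
    ∫ x in Ioo a b, (θ (x, -H)) ^ 2 ≤
      2 * Real.sqrt (∫ p in OIv H a b v, (θ p) ^ 2)
        * Real.sqrt (∫ p in OIv H a b v, (deriv (fun z => θ (p.1, z)) p.2) ^ 2) := by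
  set S : Set (ℝ × ℝ) := OIv H a b v with hS_def
  set K : Set (ℝ × ℝ) := closure S with hK_def
  -- `S` is open
  have hSopen : IsOpen S := by
    rw [isOpen_iff_mem_nhds]
    rintro ⟨x, z⟩ ⟨hx, hz1, hz2⟩
    have hvx : ContinuousAt v x :=
      (hv x (Ioo_subset_Icc_self hx)).continuousAt (Icc_mem_nhds hx.1 hx.2)
    have hcont : ContinuousAt (fun q : ℝ × ℝ => v q.1 - q.2) (x, z) :=
      (hvx.comp continuousAt_fst).sub continuousAt_snd
    have h3 : ∀ᶠ q : ℝ × ℝ in nhds (x, z), 0 < v q.1 - q.2 :=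
      hcont.eventually_mem (Ioi_mem_nhds (by simp only; linarith))
    have h1 : ∀ᶠ q : ℝ × ℝ in nhds (x, z), q.1 ∈ Ioo a b :=
      continuousAt_fst.eventually_mem (isOpen_Ioo.mem_nhds hx)
    have h2 : ∀ᶠ q : ℝ × ℝ in nhds (x, z), -H < q.2 :=
      continuousAt_snd.eventually_mem (isOpen_Ioi.mem_nhds hz1)
    filter_upwards [h1, h2, h3] with q hq1 hq2 hq3
    exact ⟨hq1, hq2, by linarith⟩
  have hSmeas : MeasurableSet S := hSopen.measurableSet
  -- boundedness of the region
  obtain ⟨M, hM⟩ : ∃ M, ∀ x ∈ Icc a b, v x ≤ M := by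
    obtain ⟨C, hC⟩ := (isCompact_Icc.image_of_continuousOn hv).bddAbove
    exact ⟨C, fun x hx => hC ⟨x, hx, rfl⟩⟩
  have hSK0 : S ⊆ Icc a b ×ˢ Icc (-H) M := by
    rintro ⟨x, z⟩ ⟨hx, hz1, hz2⟩
    exact ⟨Ioo_subset_Icc_self hx, hz1.le, hz2.le.trans (hM x (Ioo_subset_Icc_self hx))⟩
  have hK0comp : IsCompact (Icc a b ×ˢ Icc (-H) M : Set (ℝ × ℝ)) :=
    isCompact_Icc.prod isCompact_Icc
  have hKsub : K ⊆ Icc a b ×ˢ Icc (-H) M := closure_minimal hSK0 hK0comp.isClosed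
  have hKcomp : IsCompact K := hK0comp.of_isClosed_subset isClosed_closure hKsub
  have hSvol : volume S < ⊤ :=
    lt_of_le_of_lt (measure_mono hSK0) hK0comp.measure_lt_top
  haveI : IsFiniteMeasure (volume.restrict S) :=
    ⟨by rw [Measure.restrict_apply_univ]; exact hSvol⟩
  -- continuity and bound for θ
  have hθc : ContinuousOn θ K := hθ.continuousOn
  have hθcS : ContinuousOn θ S := hθc.mono subset_closure
  obtain ⟨Cθ, hCθ⟩ := hKcomp.exists_bound_of_continuousOn hθc
  -- nonemptiness and nonnegativity of the bound
  have hSne : S.Nonempty := by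
    obtain ⟨x, hx⟩ := nonempty_Ioo.2 hab
    have hx' := hvH x hx
    refine ⟨(x, (-H + v x) / 2), hx, ?_, ?_⟩ <;> simp only <;> linarith
  have hCθ0 : 0 ≤ Cθ := by
    obtain ⟨p, hp⟩ := hSne
    exact (norm_nonneg _).trans (hCθ p (subset_closure hp))
  -- differentiability on S
  have hdiff : ∀ p ∈ S, HasFDerivAt θ (fderiv ℝ θ p) p := by
    intro p hp
    have h1 : DifferentiableOn ℝ θ K := hθ.differentiableOn one_ne_zero
    have h2 : K ∈ nhds p := mem_nhds_iff.2 ⟨S, subset_closure, hSopen, hp⟩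
    exact ((h1 p (subset_closure hp)).differentiableAt h2).hasFDerivAt
  set g : ℝ × ℝ → ℝ := fun p => fderiv ℝ θ p (0, 1) with hg_def
  have hgS : ∀ p ∈ S, HasDerivAt (fun z => θ (p.1, z)) (g p) p.2 := by
    intro p hp
    have hcurve : HasDerivAt (fun z : ℝ => (p.1, z)) ((0 : ℝ), (1 : ℝ)) p.2 :=
      (hasDerivAt_const p.2 p.1).prodMk (hasDerivAt_id p.2)
    have h := (hdiff p hp).comp_hasDerivAt p.2 hcurve
    exact h
  have hg_eq : ∀ p ∈ S, deriv (fun z => θ (p.1, z)) p.2 = g p := fun p hp => (hgS p hp).deriv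
  -- continuity of g on S
  have hgc : ContinuousOn g S := by
    have h1 : ContinuousOn (fderiv ℝ θ) S :=
      (hθ.mono subset_closure).continuousOn_fderiv_of_isOpen hSopen le_rfl
    exact h1.clm_apply continuousOn_const
  -- bound for the derivative via a compactness argument
  obtain ⟨Cg, hCg0, hCg⟩ : ∃ C, 0 ≤ C ∧ ∀ p ∈ S, |g p| ≤ C := by
    have key : ∀ p ∈ K, ∃ U ∈ nhds p, ∃ C : ℝ, ∀ q ∈ S ∩ U, ‖fderiv ℝ θ q‖ ≤ C := by
      intro p hp
      have hp' : ContDiffWithinAt ℝ (0 + 1) θ K p := by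
        have := hθ p hp
        norm_num at this ⊢
        exact this
      rcases (contDiffWithinAt_succ_iff_hasFDerivWithinAt (by simp)).1 hp' with
        ⟨u, hu, -, f', hf'd, hf'c⟩
      rw [insert_eq_of_mem hp] at hu
      rcases mem_nhdsWithin.1 hu with ⟨w, hwopen, hpw, hwu⟩
      have hpu : p ∈ u := hwu ⟨hpw, hp⟩
      have hc : ContinuousWithinAt f' u p := hf'c.continuousWithinAt
      have hev : ∀ᶠ q in nhdsWithin p u, ‖f' q‖ < ‖f' p‖ + 1 := by
        have h := hc (Metric.ball_mem_nhds (f' p) one_pos)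
        filter_upwards [h] with q hq
        have h2 : ‖f' q - f' p‖ < 1 := mem_ball_iff_norm.1 hq
        calc ‖f' q‖ = ‖f' q - f' p + f' p‖ := by rw [sub_add_cancel]
          _ ≤ ‖f' q - f' p‖ + ‖f' p‖ := norm_add_le _ _
          _ < ‖f' p‖ + 1 := by linarith
      rcases eventually_nhdsWithin_iff.1 hev with hev'
      rcases eventually_nhds_iff.1 hev' with ⟨t, ht, htopen, hpt⟩
      refine ⟨w ∩ t, Filter.inter_mem (hwopen.mem_nhds hpw) (htopen.mem_nhds hpt),
        ‖f' p‖ + 1, ?_⟩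
      rintro q ⟨hqS, hqw, hqt⟩
      have hqu : q ∈ u := hwu ⟨hqw, subset_closure hqS⟩
      have hfd : HasFDerivWithinAt θ (f' q) u q := hf'd q hqu
      have hopen : IsOpen (S ∩ w) := hSopen.inter hwopen
      have hsub : S ∩ w ⊆ u := fun r hr => hwu ⟨hr.2, subset_closure hr.1⟩
      have hatq : HasFDerivAt θ (f' q) q :=
        (hfd.mono hsub).hasFDerivAt (hopen.mem_nhds ⟨hqS, hqw⟩)
      rw [hatq.fderiv]
      exact (ht q hqt hqu).le
    choose U hU C hC using key
    rcases hKcomp.elim_nhds_subcover' (fun p hp => U p hp) (fun p hp => hU p hp) with ⟨t, ht⟩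
    classical
    set Cf : ℝ := (insert (0 : ℝ) (t.image fun x => C x.1 x.2)).max' (by simp) with hCf_def
    have hCf0 : (0 : ℝ) ≤ Cf := Finset.le_max' _ _ (Finset.mem_insert_self _ _)
    have hCf : ∀ q ∈ S, ‖fderiv ℝ θ q‖ ≤ Cf := by
      intro q hq
      have hqK : q ∈ K := subset_closure hq
      rcases mem_iUnion₂.1 (ht hqK) with ⟨x, hx, hqU⟩
      refine (hC x.1 x.2 q ⟨hq, hqU⟩).trans ?_
      exact Finset.le_max' _ (C x.1 x.2)
        (Finset.mem_insert_of_mem (Finset.mem_image_of_mem (fun x => C x.1 x.2) hx))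
    refine ⟨Cf * ‖((0 : ℝ), (1 : ℝ))‖, by positivity, fun p hp => ?_⟩
    calc |g p| = ‖fderiv ℝ θ p (0, 1)‖ := (Real.norm_eq_abs _).symm
      _ ≤ ‖fderiv ℝ θ p‖ * ‖((0 : ℝ), (1 : ℝ))‖ := (fderiv ℝ θ p).le_opNorm _
      _ ≤ Cf * ‖((0 : ℝ), (1 : ℝ))‖ := by
          have := hCf p hp
          gcongr
  -- membership of the closed vertical segments in K
  have hseg : ∀ x ∈ Ioo a b, ∀ z ∈ Icc (-H) (v x), (x, z) ∈ K := by
    intro x hx z hz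
    have hcd : -H < v x := hvH x hx
    have hz' : z ∈ closure (Ioo (-H) (v x)) := by rw [closure_Ioo hcd.ne]; exact hz
    exact map_mem_closure (continuous_const.prodMk continuous_id) hz'
      (fun w hw => ⟨hx, hw.1, hw.2⟩)
  -- the integrand for Cauchy-Schwarz
  set Φ : ℝ × ℝ → ℝ := fun p => 2 * (|θ p| * |g p|) with hΦ_def
  have hΦc : ContinuousOn Φ S := continuousOn_const.mul (hθcS.abs.mul hgc.abs)
  have hΦb : ∀ p ∈ S, |Φ p| ≤ 2 * (Cθ * Cg) := by
    intro p hp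
    have h1 : |θ p| ≤ Cθ := by
      have := hCθ p (subset_closure hp); rwa [Real.norm_eq_abs] at this
    have h2 : |g p| ≤ Cg := hCg p hp
    have habs : |Φ p| = 2 * (|θ p| * |g p|) := abs_of_nonneg (by positivity)
    rw [habs]
    gcongr
  have hΦint : IntegrableOn Φ S := by
    refine ⟨hΦc.aestronglyMeasurable hSmeas, ?_⟩
    refine HasFiniteIntegral.restrict_of_bounded (C := 2 * (Cθ * Cg)) hSvol ?_
    exact (ae_restrict_iff' hSmeas).2 (Filter.Eventually.of_forall fun p hp => hΦb p hp)
  -- per-slice estimate via FTC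
  have hslice_bound : ∀ x ∈ Ioo a b,
      θ (x, -H) ^ 2 ≤ ∫ z in Ioo (-H) (v x), Φ (x, z) := by
    intro x hx
    have hcd : -H < v x := hvH x hx
    have hmx : Continuous (fun z : ℝ => ((x : ℝ), z)) := continuous_const.prodMk continuous_id
    have hmaps : ∀ z ∈ Ioo (-H) (v x), ((x : ℝ), z) ∈ S := fun z hz => ⟨hx, hz.1, hz.2⟩
    have hfc : ContinuousOn (fun z => θ (x, z)) (Icc (-H) (v x)) :=
      hθc.comp hmx.continuousOn (fun z hz => hseg x hx z hz)
    have hF2c : ContinuousOn (fun z => θ (x, z) ^ 2) (Icc (-H) (v x)) := hfc.pow 2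
    have hDc : ContinuousOn (fun z => 2 * θ (x, z) * g (x, z)) (Ioo (-H) (v x)) := by
      have h1 : ContinuousOn (fun z => θ (x, z)) (Ioo (-H) (v x)) :=
        hθcS.comp hmx.continuousOn hmaps
      have h2 : ContinuousOn (fun z => g (x, z)) (Ioo (-H) (v x)) :=
        hgc.comp hmx.continuousOn hmaps
      exact (continuousOn_const.mul h1).mul h2
    have hDb : ∀ z ∈ Ioo (-H) (v x), ‖2 * θ (x, z) * g (x, z)‖ ≤ 2 * Cθ * Cg := by
      intro z hz
      have h1 : |θ (x, z)| ≤ Cθ := by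
        have := hCθ (x, z) (subset_closure (hmaps z hz)); rwa [Real.norm_eq_abs] at this
      have h2 : |g (x, z)| ≤ Cg := hCg _ (hmaps z hz)
      rw [Real.norm_eq_abs, abs_mul, abs_mul, abs_two]
      gcongr
    have hDint : IntegrableOn (fun z => 2 * θ (x, z) * g (x, z)) (Ioo (-H) (v x)) := by
      refine ⟨hDc.aestronglyMeasurable measurableSet_Ioo, ?_⟩
      refine HasFiniteIntegral.restrict_of_bounded (C := 2 * Cθ * Cg) measure_Ioo_lt_top ?_
      exact (ae_restrict_iff' measurableSet_Ioo).2 (Filter.Eventually.of_forall hDb)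
    have hDii : IntervalIntegrable (fun z => 2 * θ (x, z) * g (x, z)) volume (-H) (v x) := by
      rw [intervalIntegrable_iff_integrableOn_Ioo_of_le hcd.le]
      exact hDint
    have hderiv : ∀ z ∈ Ioo (-H) (v x),
        HasDerivWithinAt (fun z => θ (x, z) ^ 2) (2 * θ (x, z) * g (x, z)) (Ioi z) z := by
      intro z hz
      have h1 : HasDerivAt (fun z => θ (x, z)) (g (x, z)) z := hgS (x, z) (hmaps z hz)
      have h2 : HasDerivAt (fun z => θ (x, z) ^ 2) (2 * θ (x, z) * g (x, z)) z := by
        have h3 := h1.pow 2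
        norm_num at h3
        convert h3 using 1 <;> rfl
      exact h2.hasDerivWithinAt
    have hFTC := intervalIntegral.integral_eq_sub_of_hasDeriv_right_of_le hcd.le hF2c hderiv hDii
    have hkey : θ (x, -H) ^ 2 = ∫ z in (-H)..(v x), -(2 * θ (x, z) * g (x, z)) := by
      rw [intervalIntegral.integral_neg, hFTC]
      simp [hθ0 x hx]
    have hΦii : IntervalIntegrable (fun z => Φ (x, z)) volume (-H) (v x) := by
      rw [intervalIntegrable_iff_integrableOn_Ioo_of_le hcd.le]
      refine ⟨(hΦc.comp hmx.continuousOn hmaps).aestronglyMeasurable measurableSet_Ioo, ?_⟩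
      refine HasFiniteIntegral.restrict_of_bounded (C := 2 * (Cθ * Cg)) measure_Ioo_lt_top ?_
      exact (ae_restrict_iff' measurableSet_Ioo).2
        (Filter.Eventually.of_forall fun z hz => hΦb _ (hmaps z hz))
    have hmono : ∫ z in (-H)..(v x), -(2 * θ (x, z) * g (x, z)) ≤ ∫ z in (-H)..(v x), Φ (x, z) := by
      refine intervalIntegral.integral_mono_on hcd.le hDii.neg hΦii ?_
      intro z _
      have h1 : -(2 * θ (x, z) * g (x, z)) ≤ |2 * θ (x, z) * g (x, z)| := neg_le_abs _
      have h2 : |2 * θ (x, z) * g (x, z)| = Φ (x, z) := by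
        simp only [hΦ_def, abs_mul, abs_two]
        ring
      rw [← h2]
      exact h1
    rw [← hkey] at hmono
    calc θ (x, -H) ^ 2 ≤ ∫ z in (-H)..(v x), Φ (x, z) := hmono
      _ = ∫ z in Ioc (-H) (v x), Φ (x, z) := intervalIntegral.integral_of_le hcd.le
      _ = ∫ z in Ioo (-H) (v x), Φ (x, z) := integral_Ioc_eq_integral_Ioo
  -- Fubini for the region
  have hind : Integrable (S.indicator Φ) (volume : Measure (ℝ × ℝ)) :=
    (integrable_indicator_iff hSmeas).2 hΦint
  have hvol_prod : (volume : Measure (ℝ × ℝ)) = (volume : Measure ℝ).prod volume :=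
    Measure.volume_eq_prod ℝ ℝ
  have hind' : Integrable (S.indicator Φ) ((volume : Measure ℝ).prod volume) := by
    rwa [← hvol_prod]
  have hslice_eq : ∀ x : ℝ, (∫ z, S.indicator Φ (x, z)) =
      (Ioo a b).indicator (fun x' => ∫ z in Ioo (-H) (v x'), Φ (x', z)) x := by
    intro x
    by_cases hx : x ∈ Ioo a b
    · rw [indicator_of_mem hx, ← integral_indicator measurableSet_Ioo]
      congr 1
      funext z
      by_cases hz : z ∈ Ioo (-H) (v x)
      · rw [indicator_of_mem hz, indicator_of_mem (show ((x : ℝ), z) ∈ S from ⟨hx, hz.1, hz.2⟩)]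
      · rw [indicator_of_notMem hz,
          indicator_of_notMem (fun h : ((x : ℝ), z) ∈ S => hz ⟨h.2.1, h.2.2⟩)]
    · rw [indicator_of_notMem hx]
      have hzero : (fun z => S.indicator Φ (x, z)) = fun _ => (0 : ℝ) :=
        funext fun z => indicator_of_notMem (fun h : ((x : ℝ), z) ∈ S => hx h.1) _
      rw [hzero]
      exact integral_zero _ _
  have e1 : ∫ p in S, Φ p = ∫ x in Ioo a b, ∫ z in Ioo (-H) (v x), Φ (x, z) := by
    rw [← integral_indicator hSmeas, hvol_prod, MeasureTheory.integral_prod _ hind',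
      ← integral_indicator measurableSet_Ioo]
    congr 1
    funext x
    exact hslice_eq x
  have hmarg : IntegrableOn (fun x => ∫ z in Ioo (-H) (v x), Φ (x, z)) (Ioo a b) := by
    have h2 := hind'.integral_prod_left
    refine (integrable_indicator_iff measurableSet_Ioo).1 ?_
    have : (Ioo a b).indicator (fun x => ∫ z in Ioo (-H) (v x), Φ (x, z)) =
        fun x => ∫ z, S.indicator Φ (x, z) := funext fun x => (hslice_eq x).symm
    rw [this]
    exact h2
  -- integrability of the trace integrand
  have hφ2int : IntegrableOn (fun x => θ (x, -H) ^ 2) (Ioo a b) := by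
    have hc : ContinuousOn (fun x => θ (x, -H) ^ 2) (Ioo a b) := by
      have h1 : ContinuousOn (fun x : ℝ => θ (x, -H)) (Ioo a b) :=
        hθc.comp (continuous_id.prodMk continuous_const).continuousOn
          (fun x hx => hseg x hx (-H) ⟨le_rfl, (hvH x hx).le⟩)
      exact h1.pow 2
    refine ⟨hc.aestronglyMeasurable measurableSet_Ioo, ?_⟩
    refine HasFiniteIntegral.restrict_of_bounded (C := Cθ ^ 2) measure_Ioo_lt_top ?_
    refine (ae_restrict_iff' measurableSet_Ioo).2 (Filter.Eventually.of_forall fun x hx => ?_)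
    have h1 : ‖θ (x, -H)‖ ≤ Cθ := hCθ _ (hseg x hx (-H) ⟨le_rfl, (hvH x hx).le⟩)
    rw [Real.norm_eq_abs, abs_pow]
    rw [Real.norm_eq_abs] at h1
    gcongr
  -- Cauchy-Schwarz
  have hpq : Real.HolderConjugate 2 2 := Real.holderConjugate_iff.2 ⟨one_lt_two, by norm_num⟩
  have hmemθ : MemLp (fun p => |θ p|) (ENNReal.ofReal 2) (volume.restrict S) := by
    have hb : ∀ᵐ p ∂volume.restrict S, ‖|θ p|‖ ≤ Cθ := by
      refine (ae_restrict_iff' hSmeas).2 (Filter.Eventually.of_forall fun p hp => ?_)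
      have := hCθ p (subset_closure hp)
      rwa [Real.norm_eq_abs, abs_abs, ← Real.norm_eq_abs]
    have htop := memLp_top_of_bound (hθcS.abs.aestronglyMeasurable hSmeas) Cθ hb
    exact htop.mono_exponent le_top
  have hmemg : MemLp (fun p => |g p|) (ENNReal.ofReal 2) (volume.restrict S) := by
    have hb : ∀ᵐ p ∂volume.restrict S, ‖|g p|‖ ≤ Cg := by
      refine (ae_restrict_iff' hSmeas).2 (Filter.Eventually.of_forall fun p hp => ?_)
      rw [Real.norm_eq_abs, abs_abs]
      exact hCg p hp
    have htop := memLp_top_of_bound (hgc.abs.aestronglyMeasurable hSmeas) Cg hb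
    exact htop.mono_exponent le_top
  have hCS := MeasureTheory.integral_mul_le_Lp_mul_Lq_of_nonneg (μ := volume.restrict S) hpq
    (Filter.Eventually.of_forall fun p => abs_nonneg _)
    (Filter.Eventually.of_forall fun p => abs_nonneg _) hmemθ hmemg
  -- rewrite rpow as squares and sqrt
  have e2 : ∫ p in S, |θ p| ^ (2 : ℝ) = ∫ p in S, θ p ^ 2 := by
    congr 1
    funext p
    rw [show ((2 : ℝ)) = ((2 : ℕ) : ℝ) from by norm_num, Real.rpow_natCast, sq_abs]
  have e3 : ∫ p in S, |g p| ^ (2 : ℝ) = ∫ p in S, g p ^ 2 := by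
    congr 1
    funext p
    rw [show ((2 : ℝ)) = ((2 : ℕ) : ℝ) from by norm_num, Real.rpow_natCast, sq_abs]
  rw [e2, e3] at hCS
  have hsqθ : (∫ p in S, θ p ^ 2) ^ ((1 : ℝ) / 2) = Real.sqrt (∫ p in S, θ p ^ 2) :=
    (Real.sqrt_eq_rpow _).symm
  have hsqg : (∫ p in S, g p ^ 2) ^ ((1 : ℝ) / 2) = Real.sqrt (∫ p in S, g p ^ 2) :=
    (Real.sqrt_eq_rpow _).symm
  rw [hsqθ, hsqg] at hCS
  -- replace deriv by g in the goal
  have e4 : ∫ p in S, (deriv (fun z => θ (p.1, z)) p.2) ^ 2 = ∫ p in S, g p ^ 2 :=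
    setIntegral_congr_fun hSmeas (fun p hp => by rw [hg_eq p hp])
  rw [e4]
  -- put everything together
  calc ∫ x in Ioo a b, θ (x, -H) ^ 2
      ≤ ∫ x in Ioo a b, ∫ z in Ioo (-H) (v x), Φ (x, z) :=
        setIntegral_mono_on hφ2int hmarg measurableSet_Ioo hslice_bound
    _ = ∫ p in S, Φ p := e1.symm
    _ = 2 * ∫ p in S, |θ p| * |g p| := by
        simp only [hΦ_def]
        exact integral_const_mul 2 _
    _ ≤ 2 * (Real.sqrt (∫ p in S, θ p ^ 2) * Real.sqrt (∫ p in S, g p ^ 2)) := by linarith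
    _ = 2 * Real.sqrt (∫ p in S, θ p ^ 2) * Real.sqrt (∫ p in S, g p ^ 2) := by ring
end

section
/- Let I = (a,b) be a bounded open interval, let μ ∈ C²([a,b]), and let φ be twice continuously differentiable on [a,b] × [0,1] with: φ(a,η) = φ(b,η) = 0 for η ∈ (0,1); φ(x,1) = 0 for x ∈ I; and -∂_η φ(x,0) + μ(x) φ(x,0) = 0 for x ∈ I. Then ∫_{R_I} ∂_x²φ ∂_η²φ d(x,η) = ∫_{R_I} |∂_x ∂_η φ|² d(x,η) + ∫_I ∂_x φ(x,0) · (d/dx)[μ(x) φ(x,0)] dx. -/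
open MeasureTheory Set

open Filter Convolution Topology

noncomputable def pd (v : ℝ × ℝ) (Ψ : ℝ × ℝ → ℝ) : ℝ × ℝ → ℝ := fun p => fderiv ℝ Ψ p v

notation "e1" => ((1:ℝ), (0:ℝ))
notation "e2" => ((0:ℝ), (1:ℝ))

lemma pd_apply (v : ℝ × ℝ) (Ψ : ℝ × ℝ → ℝ) (p w : ℝ × ℝ) :
    pd w (pd v Ψ) p = fderiv ℝ (pd v Ψ) p w := rfl

lemma pd_contDiff {n : ℕ∞} (v : ℝ × ℝ) {Ψ : ℝ × ℝ → ℝ} (hΨ : ContDiff ℝ (n + 1) Ψ) :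
    ContDiff ℝ n (pd v Ψ) :=
  ((hΨ.fderiv_right (le_refl _)).clm_apply contDiff_const)

lemma contDiff_top_succ {Ψ : ℝ × ℝ → ℝ} (hΨ : ContDiff ℝ (⊤:ℕ∞) Ψ) :
    ContDiff ℝ ((⊤:ℕ∞) + 1) Ψ := by
  convert hΨ using 2
  rfl

lemma pd_contDiff_top (v : ℝ × ℝ) {Ψ : ℝ × ℝ → ℝ} (hΨ : ContDiff ℝ (⊤:ℕ∞) Ψ) :
    ContDiff ℝ (⊤:ℕ∞) (pd v Ψ) := pd_contDiff v (contDiff_top_succ hΨ)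

lemma contDiff_top_diff {Ψ : ℝ × ℝ → ℝ} (hΨ : ContDiff ℝ (⊤:ℕ∞) Ψ) :
    Differentiable ℝ Ψ := hΨ.differentiable (by simp)

lemma contDiff_top_fderiv_diff {Ψ : ℝ × ℝ → ℝ} (hΨ : ContDiff ℝ (⊤:ℕ∞) Ψ) :
    Differentiable ℝ (fderiv ℝ Ψ) :=
  (hΨ.fderiv_right (m := (⊤:ℕ∞)) (by exact_mod_cast le_top)).differentiable
    (by simp)

lemma pd_eval {Ψ : ℝ × ℝ → ℝ} {p : ℝ × ℝ} (hΨ : DifferentiableAt ℝ (fderiv ℝ Ψ) p)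
    (v w : ℝ × ℝ) : fderiv ℝ (pd v Ψ) p w = fderiv ℝ (fderiv ℝ Ψ) p w v := by
  have : fderiv ℝ (pd v Ψ) p
      = (fderiv ℝ Ψ p).comp (fderiv ℝ (fun _ : ℝ × ℝ => v) p)
        + (fderiv ℝ (fderiv ℝ Ψ) p).flip v := by
    show fderiv ℝ (fun y => fderiv ℝ Ψ y v) p = _
    simpa [pd] using fderiv_clm_apply (c := fderiv ℝ Ψ) (u := fun _ => v) hΨ
      (differentiableAt_const v)
  simp [this]

lemma pd_symm {Ψ : ℝ × ℝ → ℝ} (hΨ : ContDiff ℝ (⊤:ℕ∞) Ψ) (p : ℝ × ℝ) (v w : ℝ × ℝ) :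
    pd w (pd v Ψ) p = pd v (pd w Ψ) p := by
  have hd2 := contDiff_top_fderiv_diff hΨ
  have hH := second_derivative_symmetric (f := Ψ) (f' := fderiv ℝ Ψ)
    (f'' := fderiv ℝ (fderiv ℝ Ψ) p)
    (fun y => (contDiff_top_diff hΨ y).hasFDerivAt) (hd2 p).hasFDerivAt
  rw [pd_apply, pd_apply, pd_eval (hd2 p), pd_eval (hd2 p)]
  exact hH w v

/-- pointwise divergence computation for a smooth function -/
lemma div_eq {Ψ : ℝ × ℝ → ℝ} (hΨ : ContDiff ℝ (⊤:ℕ∞) Ψ) (p : ℝ × ℝ) :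
    fderiv ℝ (fun q => pd e1 Ψ q * pd e2 (pd e2 Ψ) q) p e1
      + fderiv ℝ (fun q => -(pd e1 Ψ q * pd e1 (pd e2 Ψ) q)) p e2
    = pd e1 (pd e1 Ψ) p * pd e2 (pd e2 Ψ) p - pd e1 (pd e2 Ψ) p ^ 2 := by
  have h1 : ∀ v, ContDiff ℝ (⊤:ℕ∞) (pd v Ψ) := fun v => pd_contDiff_top v hΨ
  have h2 : ∀ v w, ContDiff ℝ (⊤:ℕ∞) (pd w (pd v Ψ)) := fun v w =>
    pd_contDiff_top w (h1 v)
  have d1 : ∀ v, DifferentiableAt ℝ (pd v Ψ) p := fun v => (contDiff_top_diff (h1 v)) p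
  have d2 : ∀ v w, DifferentiableAt ℝ (pd w (pd v Ψ)) p := fun v w =>
    (contDiff_top_diff (h2 v w)) p
  have hmul1 : fderiv ℝ (fun q => pd e1 Ψ q * pd e2 (pd e2 Ψ) q) p e1
      = pd e1 Ψ p * pd e1 (pd e2 (pd e2 Ψ)) p
        + pd e2 (pd e2 Ψ) p * pd e1 (pd e1 Ψ) p := by
    rw [fderiv_fun_mul (d1 e1) (d2 e2 e2)]
    simp [pd_apply]
  have hmul2 : fderiv ℝ (fun q => -(pd e1 Ψ q * pd e1 (pd e2 Ψ) q)) p e2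
      = -(pd e1 Ψ p * pd e2 (pd e1 (pd e2 Ψ)) p
        + pd e1 (pd e2 Ψ) p * pd e2 (pd e1 Ψ) p) := by
    rw [fderiv_fun_neg, fderiv_fun_mul (d1 e1) (d2 e2 e1)]
    simp [pd_apply]
  rw [hmul1, hmul2]
  have hs1 : pd e2 (pd e1 Ψ) p = pd e1 (pd e2 Ψ) p := pd_symm hΨ p e1 e2
  have hs2 : pd e2 (pd e1 (pd e2 Ψ)) p = pd e1 (pd e2 (pd e2 Ψ)) p :=
    pd_symm (h1 e2) p e1 e2
  rw [hs1, hs2]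
  ring

lemma pd_C1 (v : ℝ × ℝ) {Ψ : ℝ × ℝ → ℝ} (hΨ : ContDiff ℝ 2 Ψ) :
    ContDiff ℝ 1 (pd v Ψ) :=
  (hΨ.fderiv_right (m := 1) (by norm_num)).clm_apply contDiff_const

lemma pd_cont (v : ℝ × ℝ) {Ψ : ℝ × ℝ → ℝ} (hΨ : ContDiff ℝ 1 Ψ) :
    Continuous (pd v Ψ) :=
  (hΨ.continuous_fderiv one_ne_zero).clm_apply continuous_const

lemma pd_compactSupport (v : ℝ × ℝ) {Ψ : ℝ × ℝ → ℝ} (hc : HasCompactSupport Ψ) :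
    HasCompactSupport (pd v Ψ) :=
  (hc.fderiv ℝ).comp_left (g := fun L : (ℝ × ℝ) →L[ℝ] ℝ => L v) rfl

/-- mollifier sequence -/
noncomputable def bseq (n : ℕ) : ContDiffBump (0 : ℝ × ℝ) :=
  ⟨((n:ℝ)+1)⁻¹/2, ((n:ℝ)+1)⁻¹, by positivity, half_lt_self (by positivity)⟩

lemma bseq_rOut_tendsto : Tendsto (fun n => (bseq n).rOut) atTop (𝓝 0) := by
  have : Tendsto (fun n : ℕ => 1/((n:ℝ)+1)) atTop (𝓝 0) :=
    tendsto_one_div_add_atTop_nhds_zero_nat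
  simpa [bseq, one_div] using this

lemma conv_pd (k : ContDiffBump (0 : ℝ × ℝ)) {Ψ : ℝ × ℝ → ℝ} (hΨ : ContDiff ℝ 1 Ψ)
    (hc : HasCompactSupport Ψ) (v p) :
    pd v (k.normed volume ⋆[ContinuousLinearMap.lsmul ℝ ℝ, volume] Ψ) p
      = (k.normed volume ⋆[ContinuousLinearMap.lsmul ℝ ℝ, volume] pd v Ψ) p := by
  have h := hc.hasFDerivAt_convolution_right (ContinuousLinearMap.lsmul ℝ ℝ)
    ((k.continuous_normed (μ := volume)).locallyIntegrable (μ := volume)) hΨ p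
  show fderiv ℝ _ p v = _
  rw [h.fderiv]
  exact convolution_precompR_apply _ (k.continuous_normed.locallyIntegrable)
    (hc.fderiv ℝ) (hΨ.continuous_fderiv one_ne_zero) p v

lemma conv_smooth (k : ContDiffBump (0 : ℝ × ℝ)) {Ψ : ℝ × ℝ → ℝ} (hΨ : Continuous Ψ) :
    ContDiff ℝ (⊤:ℕ∞) (k.normed volume ⋆[ContinuousLinearMap.lsmul ℝ ℝ, volume] Ψ) :=
  HasCompactSupport.contDiff_convolution_left _ k.hasCompactSupport_normed
    k.contDiff_normed hΨ.locallyIntegrable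

lemma conv_cont (k : ContDiffBump (0 : ℝ × ℝ)) {h : ℝ × ℝ → ℝ} (hh : Continuous h)
    (hc : HasCompactSupport h) :
    Continuous (k.normed volume ⋆[ContinuousLinearMap.lsmul ℝ ℝ, volume] h) :=
  hc.continuous_convolution_right _ (k.continuous_normed.locallyIntegrable) hh

lemma conv_bound (k : ContDiffBump (0 : ℝ × ℝ)) {h : ℝ × ℝ → ℝ} (hh : Continuous h)
    {M : ℝ} (hM : ∀ x, |h x| ≤ M) (p : ℝ × ℝ) :
    |(k.normed volume ⋆[ContinuousLinearMap.lsmul ℝ ℝ, volume] h) p| ≤ 3 * M := by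
  have h1 : dist ((k.normed volume ⋆[ContinuousLinearMap.lsmul ℝ ℝ, volume] h) p) (h p)
      ≤ 2 * M := by
    apply k.dist_normed_convolution_le hh.aestronglyMeasurable
    intro x _
    calc dist (h x) (h p) ≤ ‖h x‖ + ‖h p‖ := dist_le_norm_add_norm _ _
    _ ≤ 2 * M := by
      rw [Real.norm_eq_abs, Real.norm_eq_abs]; linarith [hM x, hM p]
  have := abs_sub_abs_le_abs_sub ((k.normed volume ⋆[ContinuousLinearMap.lsmul ℝ ℝ, volume] h) p)
    (h p)
  rw [Real.dist_eq] at h1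
  linarith [hM p]

lemma conv_tendsto {h : ℝ × ℝ → ℝ} (hh : Continuous h) (p : ℝ × ℝ) :
    Tendsto (fun n => ((bseq n).normed volume
      ⋆[ContinuousLinearMap.lsmul ℝ ℝ, volume] h) p) atTop (𝓝 (h p)) :=
  ContDiffBump.convolution_tendsto_right_of_continuous bseq_rOut_tendsto hh p

lemma dct_const_bound {α : Type*} [MeasurableSpace α] {μ : Measure α} {s : Set α}
    (hs : MeasurableSet s) (hμ : μ s ≠ ⊤) {F : ℕ → α → ℝ} {f : α → ℝ} {C : ℝ}
    (hmeas : ∀ n, AEStronglyMeasurable (F n) (μ.restrict s))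
    (hb : ∀ n x, |F n x| ≤ C)
    (hlim : ∀ x, Tendsto (fun n => F n x) atTop (𝓝 (f x))) :
    Tendsto (fun n => ∫ x in s, F n x ∂μ) atTop (𝓝 (∫ x in s, f x ∂μ)) := by
  apply tendsto_integral_of_dominated_convergence (fun _ => C) hmeas
  · rw [integrable_const_iff]
    right
    exact isFiniteMeasure_restrict.2 hμ
  · exact fun n => ae_of_all _ fun x => by
      rw [Real.norm_eq_abs]; exact hb n x
  · exact ae_of_all _ fun x => hlim x

theorem key_smooth {Ψ : ℝ × ℝ → ℝ} (hΨ : ContDiff ℝ (⊤:ℕ∞) Ψ) (A B : ℝ × ℝ) (hAB : A ≤ B) :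
    ∫ p in Icc A B, (pd e1 (pd e1 Ψ) p * pd e2 (pd e2 Ψ) p - pd e1 (pd e2 Ψ) p ^ 2)
    = (((∫ x in A.1..B.1, -(pd e1 Ψ (x, B.2) * pd e1 (pd e2 Ψ) (x, B.2)))
        - ∫ x in A.1..B.1, -(pd e1 Ψ (x, A.2) * pd e1 (pd e2 Ψ) (x, A.2)))
       + ∫ y in A.2..B.2, pd e1 Ψ (B.1, y) * pd e2 (pd e2 Ψ) (B.1, y))
      - ∫ y in A.2..B.2, pd e1 Ψ (A.1, y) * pd e2 (pd e2 Ψ) (A.1, y) := by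
  have h1 : ∀ v, ContDiff ℝ (⊤:ℕ∞) (pd v Ψ) := fun v => pd_contDiff_top v hΨ
  have h2 : ∀ v w, ContDiff ℝ (⊤:ℕ∞) (pd w (pd v Ψ)) := fun v w => pd_contDiff_top w (h1 v)
  set f : ℝ × ℝ → ℝ := fun p => pd e1 Ψ p * pd e2 (pd e2 Ψ) p with hf
  set g : ℝ × ℝ → ℝ := fun p => -(pd e1 Ψ p * pd e1 (pd e2 Ψ) p) with hg
  have hdf : Differentiable ℝ f :=
    (contDiff_top_diff (h1 e1)).mul (contDiff_top_diff (h2 e2 e2))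
  have hdg : Differentiable ℝ g :=
    ((contDiff_top_diff (h1 e1)).mul (contDiff_top_diff (h2 e2 e1))).neg
  have hfun : (fun x => fderiv ℝ f x e1 + fderiv ℝ g x e2)
      = fun p => pd e1 (pd e1 Ψ) p * pd e2 (pd e2 Ψ) p - pd e1 (pd e2 Ψ) p ^ 2 :=
    funext (div_eq hΨ)
  have hcont : Continuous fun p =>
      pd e1 (pd e1 Ψ) p * pd e2 (pd e2 Ψ) p - pd e1 (pd e2 Ψ) p ^ 2 := by
    exact ((h2 e1 e1).continuous.mul (h2 e2 e2).continuous).sub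
      (((h2 e2 e1).continuous).pow 2)
  have Hi : IntegrableOn (fun x => fderiv ℝ f x e1 + fderiv ℝ g x e2) (Icc A B) := by
    rw [hfun]
    exact hcont.continuousOn.integrableOn_compact isCompact_Icc
  have key := integral_divergence_prod_Icc_of_hasFDerivAt_off_countable_of_le f g
    (fun p => fderiv ℝ f p) (fun p => fderiv ℝ g p) A B hAB ∅ countable_empty
    hdf.continuous.continuousOn hdg.continuous.continuousOn
    (fun x _ => (hdf x).hasFDerivAt) (fun x _ => (hdg x).hasFDerivAt) Hi
  rw [hfun] at key
  exact key

theorem key_C2 {Ψ : ℝ × ℝ → ℝ} (hΨ : ContDiff ℝ 2 Ψ) (hc : HasCompactSupport Ψ)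
    (A B : ℝ × ℝ) (hAB : A ≤ B) :
    ∫ p in Icc A B, (pd e1 (pd e1 Ψ) p * pd e2 (pd e2 Ψ) p - pd e1 (pd e2 Ψ) p ^ 2)
    = (((∫ x in Ioc A.1 B.1, -(pd e1 Ψ (x, B.2) * pd e1 (pd e2 Ψ) (x, B.2)))
        - ∫ x in Ioc A.1 B.1, -(pd e1 Ψ (x, A.2) * pd e1 (pd e2 Ψ) (x, A.2)))
       + ∫ y in Ioc A.2 B.2, pd e1 Ψ (B.1, y) * pd e2 (pd e2 Ψ) (B.1, y))
      - ∫ y in Ioc A.2 B.2, pd e1 Ψ (A.1, y) * pd e2 (pd e2 Ψ) (A.1, y) := by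
  have hΨ1 : ContDiff ℝ 1 Ψ := hΨ.of_le one_le_two
  have hP0C1 : ContDiff ℝ 1 (pd e2 Ψ) := pd_C1 e2 hΨ
  have hP1C1 : ContDiff ℝ 1 (pd e1 Ψ) := pd_C1 e1 hΨ
  have hP1c : Continuous (pd e1 Ψ) := hP1C1.continuous
  have hP2c : Continuous (pd e1 (pd e1 Ψ)) := pd_cont e1 hP1C1
  have hP3c : Continuous (pd e1 (pd e2 Ψ)) := pd_cont e1 hP0C1
  have hP4c : Continuous (pd e2 (pd e2 Ψ)) := pd_cont e2 hP0C1
  have s0 : HasCompactSupport (pd e2 Ψ) := pd_compactSupport e2 hc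
  have s1 : HasCompactSupport (pd e1 Ψ) := pd_compactSupport e1 hc
  have s2 : HasCompactSupport (pd e1 (pd e1 Ψ)) := pd_compactSupport e1 s1
  have s3 : HasCompactSupport (pd e1 (pd e2 Ψ)) := pd_compactSupport e1 s0
  have s4 : HasCompactSupport (pd e2 (pd e2 Ψ)) := pd_compactSupport e2 s0
  obtain ⟨M1, hM1⟩ := hP1c.bounded_above_of_compact_support s1
  obtain ⟨M2, hM2⟩ := hP2c.bounded_above_of_compact_support s2
  obtain ⟨M3, hM3⟩ := hP3c.bounded_above_of_compact_support s3
  obtain ⟨M4, hM4⟩ := hP4c.bounded_above_of_compact_support s4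
  set M : ℝ := max (max M1 M2) (max M3 M4) with hM
  have hB1 : ∀ x, |pd e1 Ψ x| ≤ M := fun x => le_trans (hM1 x) (by
    simp only [hM]; exact le_max_of_le_left (le_max_left _ _))
  have hB2 : ∀ x, |pd e1 (pd e1 Ψ) x| ≤ M := fun x => le_trans (hM2 x) (by
    simp only [hM]; exact le_max_of_le_left (le_max_right _ _))
  have hB3 : ∀ x, |pd e1 (pd e2 Ψ) x| ≤ M := fun x => le_trans (hM3 x) (by
    simp only [hM]; exact le_max_of_le_right (le_max_left _ _))
  have hB4 : ∀ x, |pd e2 (pd e2 Ψ) x| ≤ M := fun x => le_trans (hM4 x) (by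
    simp only [hM]; exact le_max_of_le_right (le_max_right _ _))
  have hM0 : 0 ≤ M := le_trans (abs_nonneg _) (hB1 0)
  -- bound for convolved products
  have prodbd : ∀ (u v : ℝ × ℝ → ℝ), (∀ x, |u x| ≤ 3*M) → (∀ x, |v x| ≤ 3*M) →
      ∀ x, |u x * v x| ≤ 9*M*M := by
    intro u v hu hv x
    rw [abs_mul]
    calc |u x| * |v x| ≤ (3*M) * (3*M) :=
      mul_le_mul (hu x) (hv x) (abs_nonneg _) (by positivity)
    _ = 9*M*M := by ring
  -- the smooth identity, rewritten with convolutions of the derivatives of Ψ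
  have key : ∀ n : ℕ,
      (∫ p in Icc A B,
        (((bseq n).normed volume ⋆[ContinuousLinearMap.lsmul ℝ ℝ, volume] pd e1 (pd e1 Ψ)) p
          * ((bseq n).normed volume ⋆[ContinuousLinearMap.lsmul ℝ ℝ, volume] pd e2 (pd e2 Ψ)) p
        - ((bseq n).normed volume ⋆[ContinuousLinearMap.lsmul ℝ ℝ, volume] pd e1 (pd e2 Ψ)) p ^ 2))
      = (((∫ x in Ioc A.1 B.1,
            -(((bseq n).normed volume ⋆[ContinuousLinearMap.lsmul ℝ ℝ, volume] pd e1 Ψ) (x, B.2)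
              * ((bseq n).normed volume ⋆[ContinuousLinearMap.lsmul ℝ ℝ, volume] pd e1 (pd e2 Ψ)) (x, B.2)))
          - ∫ x in Ioc A.1 B.1,
            -(((bseq n).normed volume ⋆[ContinuousLinearMap.lsmul ℝ ℝ, volume] pd e1 Ψ) (x, A.2)
              * ((bseq n).normed volume ⋆[ContinuousLinearMap.lsmul ℝ ℝ, volume] pd e1 (pd e2 Ψ)) (x, A.2)))
         + ∫ y in Ioc A.2 B.2,
            ((bseq n).normed volume ⋆[ContinuousLinearMap.lsmul ℝ ℝ, volume] pd e1 Ψ) (B.1, y)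
              * ((bseq n).normed volume ⋆[ContinuousLinearMap.lsmul ℝ ℝ, volume] pd e2 (pd e2 Ψ)) (B.1, y))
        - ∫ y in Ioc A.2 B.2,
            ((bseq n).normed volume ⋆[ContinuousLinearMap.lsmul ℝ ℝ, volume] pd e1 Ψ) (A.1, y)
              * ((bseq n).normed volume ⋆[ContinuousLinearMap.lsmul ℝ ℝ, volume] pd e2 (pd e2 Ψ)) (A.1, y) := by
    intro n
    have r1 : pd e1 ((bseq n).normed volume ⋆[ContinuousLinearMap.lsmul ℝ ℝ, volume] Ψ)
        = (bseq n).normed volume ⋆[ContinuousLinearMap.lsmul ℝ ℝ, volume] pd e1 Ψ :=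
      funext (conv_pd (bseq n) hΨ1 hc e1)
    have r0 : pd e2 ((bseq n).normed volume ⋆[ContinuousLinearMap.lsmul ℝ ℝ, volume] Ψ)
        = (bseq n).normed volume ⋆[ContinuousLinearMap.lsmul ℝ ℝ, volume] pd e2 Ψ :=
      funext (conv_pd (bseq n) hΨ1 hc e2)
    have key0 := key_smooth (conv_smooth (bseq n) hΨ.continuous) A B hAB
    rw [intervalIntegral.integral_of_le hAB.1, intervalIntegral.integral_of_le hAB.1,
      intervalIntegral.integral_of_le hAB.2, intervalIntegral.integral_of_le hAB.2] at key0
    rw [r1, r0] at key0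
    rw [show pd e1 ((bseq n).normed volume ⋆[ContinuousLinearMap.lsmul ℝ ℝ, volume] pd e1 Ψ)
        = (bseq n).normed volume ⋆[ContinuousLinearMap.lsmul ℝ ℝ, volume] pd e1 (pd e1 Ψ) from
      funext (conv_pd (bseq n) hP1C1 s1 e1)] at key0
    rw [show pd e1 ((bseq n).normed volume ⋆[ContinuousLinearMap.lsmul ℝ ℝ, volume] pd e2 Ψ)
        = (bseq n).normed volume ⋆[ContinuousLinearMap.lsmul ℝ ℝ, volume] pd e1 (pd e2 Ψ) from
      funext (conv_pd (bseq n) hP0C1 s0 e1)] at key0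
    rw [show pd e2 ((bseq n).normed volume ⋆[ContinuousLinearMap.lsmul ℝ ℝ, volume] pd e2 Ψ)
        = (bseq n).normed volume ⋆[ContinuousLinearMap.lsmul ℝ ℝ, volume] pd e2 (pd e2 Ψ) from
      funext (conv_pd (bseq n) hP0C1 s0 e2)] at key0
    exact key0
  -- limits
  have t_lhs : Tendsto (fun n : ℕ => ∫ p in Icc A B,
      (((bseq n).normed volume ⋆[ContinuousLinearMap.lsmul ℝ ℝ, volume] pd e1 (pd e1 Ψ)) p
        * ((bseq n).normed volume ⋆[ContinuousLinearMap.lsmul ℝ ℝ, volume] pd e2 (pd e2 Ψ)) p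
      - ((bseq n).normed volume ⋆[ContinuousLinearMap.lsmul ℝ ℝ, volume] pd e1 (pd e2 Ψ)) p ^ 2))
      atTop (𝓝 (∫ p in Icc A B,
      (pd e1 (pd e1 Ψ) p * pd e2 (pd e2 Ψ) p - pd e1 (pd e2 Ψ) p ^ 2))) := by
    apply dct_const_bound (C := 9*M*M + 9*M*M) measurableSet_Icc
      (IsCompact.measure_lt_top isCompact_Icc).ne
    · intro n
      exact (((conv_cont _ hP2c s2).mul (conv_cont _ hP4c s4)).sub
        ((conv_cont _ hP3c s3).pow 2)).aestronglyMeasurable.restrict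
    · intro n x
      have h2 := conv_bound (bseq n) hP2c hB2
      have h3 := conv_bound (bseq n) hP3c hB3
      have h4 := conv_bound (bseq n) hP4c hB4
      calc |_ - _| ≤ |_| + |_| := abs_sub _ _
      _ ≤ 9*M*M + 9*M*M := by
        gcongr ?_ + ?_
        · exact prodbd _ _ h2 h4 x
        · rw [abs_pow]
          have h := h3 x
          have h0 := abs_nonneg
            (((bseq n).normed volume ⋆[ContinuousLinearMap.lsmul ℝ ℝ, volume] pd e1 (pd e2 Ψ)) x)
          nlinarith
    · intro p
      exact ((conv_tendsto hP2c p).mul (conv_tendsto hP4c p)).sub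
        ((conv_tendsto hP3c p).pow 2)
  have edge : ∀ (u v : ℝ × ℝ → ℝ), Continuous u → Continuous v →
      HasCompactSupport u → HasCompactSupport v →
      (∀ x, |u x| ≤ M) → (∀ x, |v x| ≤ M) →
      ∀ (c d : ℝ) (ι : ℝ → ℝ × ℝ), Continuous ι →
      Tendsto (fun n : ℕ => ∫ t in Ioc c d,
          ((bseq n).normed volume ⋆[ContinuousLinearMap.lsmul ℝ ℝ, volume] u) (ι t)
            * ((bseq n).normed volume ⋆[ContinuousLinearMap.lsmul ℝ ℝ, volume] v) (ι t))
        atTop (𝓝 (∫ t in Ioc c d, u (ι t) * v (ι t))) := by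
    intro u v hu hv su sv hbu hbv c d ι hι
    apply dct_const_bound (C := 9*M*M) measurableSet_Ioc measure_Ioc_lt_top.ne
    · intro n
      exact (((conv_cont _ hu su).comp hι).mul
        ((conv_cont _ hv sv).comp hι)).aestronglyMeasurable.restrict
    · intro n t
      exact prodbd _ _ (conv_bound (bseq n) hu hbu) (conv_bound (bseq n) hv hbv) (ι t)
    · intro t
      exact (conv_tendsto hu (ι t)).mul (conv_tendsto hv (ι t))
  have t_top := edge _ _ hP1c hP3c s1 s3 hB1 hB3 A.1 B.1 (fun x => (x, B.2))
    (continuous_id.prodMk continuous_const)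
  have t_bot := edge _ _ hP1c hP3c s1 s3 hB1 hB3 A.1 B.1 (fun x => (x, A.2))
    (continuous_id.prodMk continuous_const)
  have t_right := edge _ _ hP1c hP4c s1 s4 hB1 hB4 A.2 B.2 (fun y => (B.1, y))
    (continuous_const.prodMk continuous_id)
  have t_left := edge _ _ hP1c hP4c s1 s4 hB1 hB4 A.2 B.2 (fun y => (A.1, y))
    (continuous_const.prodMk continuous_id)
  simp only [integral_neg] at key ⊢
  have t_rhs := ((t_top.neg.sub t_bot.neg).add t_right).sub t_left
  exact tendsto_nhds_unique t_lhs (t_rhs.congr fun n => (key n).symm)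

theorem star {φ : ℝ × ℝ → ℝ} {a b c d : ℝ}
    (hφU : ContDiffOn ℝ 2 φ (Ioo a b ×ˢ Ioo c d))
    {A B : ℝ × ℝ} (hAB : A ≤ B) (hsub : Icc A B ⊆ Ioo a b ×ˢ Ioo c d) :
    ∫ p in Icc A B, (pd e1 (pd e1 φ) p * pd e2 (pd e2 φ) p - pd e1 (pd e2 φ) p ^ 2)
    = (((∫ x in Ioc A.1 B.1, -(pd e1 φ (x, B.2) * pd e1 (pd e2 φ) (x, B.2)))
        - ∫ x in Ioc A.1 B.1, -(pd e1 φ (x, A.2) * pd e1 (pd e2 φ) (x, A.2)))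
       + ∫ y in Ioc A.2 B.2, pd e1 φ (B.1, y) * pd e2 (pd e2 φ) (B.1, y))
      - ∫ y in Ioc A.2 B.2, pd e1 φ (A.1, y) * pd e2 (pd e2 φ) (A.1, y) := by
  have hUopen : IsOpen (Ioo a b ×ˢ Ioo c d) := isOpen_Ioo.prod isOpen_Ioo
  have hA : A ∈ Ioo a b ×ˢ Ioo c d := hsub ⟨le_refl A, hAB⟩
  have hB : B ∈ Ioo a b ×ˢ Ioo c d := hsub ⟨hAB, le_refl B⟩
  set m1 : ℝ := min (A.1 - a) (b - B.1) with hm1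
  set m2 : ℝ := min (A.2 - c) (d - B.2) with hm2
  have hm1p : 0 < m1 := lt_min (by linarith [hA.1.1]) (by linarith [hB.1.2])
  have hm2p : 0 < m2 := lt_min (by linarith [hA.2.1]) (by linarith [hB.2.2])
  have hm1a : m1 ≤ A.1 - a := min_le_left _ _
  have hm1b : m1 ≤ b - B.1 := min_le_right _ _
  have hm2a : m2 ≤ A.2 - c := min_le_left _ _
  have hm2b : m2 ≤ d - B.2 := min_le_right _ _
  set c1 : ℝ := (A.1 + B.1)/2 with hc1
  set c2 : ℝ := (A.2 + B.2)/2 with hc2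
  set b1 : ContDiffBump c1 :=
    ⟨(B.1 - A.1)/2 + m1/2, (B.1 - A.1)/2 + (3/4)*m1,
      by nlinarith [hAB.1], by nlinarith⟩ with hb1
  set b2 : ContDiffBump c2 :=
    ⟨(B.2 - A.2)/2 + m2/2, (B.2 - A.2)/2 + (3/4)*m2,
      by nlinarith [hAB.2], by nlinarith⟩ with hb2
  have hrIn1 : b1.rIn = (B.1 - A.1)/2 + m1/2 := rfl
  have hrIn2 : b2.rIn = (B.2 - A.2)/2 + m2/2 := rfl
  have hrOut1 : b1.rOut = (B.1 - A.1)/2 + (3/4)*m1 := rfl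
  have hrOut2 : b2.rOut = (B.2 - A.2)/2 + (3/4)*m2 := rfl
  set O : Set (ℝ × ℝ) := Metric.ball c1 b1.rIn ×ˢ Metric.ball c2 b2.rIn with hO
  set K' : Set (ℝ × ℝ) :=
    Metric.closedBall c1 b1.rOut ×ˢ Metric.closedBall c2 b2.rOut with hK'
  have hO_open : IsOpen O := Metric.isOpen_ball.prod Metric.isOpen_ball
  have hKO : Icc A B ⊆ O := by
    intro p hp
    rw [Icc_prod_eq] at hp
    obtain ⟨⟨hpa, hpb⟩, hpc, hpd⟩ := hp
    constructor
    · rw [Real.ball_eq_Ioo, hrIn1]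
      exact ⟨by rw [hc1]; linarith, by rw [hc1]; linarith⟩
    · rw [Real.ball_eq_Ioo, hrIn2]
      exact ⟨by rw [hc2]; linarith, by rw [hc2]; linarith⟩
  have hKsub : K' ⊆ Ioo a b ×ˢ Ioo c d := by
    intro p hp
    obtain ⟨hp1, hp2⟩ := hp
    rw [Real.closedBall_eq_Icc, hrOut1] at hp1
    rw [Real.closedBall_eq_Icc, hrOut2] at hp2
    constructor
    · exact ⟨by rw [hc1] at hp1; rcases hp1 with ⟨h1, _⟩; linarith,
        by rw [hc1] at hp1; rcases hp1 with ⟨_, h2⟩; linarith⟩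
    · exact ⟨by rw [hc2] at hp2; rcases hp2 with ⟨h1, _⟩; linarith,
        by rw [hc2] at hp2; rcases hp2 with ⟨_, h2⟩; linarith⟩
  have hK'closed : IsClosed K' := (Metric.isClosed_closedBall).prod (Metric.isClosed_closedBall)
  have hK'cpt : IsCompact K' := (isCompact_closedBall _ _).prod (isCompact_closedBall _ _)
  set χ : ℝ × ℝ → ℝ := fun p => b1 p.1 * b2 p.2 with hχ
  have hχsmooth : ContDiff ℝ 2 χ :=
    (b1.contDiff.comp contDiff_fst).mul (b2.contDiff.comp contDiff_snd)
  have hχone : ∀ q ∈ O, χ q = 1 := by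
    intro q hq
    have h1 : b1 q.1 = 1 := b1.one_of_mem_closedBall (Metric.ball_subset_closedBall hq.1)
    have h2 : b2 q.2 = 1 := b2.one_of_mem_closedBall (Metric.ball_subset_closedBall hq.2)
    rw [hχ]; dsimp only; rw [h1, h2, mul_one]
  have hχzero : ∀ q ∉ K', χ q = 0 := by
    intro q hq
    rw [hK', mem_prod] at hq
    push_neg at hq
    rw [hχ]; dsimp only
    by_cases h : q.1 ∈ Metric.closedBall c1 b1.rOut
    · have h2 := hq h
      have : b2 q.2 = 0 := b2.zero_of_le_dist (by
        rw [Metric.mem_closedBall, not_le] at h2; exact h2.le)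
      rw [this, mul_zero]
    · have : b1 q.1 = 0 := b1.zero_of_le_dist (by
        rw [Metric.mem_closedBall, not_le] at h; exact h.le)
      rw [this, zero_mul]
  set Ψ : ℝ × ℝ → ℝ := fun p => χ p * φ p with hΨdef
  have hΨ2 : ContDiff ℝ 2 Ψ := by
    rw [contDiff_iff_contDiffAt]
    intro p
    by_cases hp : p ∈ Ioo a b ×ˢ Ioo c d
    · exact hχsmooth.contDiffAt.mul (hφU.contDiffAt (hUopen.mem_nhds hp))
    · have hpK : p ∉ K' := fun h => hp (hKsub h)
      have hev : Ψ =ᶠ[nhds p] (fun _ => (0:ℝ)) := by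
        filter_upwards [hK'closed.isOpen_compl.mem_nhds hpK] with q hq
        rw [hΨdef]; dsimp only; rw [hχzero q hq, zero_mul]
      exact (contDiffAt_const (c := (0:ℝ))).congr_of_eventuallyEq hev
  have hΨc : HasCompactSupport Ψ := by
    apply HasCompactSupport.intro hK'cpt
    intro q hq
    rw [hΨdef]; dsimp only; rw [hχzero q hq, zero_mul]
  -- equality of derivatives on O
  have hfd1 : ∀ v, ∀ q ∈ O, pd v Ψ q = pd v φ q := by
    intro v q hq
    have hev : Ψ =ᶠ[nhds q] φ := by
      filter_upwards [hO_open.mem_nhds hq] with r hr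
      rw [hΨdef]; dsimp only; rw [hχone r hr, one_mul]
    show fderiv ℝ Ψ q v = fderiv ℝ φ q v
    rw [hev.fderiv_eq]
  have hfd2 : ∀ v w, ∀ q ∈ O, pd v (pd w Ψ) q = pd v (pd w φ) q := by
    intro v w q hq
    have hev : pd w Ψ =ᶠ[nhds q] pd w φ := by
      filter_upwards [hO_open.mem_nhds hq] with r hr
      exact hfd1 w r hr
    show fderiv ℝ (pd w Ψ) q v = fderiv ℝ (pd w φ) q v
    rw [hev.fderiv_eq]
  have key := key_C2 hΨ2 hΨc A B hAB
  have hBmem : ∀ x ∈ Ioc A.1 B.1, ((x, B.2) : ℝ × ℝ) ∈ Icc A B := by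
    intro x hx
    exact ⟨⟨hx.1.le, hAB.2⟩, ⟨hx.2, le_refl _⟩⟩
  have hAmem : ∀ x ∈ Ioc A.1 B.1, ((x, A.2) : ℝ × ℝ) ∈ Icc A B := by
    intro x hx
    exact ⟨⟨hx.1.le, le_refl _⟩, ⟨hx.2, hAB.2⟩⟩
  have hRmem : ∀ y ∈ Ioc A.2 B.2, ((B.1, y) : ℝ × ℝ) ∈ Icc A B := by
    intro y hy
    exact ⟨⟨hAB.1, hy.1.le⟩, ⟨le_refl _, hy.2⟩⟩
  have hLmem : ∀ y ∈ Ioc A.2 B.2, ((A.1, y) : ℝ × ℝ) ∈ Icc A B := by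
    intro y hy
    exact ⟨⟨le_refl _, hy.1.le⟩, ⟨hAB.1, hy.2⟩⟩
  have EL : (∫ p in Icc A B,
      (pd e1 (pd e1 Ψ) p * pd e2 (pd e2 Ψ) p - pd e1 (pd e2 Ψ) p ^ 2))
      = ∫ p in Icc A B,
      (pd e1 (pd e1 φ) p * pd e2 (pd e2 φ) p - pd e1 (pd e2 φ) p ^ 2) :=
    setIntegral_congr_fun measurableSet_Icc (fun p hp => by
      rw [hfd2 e1 e1 p (hKO hp), hfd2 e2 e2 p (hKO hp), hfd2 e1 e2 p (hKO hp)])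
  have E1 : (∫ x in Ioc A.1 B.1, -(pd e1 Ψ (x, B.2) * pd e1 (pd e2 Ψ) (x, B.2)))
      = ∫ x in Ioc A.1 B.1, -(pd e1 φ (x, B.2) * pd e1 (pd e2 φ) (x, B.2)) :=
    setIntegral_congr_fun measurableSet_Ioc (fun x hx => by
      rw [hfd1 e1 _ (hKO (hBmem x hx)), hfd2 e1 e2 _ (hKO (hBmem x hx))])
  have E2 : (∫ x in Ioc A.1 B.1, -(pd e1 Ψ (x, A.2) * pd e1 (pd e2 Ψ) (x, A.2)))
      = ∫ x in Ioc A.1 B.1, -(pd e1 φ (x, A.2) * pd e1 (pd e2 φ) (x, A.2)) :=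
    setIntegral_congr_fun measurableSet_Ioc (fun x hx => by
      rw [hfd1 e1 _ (hKO (hAmem x hx)), hfd2 e1 e2 _ (hKO (hAmem x hx))])
  have E3 : (∫ y in Ioc A.2 B.2, pd e1 Ψ (B.1, y) * pd e2 (pd e2 Ψ) (B.1, y))
      = ∫ y in Ioc A.2 B.2, pd e1 φ (B.1, y) * pd e2 (pd e2 φ) (B.1, y) :=
    setIntegral_congr_fun measurableSet_Ioc (fun y hy => by
      rw [hfd1 e1 _ (hKO (hRmem y hy)), hfd2 e2 e2 _ (hKO (hRmem y hy))])
  have E4 : (∫ y in Ioc A.2 B.2, pd e1 Ψ (A.1, y) * pd e2 (pd e2 Ψ) (A.1, y))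
      = ∫ y in Ioc A.2 B.2, pd e1 φ (A.1, y) * pd e2 (pd e2 φ) (A.1, y) :=
    setIntegral_congr_fun measurableSet_Ioc (fun y hy => by
      rw [hfd1 e1 _ (hKO (hLmem y hy)), hfd2 e2 e2 _ (hKO (hLmem y hy))])
  rw [EL, E1, E2, E3, E4] at key
  exact key

lemma hasDerivAt_slice_x {F : ℝ × ℝ → ℝ} {s : Set (ℝ × ℝ)} {x₀ y₀ : ℝ} {I : Set ℝ}
    (hF : DifferentiableWithinAt ℝ F s (x₀, y₀)) (hI : I ∈ nhds x₀)
    (hmap : ∀ t ∈ I, ((t, y₀) : ℝ × ℝ) ∈ s) :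
    HasDerivAt (fun t => F (t, y₀)) (fderivWithin ℝ F s (x₀, y₀) e1) x₀ := by
  have hι : HasDerivWithinAt (fun t : ℝ => ((t, y₀) : ℝ × ℝ)) e1 I x₀ :=
    ((hasDerivAt_id x₀).prodMk (hasDerivAt_const x₀ y₀)).hasDerivWithinAt
  have := hF.hasFDerivWithinAt.comp_hasDerivWithinAt x₀ hι hmap
  exact this.hasDerivAt hI

lemma hasDerivWithinAt_slice_y {F : ℝ × ℝ → ℝ} {s : Set (ℝ × ℝ)} {x₀ y₀ : ℝ} {I : Set ℝ}
    (hF : DifferentiableWithinAt ℝ F s (x₀, y₀))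
    (hmap : ∀ t ∈ I, ((x₀, t) : ℝ × ℝ) ∈ s) :
    HasDerivWithinAt (fun t => F (x₀, t)) (fderivWithin ℝ F s (x₀, y₀) e2) I y₀ := by
  have hι : HasDerivWithinAt (fun t : ℝ => ((x₀, t) : ℝ × ℝ)) e2 I y₀ :=
    ((hasDerivAt_const y₀ x₀).prodMk (hasDerivAt_id y₀)).hasDerivWithinAt
  exact hF.hasFDerivWithinAt.comp_hasDerivWithinAt y₀ hι hmap

lemma hasDerivAt_slice_y {F : ℝ × ℝ → ℝ} {s : Set (ℝ × ℝ)} {x₀ y₀ : ℝ} {I : Set ℝ}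
    (hF : DifferentiableWithinAt ℝ F s (x₀, y₀)) (hI : I ∈ nhds y₀)
    (hmap : ∀ t ∈ I, ((x₀, t) : ℝ × ℝ) ∈ s) :
    HasDerivAt (fun t => F (x₀, t)) (fderivWithin ℝ F s (x₀, y₀) e2) y₀ :=
  (hasDerivWithinAt_slice_y hF hmap).hasDerivAt hI

lemma dct_const_bound_ae {α : Type*} [MeasurableSpace α] {μ : Measure α} {s : Set α}
    (hs : MeasurableSet s) (hμ : μ s ≠ ⊤) {F : ℕ → α → ℝ} {f : α → ℝ} {C : ℝ}
    (hmeas : ∀ n, AEStronglyMeasurable (F n) (μ.restrict s))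
    (hb : ∀ n x, |F n x| ≤ C)
    (hlim : ∀ᵐ x ∂(μ.restrict s), Tendsto (fun n => F n x) atTop (𝓝 (f x))) :
    Tendsto (fun n => ∫ x in s, F n x ∂μ) atTop (𝓝 (∫ x in s, f x ∂μ)) := by
  apply tendsto_integral_of_dominated_convergence (fun _ => C) hmeas
  · rw [integrable_const_iff]
    right
    exact isFiniteMeasure_restrict.2 hμ
  · exact fun n => ae_of_all _ fun x => by rw [Real.norm_eq_abs]; exact hb n x
  · exact hlim

lemma edge_dct {G : ℝ × ℝ → ℝ} {s : Set (ℝ × ℝ)} (hG : ContinuousOn G s) (hs : IsCompact s)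
    {lo hi q : ℕ → ℝ} {c' d' q' : ℝ} (hcd : c' < d') {ι : ℝ → ℝ → ℝ × ℝ}
    (hι : Continuous fun z : ℝ × ℝ => ι z.1 z.2)
    (hq : Tendsto q atTop (𝓝 q'))
    (hsub : ∀ m, Ioc (lo m) (hi m) ⊆ Ioc c' d')
    (hmem : ∀ m, ∀ y ∈ Ioc (lo m) (hi m), ι (q m) y ∈ s)
    (hmem' : ∀ y ∈ Ioc c' d', ι q' y ∈ s)
    (hopen : ∀ y ∈ Ioo c' d', ∀ᶠ m in atTop, y ∈ Ioc (lo m) (hi m)) :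
    Tendsto (fun m => ∫ y in Ioc (lo m) (hi m), G (ι (q m) y)) atTop
      (𝓝 (∫ y in Ioc c' d', G (ι q' y))) := by
  obtain ⟨C, hC⟩ := hs.exists_bound_of_continuousOn hG
  have hC0 : 0 ≤ C := le_trans (norm_nonneg _) (hC _ (hmem' d' ⟨hcd, le_refl _⟩))
  set F : ℕ → ℝ → ℝ :=
    fun m => indicator (Ioc (lo m) (hi m)) (fun y => G (ι (q m) y)) with hF
  have hrw : ∀ m, ∫ y in Ioc c' d', F m y = ∫ y in Ioc (lo m) (hi m), G (ι (q m) y) := by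
    intro m
    rw [hF]
    rw [setIntegral_indicator measurableSet_Ioc,
      inter_eq_self_of_subset_right (hsub m)]
  have hcont : ∀ m, ContinuousOn (fun y => G (ι (q m) y)) (Ioc (lo m) (hi m)) := by
    intro m
    apply hG.comp ((hι.comp (continuous_const.prodMk continuous_id)).continuousOn)
    intro y hy
    exact hmem m y hy
  have hmeas : ∀ m, AEStronglyMeasurable (F m) (volume.restrict (Ioc c' d')) := by
    intro m
    rw [hF]
    rw [aestronglyMeasurable_indicator_iff measurableSet_Ioc]
    rw [Measure.restrict_restrict measurableSet_Ioc,
      inter_eq_self_of_subset_left (hsub m)]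
    exact (hcont m).aestronglyMeasurable measurableSet_Ioc
  have := dct_const_bound_ae (μ := volume) measurableSet_Ioc measure_Ioc_lt_top.ne
    (F := F) (f := fun y => G (ι q' y)) (C := C) hmeas ?_ ?_
  · exact Tendsto.congr (fun m => hrw m) this
  · intro m y
    simp only [hF]
    by_cases hy : y ∈ Ioc (lo m) (hi m)
    · rw [indicator_of_mem hy]
      exact le_trans (le_of_eq (Real.norm_eq_abs _).symm) (hC _ (hmem m y hy))
    · rw [indicator_of_notMem hy]
      simpa using hC0
  · have hae : ∀ᵐ y ∂(volume.restrict (Ioc c' d')), y ∈ Ioo c' d' := by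
      have h1 : ∀ᵐ y ∂(volume.restrict (Ioc c' d')), y ∈ Ioc c' d' :=
        ae_restrict_mem measurableSet_Ioc
      have h2 : ∀ᵐ y ∂(volume.restrict (Ioc c' d')), y ≠ d' := by
        refine ae_iff.2 ?_
        have : {y : ℝ | ¬ y ≠ d'} = {d'} := by ext y; simp
        rw [this]
        exact le_antisymm
          (le_trans (Measure.le_iff'.1 Measure.restrict_le_self _) (by simp)) zero_le
      filter_upwards [h1, h2] with y hy1 hy2
      exact ⟨hy1.1, lt_of_le_of_ne hy1.2 hy2⟩
    filter_upwards [hae] with y hy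
    have hev := hopen y hy
    have htd : Tendsto (fun m => ι (q m) y) atTop (𝓝[s] (ι q' y)) := by
      rw [tendsto_nhdsWithin_iff]
      constructor
      · exact (hι.tendsto (q', y)).comp (hq.prodMk_nhds tendsto_const_nhds)
      · filter_upwards [hev] with m hm using hmem m y hm
    have hlim := ((hG _ (hmem' y (Ioo_subset_Ioc_self hy))).tendsto).comp htd
    refine Filter.Tendsto.congr' ?_ hlim
    filter_upwards [hev] with m hm
    exact (indicator_of_mem hm (fun y => G (ι (q m) y))).symm

/-- Integration-by-parts identity on the rectangle `R_I = (a,b) × (0,1)` for a `C²`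
function `φ` vanishing on the lateral and top edges and satisfying the Robin condition
`-∂_η φ(·,0) + μ φ(·,0) = 0` on the bottom edge:
`∫ ∂_x²φ ∂_η²φ = ∫ |∂_x∂_ηφ|² + ∫_I ∂_xφ(·,0) (μ φ(·,0))' dx`. -/
theorem stmt_5 (a b : ℝ) (hab : a < b) (μ : ℝ → ℝ) (φ : ℝ × ℝ → ℝ)
    (hμ : ContDiffOn ℝ 2 μ (Icc a b))
    (hφ : ContDiffOn ℝ 2 φ (Icc a b ×ˢ Icc (0:ℝ) 1))
    (hlat : ∀ η ∈ Ioo (0:ℝ) 1, φ (a, η) = 0 ∧ φ (b, η) = 0)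
    (htop : ∀ x ∈ Ioo a b, φ (x, 1) = 0)
    (hrobin : ∀ x ∈ Ioo a b,
      -(derivWithin (fun η => φ (x, η)) (Icc (0:ℝ) 1) 0) + μ x * φ (x, 0) = 0) :
    ∫ p in Ioo a b ×ˢ Ioo (0:ℝ) 1,
        (deriv (deriv (fun t => φ (t, p.2))) p.1)
          * (deriv (deriv (fun s => φ (p.1, s))) p.2) =
      (∫ p in Ioo a b ×ˢ Ioo (0:ℝ) 1,
        (deriv (fun t => deriv (fun s => φ (t, s)) p.2) p.1) ^ 2)
      + ∫ x in Ioo a b,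
          (deriv (fun t => φ (t, 0)) x) * (deriv (fun t => μ t * φ (t, 0)) x) := by
  set rect : Set (ℝ × ℝ) := Icc a b ×ˢ Icc (0:ℝ) 1 with hrectdef
  set U : Set (ℝ × ℝ) := Ioo a b ×ˢ Ioo (0:ℝ) 1 with hUdef
  have hUopen : IsOpen U := isOpen_Ioo.prod isOpen_Ioo
  have hUsub : U ⊆ rect := prod_mono Ioo_subset_Icc_self Ioo_subset_Icc_self
  have hUD : UniqueDiffOn ℝ rect := (uniqueDiffOn_Icc hab).prod (uniqueDiffOn_Icc one_pos)
  have hrectcpt : IsCompact rect := isCompact_Icc.prod isCompact_Icc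
  set W1 : ℝ × ℝ → ℝ := fun p => fderivWithin ℝ φ rect p e1 with hW1def
  set V : ℝ × ℝ → ℝ := fun p => fderivWithin ℝ φ rect p e2 with hVdef
  set Wxx : ℝ × ℝ → ℝ := fun p => fderivWithin ℝ W1 rect p e1 with hWxxdef
  set Wxy : ℝ × ℝ → ℝ := fun p => fderivWithin ℝ V rect p e1 with hWxydef
  set Wyy : ℝ × ℝ → ℝ := fun p => fderivWithin ℝ V rect p e2 with hWyydef
  have hfd1 : ContDiffOn ℝ 1 (fun p => fderivWithin ℝ φ rect p) rect :=
    hφ.fderivWithin (m := 1) hUD (by norm_num)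
  have hW1C : ContDiffOn ℝ 1 W1 rect := hfd1.clm_apply contDiffOn_const
  have hVC : ContDiffOn ℝ 1 V rect := hfd1.clm_apply contDiffOn_const
  have contW1 : ContinuousOn W1 rect := hW1C.continuousOn
  have contV : ContinuousOn V rect := hVC.continuousOn
  have contWxx : ContinuousOn Wxx rect :=
    (((hW1C.fderivWithin (m := 0) hUD (by norm_num)).clm_apply contDiffOn_const).continuousOn :)
  have contWxy : ContinuousOn Wxy rect :=
    (((hVC.fderivWithin (m := 0) hUD (by norm_num)).clm_apply contDiffOn_const).continuousOn :)
  have contWyy : ContinuousOn Wyy rect :=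
    (((hVC.fderivWithin (m := 0) hUD (by norm_num)).clm_apply contDiffOn_const).continuousOn :)
  have dφ : DifferentiableOn ℝ φ rect := hφ.differentiableOn (by norm_num)
  have dW1 : DifferentiableOn ℝ W1 rect := hW1C.differentiableOn one_ne_zero
  have dV : DifferentiableOn ℝ V rect := hVC.differentiableOn one_ne_zero
  -- edge identities
  have hVbot : ∀ x ∈ Ioo a b, V (x, 0) = μ x * φ (x, 0) := by
    intro x hx
    have hm : ((x:ℝ), (0:ℝ)) ∈ rect := ⟨Ioo_subset_Icc_self hx, left_mem_Icc.2 zero_le_one⟩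
    have h := hasDerivWithinAt_slice_y (I := Icc (0:ℝ) 1) (dφ _ hm)
      (fun t ht => ⟨Ioo_subset_Icc_self hx, ht⟩)
    have hdw : derivWithin (fun η => φ (x, η)) (Icc (0:ℝ) 1) 0 = V (x, 0) :=
      h.derivWithin ((uniqueDiffOn_Icc one_pos) 0 (left_mem_Icc.2 zero_le_one))
    have hr := hrobin x hx
    rw [hdw] at hr
    linarith
  have hW1top : ∀ x ∈ Ioo a b, W1 (x, 1) = 0 := by
    intro x hx
    have hm : ((x:ℝ), (1:ℝ)) ∈ rect := ⟨Ioo_subset_Icc_self hx, right_mem_Icc.2 zero_le_one⟩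
    have h := hasDerivAt_slice_x (I := Ioo a b) (dφ _ hm) (isOpen_Ioo.mem_nhds hx)
      (fun t ht => ⟨Ioo_subset_Icc_self ht, right_mem_Icc.2 zero_le_one⟩)
    have hev : (fun t => φ (t, 1)) =ᶠ[nhds x] fun _ => (0:ℝ) := by
      filter_upwards [isOpen_Ioo.mem_nhds hx] with t ht
      exact htop t ht
    have := h.deriv
    rw [hev.deriv_eq, deriv_const] at this
    exact this.symm
  have hVlat : ∀ y ∈ Ioo (0:ℝ) 1, V (a, y) = 0 ∧ V (b, y) = 0 := by
    intro y hy
    constructor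
    · have hm : ((a:ℝ), y) ∈ rect := ⟨left_mem_Icc.2 hab.le, Ioo_subset_Icc_self hy⟩
      have h := hasDerivAt_slice_y (I := Ioo (0:ℝ) 1) (dφ _ hm) (isOpen_Ioo.mem_nhds hy)
        (fun t ht => ⟨left_mem_Icc.2 hab.le, Ioo_subset_Icc_self ht⟩)
      have hev : (fun t => φ (a, t)) =ᶠ[nhds y] fun _ => (0:ℝ) := by
        filter_upwards [isOpen_Ioo.mem_nhds hy] with t ht
        exact (hlat t ht).1
      have := h.deriv
      rw [hev.deriv_eq, deriv_const] at this
      exact this.symm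
    · have hm : ((b:ℝ), y) ∈ rect := ⟨right_mem_Icc.2 hab.le, Ioo_subset_Icc_self hy⟩
      have h := hasDerivAt_slice_y (I := Ioo (0:ℝ) 1) (dφ _ hm) (isOpen_Ioo.mem_nhds hy)
        (fun t ht => ⟨right_mem_Icc.2 hab.le, Ioo_subset_Icc_self ht⟩)
      have hev : (fun t => φ (b, t)) =ᶠ[nhds y] fun _ => (0:ℝ) := by
        filter_upwards [isOpen_Ioo.mem_nhds hy] with t ht
        exact (hlat t ht).2
      have := h.deriv
      rw [hev.deriv_eq, deriv_const] at this
      exact this.symm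
  have hWyylat : ∀ y ∈ Ioo (0:ℝ) 1, Wyy (a, y) = 0 ∧ Wyy (b, y) = 0 := by
    intro y hy
    constructor
    · have hm : ((a:ℝ), y) ∈ rect := ⟨left_mem_Icc.2 hab.le, Ioo_subset_Icc_self hy⟩
      have h := hasDerivAt_slice_y (I := Ioo (0:ℝ) 1) (dV _ hm) (isOpen_Ioo.mem_nhds hy)
        (fun t ht => ⟨left_mem_Icc.2 hab.le, Ioo_subset_Icc_self ht⟩)
      have hev : (fun t => V (a, t)) =ᶠ[nhds y] fun _ => (0:ℝ) := by
        filter_upwards [isOpen_Ioo.mem_nhds hy] with t ht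
        exact (hVlat t ht).1
      have := h.deriv
      rw [hev.deriv_eq, deriv_const] at this
      exact this.symm
    · have hm : ((b:ℝ), y) ∈ rect := ⟨right_mem_Icc.2 hab.le, Ioo_subset_Icc_self hy⟩
      have h := hasDerivAt_slice_y (I := Ioo (0:ℝ) 1) (dV _ hm) (isOpen_Ioo.mem_nhds hy)
        (fun t ht => ⟨right_mem_Icc.2 hab.le, Ioo_subset_Icc_self ht⟩)
      have hev : (fun t => V (b, t)) =ᶠ[nhds y] fun _ => (0:ℝ) := by
        filter_upwards [isOpen_Ioo.mem_nhds hy] with t ht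
        exact (hVlat t ht).2
      have := h.deriv
      rw [hev.deriv_eq, deriv_const] at this
      exact this.symm
  have hW1bot : ∀ x ∈ Ioo a b, deriv (fun t => φ (t, 0)) x = W1 (x, 0) := by
    intro x hx
    have hm : ((x:ℝ), (0:ℝ)) ∈ rect := ⟨Ioo_subset_Icc_self hx, left_mem_Icc.2 zero_le_one⟩
    exact (hasDerivAt_slice_x (I := Ioo a b) (dφ _ hm) (isOpen_Ioo.mem_nhds hx)
      (fun t ht => ⟨Ioo_subset_Icc_self ht, left_mem_Icc.2 zero_le_one⟩)).deriv
  have hWxybot : ∀ x ∈ Ioo a b, Wxy (x, 0) = deriv (fun t => μ t * φ (t, 0)) x := by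
    intro x hx
    have hm : ((x:ℝ), (0:ℝ)) ∈ rect := ⟨Ioo_subset_Icc_self hx, left_mem_Icc.2 zero_le_one⟩
    have h := (hasDerivAt_slice_x (I := Ioo a b) (dV _ hm) (isOpen_Ioo.mem_nhds hx)
      (fun t ht => ⟨Ioo_subset_Icc_self ht, left_mem_Icc.2 zero_le_one⟩)).deriv
    have hev : (fun t => V (t, 0)) =ᶠ[nhds x] (fun t => μ t * φ (t, 0)) := by
      filter_upwards [isOpen_Ioo.mem_nhds hx] with t ht
      exact hVbot t ht
    have h2 : deriv (fun t => V (t, 0)) x = deriv (fun t => μ t * φ (t, 0)) x :=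
      hev.deriv_eq
    rw [← h2]
    exact h.symm
  -- interior identifications with full derivatives
  have hnh : ∀ p ∈ U, rect ∈ nhds p := fun p hp => mem_nhds_iff.2 ⟨U, hUsub, hUopen, hp⟩
  have hW1U : ∀ p ∈ U, W1 p = pd e1 φ p := by
    intro p hp
    show fderivWithin ℝ φ rect p e1 = fderiv ℝ φ p e1
    rw [fderivWithin_of_mem_nhds (hnh p hp)]
  have hVU : ∀ p ∈ U, V p = pd e2 φ p := by
    intro p hp
    show fderivWithin ℝ φ rect p e2 = fderiv ℝ φ p e2
    rw [fderivWithin_of_mem_nhds (hnh p hp)]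
  have hWxxU : ∀ p ∈ U, Wxx p = pd e1 (pd e1 φ) p := by
    intro p hp
    have hev : W1 =ᶠ[nhds p] pd e1 φ := by
      filter_upwards [hUopen.mem_nhds hp] with q hq
      exact hW1U q hq
    show fderivWithin ℝ W1 rect p e1 = fderiv ℝ (pd e1 φ) p e1
    rw [fderivWithin_of_mem_nhds (hnh p hp), hev.fderiv_eq]
  have hWxyU : ∀ p ∈ U, Wxy p = pd e1 (pd e2 φ) p := by
    intro p hp
    have hev : V =ᶠ[nhds p] pd e2 φ := by
      filter_upwards [hUopen.mem_nhds hp] with q hq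
      exact hVU q hq
    show fderivWithin ℝ V rect p e1 = fderiv ℝ (pd e2 φ) p e1
    rw [fderivWithin_of_mem_nhds (hnh p hp), hev.fderiv_eq]
  have hWyyU : ∀ p ∈ U, Wyy p = pd e2 (pd e2 φ) p := by
    intro p hp
    have hev : V =ᶠ[nhds p] pd e2 φ := by
      filter_upwards [hUopen.mem_nhds hp] with q hq
      exact hVU q hq
    show fderivWithin ℝ V rect p e2 = fderiv ℝ (pd e2 φ) p e2
    rw [fderivWithin_of_mem_nhds (hnh p hp), hev.fderiv_eq]
  -- slice derivatives
  have sliceφx : ∀ x ∈ Ioo a b, ∀ y' ∈ Icc (0:ℝ) 1,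
      HasDerivAt (fun t => φ (t, y')) (W1 (x, y')) x := by
    intro x hx y' hy'
    exact hasDerivAt_slice_x (I := Ioo a b) (dφ _ ⟨Ioo_subset_Icc_self hx, hy'⟩)
      (isOpen_Ioo.mem_nhds hx) (fun t ht => ⟨Ioo_subset_Icc_self ht, hy'⟩)
  have sliceVx : ∀ x ∈ Ioo a b, ∀ y' ∈ Icc (0:ℝ) 1,
      HasDerivAt (fun t => V (t, y')) (Wxy (x, y')) x := by
    intro x hx y' hy'
    exact hasDerivAt_slice_x (I := Ioo a b) (dV _ ⟨Ioo_subset_Icc_self hx, hy'⟩)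
      (isOpen_Ioo.mem_nhds hx) (fun t ht => ⟨Ioo_subset_Icc_self ht, hy'⟩)
  have sliceW1x : ∀ x ∈ Ioo a b, ∀ y' ∈ Icc (0:ℝ) 1,
      HasDerivAt (fun t => W1 (t, y')) (Wxx (x, y')) x := by
    intro x hx y' hy'
    exact hasDerivAt_slice_x (I := Ioo a b) (dW1 _ ⟨Ioo_subset_Icc_self hx, hy'⟩)
      (isOpen_Ioo.mem_nhds hx) (fun t ht => ⟨Ioo_subset_Icc_self ht, hy'⟩)
  have sliceφy : ∀ x' ∈ Icc a b, ∀ y ∈ Ioo (0:ℝ) 1,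
      HasDerivAt (fun s => φ (x', s)) (V (x', y)) y := by
    intro x' hx' y hy
    exact hasDerivAt_slice_y (I := Ioo (0:ℝ) 1) (dφ _ ⟨hx', Ioo_subset_Icc_self hy⟩)
      (isOpen_Ioo.mem_nhds hy) (fun t ht => ⟨hx', Ioo_subset_Icc_self ht⟩)
  have sliceVy : ∀ x' ∈ Icc a b, ∀ y ∈ Ioo (0:ℝ) 1,
      HasDerivAt (fun s => V (x', s)) (Wyy (x', y)) y := by
    intro x' hx' y hy
    exact hasDerivAt_slice_y (I := Ioo (0:ℝ) 1) (dV _ ⟨hx', Ioo_subset_Icc_self hy⟩)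
      (isOpen_Ioo.mem_nhds hy) (fun t ht => ⟨hx', Ioo_subset_Icc_self ht⟩)
  -- interior identification of the iterated derivatives of the statement
  have hxxU : ∀ p ∈ U, deriv (deriv (fun t => φ (t, p.2))) p.1 = Wxx p := by
    rintro ⟨x, y⟩ ⟨hx, hy⟩
    have hev : deriv (fun t => φ (t, y)) =ᶠ[nhds x] (fun t => W1 (t, y)) := by
      filter_upwards [isOpen_Ioo.mem_nhds hx] with t ht
      exact (sliceφx t ht y (Ioo_subset_Icc_self hy)).deriv
    show deriv (deriv (fun t => φ (t, y))) x = Wxx (x, y)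
    rw [hev.deriv_eq]
    exact (sliceW1x x hx y (Ioo_subset_Icc_self hy)).deriv
  have hyyU : ∀ p ∈ U, deriv (deriv (fun s => φ (p.1, s))) p.2 = Wyy p := by
    rintro ⟨x, y⟩ ⟨hx, hy⟩
    have hev : deriv (fun s => φ (x, s)) =ᶠ[nhds y] (fun s => V (x, s)) := by
      filter_upwards [isOpen_Ioo.mem_nhds hy] with t ht
      exact (sliceφy x (Ioo_subset_Icc_self hx) t ht).deriv
    show deriv (deriv (fun s => φ (x, s))) y = Wyy (x, y)
    rw [hev.deriv_eq]
    exact (sliceVy x (Ioo_subset_Icc_self hx) y hy).deriv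
  have hxyU : ∀ p ∈ U, deriv (fun t => deriv (fun s => φ (t, s)) p.2) p.1 = Wxy p := by
    rintro ⟨x, y⟩ ⟨hx, hy⟩
    have hev : (fun t => deriv (fun s => φ (t, s)) y) =ᶠ[nhds x] (fun t => V (t, y)) := by
      filter_upwards [isOpen_Ioo.mem_nhds hx] with t ht
      exact (sliceφy t (Ioo_subset_Icc_self ht) y hy).deriv
    show deriv (fun t => deriv (fun s => φ (t, s)) y) x = Wxy (x, y)
    rw [hev.deriv_eq]
    exact (sliceVx x hx y (Ioo_subset_Icc_self hy)).deriv
  -- the shrinking rectangles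
  have hφU : ContDiffOn ℝ 2 φ (Ioo a b ×ˢ Ioo (0:ℝ) 1) := hφ.mono hUsub
  set ε : ℕ → ℝ := fun m => min (b - a) 1 / (4 * (m + 1)) with hεdef
  have hc0 : 0 < min (b - a) 1 := lt_min (by linarith) one_pos
  have hεpos : ∀ m, 0 < ε m := fun m => div_pos hc0 (by positivity)
  have hεle : ∀ m, ε m ≤ min (b - a) 1 / 4 := by
    intro m
    apply div_le_div_of_nonneg_left hc0.le (by norm_num)
    have : (0:ℝ) ≤ (m:ℝ) := Nat.cast_nonneg m
    nlinarith
  have hεa : ∀ m, ε m ≤ (b - a) / 4 := fun m => le_trans (hεle m)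
    (div_le_div_of_nonneg_right (min_le_left _ _) (by norm_num))
  have hε1 : ∀ m, ε m ≤ 1 / 4 := fun m => le_trans (hεle m)
    (div_le_div_of_nonneg_right (min_le_right _ _) (by norm_num))
  have hεanti : Antitone ε := by
    intro m n hmn
    apply div_le_div_of_nonneg_left hc0.le (by positivity)
    have : (m:ℝ) ≤ (n:ℝ) := Nat.cast_le.2 hmn
    nlinarith
  have hεto0 : Tendsto ε atTop (𝓝 0) := by
    have h0 := tendsto_one_div_add_atTop_nhds_zero_nat.const_mul (min (b - a) 1 / 4)
    rw [mul_zero] at h0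
    apply h0.congr
    intro n
    show min (b - a) 1 / 4 * (1 / ((n:ℝ) + 1)) = min (b - a) 1 / (4 * ((n:ℝ) + 1))
    rw [div_mul_div_comm, mul_one]
  have hABm : ∀ m, ((a + ε m, ε m) : ℝ × ℝ) ≤ (b - ε m, 1 - ε m) := by
    intro m
    have h1 := hεa m; have h2 := hεpos m; have h3 := hε1 m
    exact ⟨show a + ε m ≤ b - ε m by linarith, show ε m ≤ 1 - ε m by linarith⟩
  have hsubm : ∀ m, Icc ((a + ε m, ε m) : ℝ × ℝ) (b - ε m, 1 - ε m) ⊆ U := by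
    intro m p hp
    rw [Icc_prod_eq] at hp
    obtain ⟨⟨h1, h2⟩, h3, h4⟩ := hp
    have h5 := hεpos m
    simp only [Prod.fst, Prod.snd] at h1 h2 h3 h4
    exact ⟨⟨by linarith, by linarith⟩, ⟨by linarith, by linarith⟩⟩
  -- identity on shrunken rectangles in terms of within-derivatives
  have starW : ∀ m,
      (∫ p in Icc ((a + ε m, ε m) : ℝ × ℝ) (b - ε m, 1 - ε m),
        (Wxx p * Wyy p - Wxy p ^ 2))
      = (((∫ x in Ioc (a + ε m) (b - ε m), -(W1 (x, 1 - ε m) * Wxy (x, 1 - ε m)))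
          - ∫ x in Ioc (a + ε m) (b - ε m), -(W1 (x, ε m) * Wxy (x, ε m)))
         + ∫ y in Ioc (ε m) (1 - ε m), W1 (b - ε m, y) * Wyy (b - ε m, y))
        - ∫ y in Ioc (ε m) (1 - ε m), W1 (a + ε m, y) * Wyy (a + ε m, y) := by
    intro m
    have h := star hφU (hABm m) (hsubm m)
    dsimp only at h
    have hBmem : ∀ x ∈ Ioc (a + ε m) (b - ε m),
        ((x, 1 - ε m) : ℝ × ℝ) ∈ U := by
      intro x hx
      exact hsubm m ⟨⟨hx.1.le, (hABm m).2⟩, ⟨hx.2, le_refl _⟩⟩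
    have hAmem : ∀ x ∈ Ioc (a + ε m) (b - ε m),
        ((x, ε m) : ℝ × ℝ) ∈ U := by
      intro x hx
      exact hsubm m ⟨⟨hx.1.le, le_refl _⟩, ⟨hx.2, (hABm m).2⟩⟩
    have hRmem : ∀ y ∈ Ioc (ε m) (1 - ε m),
        ((b - ε m, y) : ℝ × ℝ) ∈ U := by
      intro y hy
      exact hsubm m ⟨⟨(hABm m).1, hy.1.le⟩, ⟨le_refl _, hy.2⟩⟩
    have hLmem : ∀ y ∈ Ioc (ε m) (1 - ε m),
        ((a + ε m, y) : ℝ × ℝ) ∈ U := by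
      intro y hy
      exact hsubm m ⟨⟨le_refl _, hy.1.le⟩, ⟨(hABm m).1, hy.2⟩⟩
    have E0 : (∫ p in Icc ((a + ε m, ε m) : ℝ × ℝ) (b - ε m, 1 - ε m),
        (pd e1 (pd e1 φ) p * pd e2 (pd e2 φ) p - pd e1 (pd e2 φ) p ^ 2))
        = ∫ p in Icc ((a + ε m, ε m) : ℝ × ℝ) (b - ε m, 1 - ε m),
        (Wxx p * Wyy p - Wxy p ^ 2) :=
      setIntegral_congr_fun measurableSet_Icc (fun p hp => by
        rw [← hWxxU p (hsubm m hp), ← hWyyU p (hsubm m hp), ← hWxyU p (hsubm m hp)])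
    have E1 : (∫ x in Ioc (a + ε m) (b - ε m),
        -(pd e1 φ (x, 1 - ε m) * pd e1 (pd e2 φ) (x, 1 - ε m)))
        = ∫ x in Ioc (a + ε m) (b - ε m), -(W1 (x, 1 - ε m) * Wxy (x, 1 - ε m)) :=
      setIntegral_congr_fun measurableSet_Ioc (fun x hx => by
        rw [← hW1U _ (hBmem x hx), ← hWxyU _ (hBmem x hx)])
    have E2 : (∫ x in Ioc (a + ε m) (b - ε m),
        -(pd e1 φ (x, ε m) * pd e1 (pd e2 φ) (x, ε m)))
        = ∫ x in Ioc (a + ε m) (b - ε m), -(W1 (x, ε m) * Wxy (x, ε m)) :=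
      setIntegral_congr_fun measurableSet_Ioc (fun x hx => by
        rw [← hW1U _ (hAmem x hx), ← hWxyU _ (hAmem x hx)])
    have E3 : (∫ y in Ioc (ε m) (1 - ε m),
        pd e1 φ (b - ε m, y) * pd e2 (pd e2 φ) (b - ε m, y))
        = ∫ y in Ioc (ε m) (1 - ε m), W1 (b - ε m, y) * Wyy (b - ε m, y) :=
      setIntegral_congr_fun measurableSet_Ioc (fun y hy => by
        rw [← hW1U _ (hRmem y hy), ← hWyyU _ (hRmem y hy)])
    have E4 : (∫ y in Ioc (ε m) (1 - ε m),
        pd e1 φ (a + ε m, y) * pd e2 (pd e2 φ) (a + ε m, y))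
        = ∫ y in Ioc (ε m) (1 - ε m), W1 (a + ε m, y) * Wyy (a + ε m, y) :=
      setIntegral_congr_fun measurableSet_Ioc (fun y hy => by
        rw [← hW1U _ (hLmem y hy), ← hWyyU _ (hLmem y hy)])
    rw [E0, E1, E2, E3, E4] at h
    exact h
  -- limits
  have hmono : Monotone (fun m => Icc ((a + ε m, ε m) : ℝ × ℝ) (b - ε m, 1 - ε m)) := by
    intro m n hmn
    have h := hεanti hmn
    exact Icc_subset_Icc
      ⟨show a + ε n ≤ a + ε m by linarith, show ε n ≤ ε m by linarith⟩
      ⟨show b - ε m ≤ b - ε n by linarith, show 1 - ε m ≤ 1 - ε n by linarith⟩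
  have hUnion : (⋃ m, Icc ((a + ε m, ε m) : ℝ × ℝ) (b - ε m, 1 - ε m)) = U := by
    apply Subset.antisymm (iUnion_subset fun m => hsubm m)
    rintro ⟨x, y⟩ ⟨⟨hx1, hx2⟩, hy1, hy2⟩
    have hδpos : 0 < min (min (x - a) (b - x)) (min y (1 - y)) :=
      lt_min (lt_min (by linarith) (by linarith)) (lt_min (by linarith) (by linarith))
    obtain ⟨m, hm⟩ := (hεto0.eventually_lt_const hδpos).exists
    have h1 : min (min (x - a) (b - x)) (min y (1 - y)) ≤ x - a :=
      le_trans (min_le_left _ _) (min_le_left _ _)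
    have h2 : min (min (x - a) (b - x)) (min y (1 - y)) ≤ b - x :=
      le_trans (min_le_left _ _) (min_le_right _ _)
    have h3 : min (min (x - a) (b - x)) (min y (1 - y)) ≤ y :=
      le_trans (min_le_right _ _) (min_le_left _ _)
    have h4 : min (min (x - a) (b - x)) (min y (1 - y)) ≤ 1 - y :=
      le_trans (min_le_right _ _) (min_le_right _ _)
    exact mem_iUnion.2 ⟨m, ⟨show a + ε m ≤ x by linarith, show ε m ≤ y by linarith⟩,
      ⟨show x ≤ b - ε m by linarith, show y ≤ 1 - ε m by linarith⟩⟩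
  have hIntU : IntegrableOn (fun p => Wxx p * Wyy p - Wxy p ^ 2) U volume :=
    (((contWxx.mul contWyy).sub (contWxy.pow 2)).integrableOn_compact hrectcpt).mono_set hUsub
  have t_lhs : Tendsto (fun m => ∫ p in Icc ((a + ε m, ε m) : ℝ × ℝ) (b - ε m, 1 - ε m),
      (Wxx p * Wyy p - Wxy p ^ 2)) atTop
      (𝓝 (∫ p in U, (Wxx p * Wyy p - Wxy p ^ 2))) := by
    have := tendsto_setIntegral_of_monotone (fun m => measurableSet_Icc) hmono
      (by rw [hUnion]; exact hIntU)
    rwa [hUnion] at this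
  have hG1 : ContinuousOn (fun p => W1 p * Wxy p) rect := contW1.mul contWxy
  have hG2 : ContinuousOn (fun p => W1 p * Wyy p) rect := contW1.mul contWyy
  have hsubx : ∀ m, Ioc (a + ε m) (b - ε m) ⊆ Ioc a b := fun m =>
    Ioc_subset_Ioc (by linarith [hεpos m]) (by linarith [hεpos m])
  have hsuby : ∀ m, Ioc (ε m) (1 - ε m) ⊆ Ioc (0:ℝ) 1 := fun m =>
    Ioc_subset_Ioc (by linarith [hεpos m]) (by linarith [hεpos m])
  have hopenx : ∀ x ∈ Ioo a b, ∀ᶠ m in atTop, x ∈ Ioc (a + ε m) (b - ε m) := by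
    intro x hx
    have hp : 0 < min (x - a) (b - x) := lt_min (by linarith [hx.1]) (by linarith [hx.2])
    filter_upwards [hεto0.eventually_lt_const hp] with m hm
    have q1 : ε m < x - a := lt_of_lt_of_le hm (min_le_left _ _)
    have q2 : ε m < b - x := lt_of_lt_of_le hm (min_le_right _ _)
    exact ⟨by linarith, by linarith⟩
  have hopeny : ∀ y ∈ Ioo (0:ℝ) 1, ∀ᶠ m in atTop, y ∈ Ioc (ε m) (1 - ε m) := by
    intro y hy
    have hp : 0 < min y (1 - y) := lt_min (by linarith [hy.1]) (by linarith [hy.2])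
    filter_upwards [hεto0.eventually_lt_const hp] with m hm
    have q1 : ε m < y := lt_of_lt_of_le hm (min_le_left _ _)
    have q2 : ε m < 1 - y := lt_of_lt_of_le hm (min_le_right _ _)
    exact ⟨q1, by linarith⟩
  have hq_top : Tendsto (fun m => 1 - ε m) atTop (𝓝 (1:ℝ)) := by
    simpa using (tendsto_const_nhds (x := (1:ℝ)) (f := atTop)).sub hεto0
  have hq_right : Tendsto (fun m => b - ε m) atTop (𝓝 b) := by
    simpa using (tendsto_const_nhds (x := b) (f := atTop)).sub hεto0
  have hq_left : Tendsto (fun m => a + ε m) atTop (𝓝 a) := by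
    simpa using (tendsto_const_nhds (x := a) (f := atTop)).add hεto0
  have t_top := edge_dct hG1 hrectcpt hab (ι := fun q y => ((y, q) : ℝ × ℝ))
    (continuous_snd.prodMk continuous_fst) hq_top hsubx
    (fun m y hy => hUsub (hsubm m ⟨⟨hy.1.le, (hABm m).2⟩, ⟨hy.2, le_refl _⟩⟩))
    (fun y hy => ⟨⟨hy.1.le, hy.2⟩, right_mem_Icc.2 zero_le_one⟩) hopenx
  have t_bot := edge_dct hG1 hrectcpt hab (ι := fun q y => ((y, q) : ℝ × ℝ))
    (continuous_snd.prodMk continuous_fst) hεto0 hsubx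
    (fun m y hy => hUsub (hsubm m ⟨⟨hy.1.le, le_refl _⟩, ⟨hy.2, (hABm m).2⟩⟩))
    (fun y hy => ⟨⟨hy.1.le, hy.2⟩, left_mem_Icc.2 zero_le_one⟩) hopenx
  have t_right := edge_dct hG2 hrectcpt one_pos (ι := fun q y => ((q, y) : ℝ × ℝ))
    (continuous_fst.prodMk continuous_snd) hq_right hsuby
    (fun m y hy => hUsub (hsubm m ⟨⟨(hABm m).1, hy.1.le⟩, ⟨le_refl _, hy.2⟩⟩))
    (fun y hy => ⟨right_mem_Icc.2 hab.le, ⟨hy.1.le, hy.2⟩⟩) hopeny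
  have t_left := edge_dct hG2 hrectcpt one_pos (ι := fun q y => ((q, y) : ℝ × ℝ))
    (continuous_fst.prodMk continuous_snd) hq_left hsuby
    (fun m y hy => hUsub (hsubm m ⟨⟨le_refl _, hy.1.le⟩, ⟨(hABm m).1, hy.2⟩⟩))
    (fun y hy => ⟨left_mem_Icc.2 hab.le, ⟨hy.1.le, hy.2⟩⟩) hopeny
  simp only [integral_neg] at starW
  have t_rhs := ((t_top.neg.sub t_bot.neg).add t_right).sub t_left
  have hfinal := tendsto_nhds_unique t_lhs (t_rhs.congr fun m => (starW m).symm)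
  -- evaluate the boundary limits
  have Ttop0 : ∫ x in Ioc a b, W1 (x, 1) * Wxy (x, 1) = 0 := by
    rw [← setIntegral_congr_set Ioo_ae_eq_Ioc,
      setIntegral_congr_fun measurableSet_Ioo (g := fun _ => (0:ℝ))
        (fun x hx => by rw [hW1top x hx, zero_mul]), integral_zero]
  have Tright0 : ∫ y in Ioc (0:ℝ) 1, W1 (b, y) * Wyy (b, y) = 0 := by
    rw [← setIntegral_congr_set Ioo_ae_eq_Ioc,
      setIntegral_congr_fun measurableSet_Ioo (g := fun _ => (0:ℝ))
        (fun y hy => by rw [(hWyylat y hy).2, mul_zero]), integral_zero]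
  have Tleft0 : ∫ y in Ioc (0:ℝ) 1, W1 (a, y) * Wyy (a, y) = 0 := by
    rw [← setIntegral_congr_set Ioo_ae_eq_Ioc,
      setIntegral_congr_fun measurableSet_Ioo (g := fun _ => (0:ℝ))
        (fun y hy => by rw [(hWyylat y hy).1, mul_zero]), integral_zero]
  have Tbot : ∫ x in Ioc a b, W1 (x, 0) * Wxy (x, 0)
      = ∫ x in Ioo a b, deriv (fun t => φ (t, 0)) x * deriv (fun t => μ t * φ (t, 0)) x := by
    rw [← setIntegral_congr_set Ioo_ae_eq_Ioc]
    exact setIntegral_congr_fun measurableSet_Ioo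
      (fun x hx => by rw [← hW1bot x hx, hWxybot x hx])
  have hfinal2 : (∫ p in U, (Wxx p * Wyy p - Wxy p ^ 2))
      = ∫ x in Ioo a b, deriv (fun t => φ (t, 0)) x * deriv (fun t => μ t * φ (t, 0)) x := by
    rw [hfinal]
    show (-(∫ x in Ioc a b, W1 (x, 1) * Wxy (x, 1))
        - -(∫ x in Ioc a b, W1 (x, 0) * Wxy (x, 0))
        + ∫ y in Ioc (0:ℝ) 1, W1 (b, y) * Wyy (b, y))
        - ∫ y in Ioc (0:ℝ) 1, W1 (a, y) * Wyy (a, y) = _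
    rw [Ttop0, Tright0, Tleft0, Tbot]
    ring
  -- final assembly
  have gL : (∫ p in U, (deriv (deriv (fun t => φ (t, p.2))) p.1)
        * (deriv (deriv (fun s => φ (p.1, s))) p.2))
      = ∫ p in U, Wxx p * Wyy p :=
    setIntegral_congr_fun hUopen.measurableSet
      (fun p hp => by rw [hxxU p hp, hyyU p hp])
  have gM : (∫ p in U, (deriv (fun t => deriv (fun s => φ (t, s)) p.2) p.1) ^ 2)
      = ∫ p in U, Wxy p ^ 2 :=
    setIntegral_congr_fun hUopen.measurableSet
      (fun p hp => by rw [hxyU p hp])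
  have iWxxyy : IntegrableOn (fun p => Wxx p * Wyy p) U volume :=
    ((contWxx.mul contWyy).integrableOn_compact hrectcpt).mono_set hUsub
  have iWxy2 : IntegrableOn (fun p => Wxy p ^ 2) U volume :=
    ((contWxy.pow 2).integrableOn_compact hrectcpt).mono_set hUsub
  have hsplit : (∫ p in U, (Wxx p * Wyy p - Wxy p ^ 2))
      = (∫ p in U, Wxx p * Wyy p) - ∫ p in U, Wxy p ^ 2 :=
    integral_sub iWxxyy iWxy2
  rw [gL, gM]
  linarith [hsplit, hfinal2]
end
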